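/- arXiv:1112.0648 — 7 statements merged into one kernel-verified Lean document; each statement's English description precedes it below -/
import Mathlib

section
/- For integers n ≥ 1, p ≥ 1, q ≥ 1, k ≥ 0, the alternating binomial sum Σ_{j=0}^{min(n,k)} (-1)^j C(n,j) · (n-1+p+k-j)! (n-1+q+k-j)! / [(n-1+p+q+k-j)! (k-j)!] equals (p+n-1)! (q+n-1)! (p+k-1)! (q+k-1)! / [k! (p-1)! (q-1)! (p+q+n+k-1)!]. -/
noncomputable def pfF (a b c k j : ℕ) : ℝ :=
  (-1 : ℝ) ^ j * (((c+1).choose j : ℕ) : ℝ) *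
    (((c + a + 1 + (k - j)).factorial * (c + b + 1 + (k - j)).factorial : ℕ) : ℝ) /
    (((c + a + b + 2 + (k - j)).factorial * (k - j).factorial : ℕ) : ℝ)

noncomputable def pfG (a b c k j : ℕ) : ℝ :=
  -(j : ℝ) * (((c + a + b + 2*k + 4 : ℕ) : ℝ) - (j : ℝ)) * pfF a b c (k+1) j

lemma pf_term (a b c k j : ℕ) (hjk : j ≤ k) (hjc : j ≤ c + 1) :
    ((k:ℝ)+1) * ((c:ℝ)+a+b+k+3) * pfF a b c (k+1) j
      - ((a:ℝ)+k+1)*((b:ℝ)+k+1) * pfF a b c k j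
    = pfG a b c k (j+1) - pfG a b c k j := by
  obtain ⟨m, rfl⟩ : ∃ m, k = j + m := ⟨k - j, by omega⟩
  have hch : (((c+1).choose (j+1) : ℕ) : ℝ) * (j+1)
      = (((c+1).choose j : ℕ) : ℝ) * ((c:ℝ) + 1 - j) := by
    have h := Nat.choose_succ_right_eq (c+1) j
    have : ((c+1) - j : ℕ) = (c + 1) - j := rfl
    calc (((c+1).choose (j+1) : ℕ) : ℝ) * (j+1)
        = (((c+1).choose (j+1) * (j+1) : ℕ) : ℝ) := by push_cast; ring
      _ = (((c+1).choose j * ((c+1) - j) : ℕ) : ℝ) := by rw [h]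
      _ = (((c+1).choose j : ℕ) : ℝ) * ((c:ℝ) + 1 - j) := by
          push_cast [Nat.cast_sub hjc]; ring
  simp only [pfF, pfG,
    show j + m - j = m from by omega,
    show j + m + 1 - j = m + 1 from by omega,
    show j + m + 1 - (j+1) = m from by omega]
  rw [show c + a + 1 + (m+1) = (c + a + 1 + m) + 1 from rfl,
      show c + b + 1 + (m+1) = (c + b + 1 + m) + 1 from rfl,
      show c + a + b + 2 + (m+1) = (c + a + b + 2 + m) + 1 from rfl]
  have fa : ∀ N : ℕ, ((N.factorial : ℕ) : ℝ) ≠ 0 := fun N => by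
    exact_mod_cast N.factorial_ne_zero
  push_cast [Nat.factorial_succ]
  have h1 : ((c + a + 1 + m).factorial : ℝ) ≠ 0 := fa _
  have h2 : ((c + b + 1 + m).factorial : ℝ) ≠ 0 := fa _
  have h3 : ((c + a + b + 2 + m).factorial : ℝ) ≠ 0 := fa _
  have h4 : ((m).factorial : ℝ) ≠ 0 := fa _
  have hj1 : ((j:ℝ) + 1) ≠ 0 := by positivity
  have hmm : ((m:ℝ) + 1) ≠ 0 := by positivity
  have hch' : (((c+1).choose (j+1) : ℕ) : ℝ)
      = (((c+1).choose j : ℕ) : ℝ) * ((c:ℝ) + 1 - j) / ((j:ℝ)+1) := by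
    field_simp
    linarith [hch]
  rw [hch']
  rw [pow_succ]
  field_simp
  ring

lemma pf_rec (a b c k : ℕ) :
    ((k:ℝ)+1) * ((c:ℝ)+a+b+k+3) *
      (∑ j ∈ Finset.range (min (c+1) (k+1) + 1), pfF a b c (k+1) j)
    = ((a:ℝ)+k+1)*((b:ℝ)+k+1) *
      ∑ j ∈ Finset.range (min (c+1) k + 1), pfF a b c k j := by
  have htel : ∑ j ∈ Finset.range (min (c+1) k + 1),
      (pfG a b c k (j+1) - pfG a b c k j)
      = pfG a b c k (min (c+1) k + 1) - pfG a b c k 0 :=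
    Finset.sum_range_sub _ _
  have hG0 : pfG a b c k 0 = 0 := by simp [pfG]
  have hsum : ((k:ℝ)+1) * ((c:ℝ)+a+b+k+3) *
      (∑ j ∈ Finset.range (min (c+1) k + 1), pfF a b c (k+1) j)
      - ((a:ℝ)+k+1)*((b:ℝ)+k+1) *
      (∑ j ∈ Finset.range (min (c+1) k + 1), pfF a b c k j)
      = pfG a b c k (min (c+1) k + 1) := by
    rw [hG0, sub_zero] at htel
    rw [← htel, Finset.mul_sum, Finset.mul_sum, ← Finset.sum_sub_distrib]
    refine Finset.sum_congr rfl fun j hj => ?_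
    have hj' := Finset.mem_range.mp hj
    exact pf_term a b c k j (by omega) (by omega)
  rcases le_or_gt (c+1) k with h | h
  · have hmin : min (c+1) k = c+1 := min_eq_left h
    have hmin' : min (c+1) (k+1) = c+1 := min_eq_left (by omega)
    have hGtop : pfG a b c k (c+1+1) = 0 := by
      simp [pfG, pfF, Nat.choose_eq_zero_of_lt (show c+1 < c+1+1 by omega)]
    rw [hmin] at hsum
    rw [hGtop] at hsum
    rw [hmin, hmin']
    linarith
  · have hmin : min (c+1) k = k := min_eq_right (by omega)
    have hmin' : min (c+1) (k+1) = k+1 := min_eq_right (by omega)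
    rw [hmin] at hsum
    rw [hmin, hmin']
    have hGtop : pfG a b c k (k+1)
        = -(((k:ℝ)+1) * ((c:ℝ)+a+b+k+3)) * pfF a b c (k+1) (k+1) := by
      rw [pfG]
      push_cast
      ring
    rw [hGtop] at hsum
    rw [Finset.sum_range_succ]
    linarith [hsum]

lemma pf_closed (a b c k : ℕ) :
    ∑ j ∈ Finset.range (min (c+1) k + 1), pfF a b c k j
    = (((a+c+1).factorial * (b+c+1).factorial * (a+k).factorial * (b+k).factorial : ℕ) : ℝ) /
      ((k.factorial * a.factorial * b.factorial * (a+b+c+k+2).factorial : ℕ) : ℝ) := by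
  have fa : ∀ N : ℕ, ((N.factorial : ℕ) : ℝ) ≠ 0 := fun N => by
    exact_mod_cast N.factorial_ne_zero
  induction k with
  | zero =>
    simp only [Nat.min_zero, zero_add, Finset.sum_range_one, pfF]
    rw [show a + c + 1 = c + a + 1 from by omega,
        show b + c + 1 = c + b + 1 from by omega,
        show a + b + c + 0 + 2 = c + a + b + 2 from by omega]
    simp only [Nat.sub_zero, Nat.add_zero]
    push_cast [Nat.factorial_zero, Nat.choose_zero_right]
    field_simp
  | succ k ih =>
    have h1 := pf_rec a b c k
    rw [ih] at h1
    have hne : ((k:ℝ)+1) * ((c:ℝ)+a+b+k+3) ≠ 0 := by positivity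
    have key : (((a+c+1).factorial * (b+c+1).factorial * (a+(k+1)).factorial
          * (b+(k+1)).factorial : ℕ) : ℝ) /
        (((k+1).factorial * a.factorial * b.factorial
          * (a+b+c+(k+1)+2).factorial : ℕ) : ℝ)
        = ((a:ℝ)+k+1)*((b:ℝ)+k+1) *
          ((((a+c+1).factorial * (b+c+1).factorial * (a+k).factorial
            * (b+k).factorial : ℕ) : ℝ) /
          ((k.factorial * a.factorial * b.factorial
            * (a+b+c+k+2).factorial : ℕ) : ℝ)) /
          (((k:ℝ)+1) * ((c:ℝ)+a+b+k+3)) := by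
      rw [show a + (k+1) = (a+k) + 1 from rfl,
          show b + (k+1) = (b+k) + 1 from rfl,
          show a+b+c+(k+1)+2 = (a+b+c+k+2) + 1 from by omega]
      push_cast [Nat.factorial_succ]
      have := fa (a+k); have := fa (b+k); have := fa k
      have := fa (a+b+c+k+2); have := fa (a+c+1); have := fa (b+c+1)
      have := fa a; have := fa b
      field_simp
      ring
    rw [key, ← h1]
    field_simp

/-- The Pfaff–Saalschütz instance: alternating binomial sum identity used for the
Poisson–Szegő kernel expansion. -/
theorem alternating_binomial_sum (n p q k : ℕ) (hn : 1 ≤ n) (hp : 1 ≤ p) (hq : 1 ≤ q) :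
    ∑ j ∈ Finset.range (min n k + 1),
      (-1 : ℝ) ^ j * (n.choose j : ℝ) *
        (((n - 1 + p + (k - j)).factorial * (n - 1 + q + (k - j)).factorial : ℕ) : ℝ) /
        (((n - 1 + p + q + (k - j)).factorial * (k - j).factorial : ℕ) : ℝ) =
    (((p + n - 1).factorial * (q + n - 1).factorial *
        (p + k - 1).factorial * (q + k - 1).factorial : ℕ) : ℝ) /
      ((k.factorial * (p - 1).factorial * (q - 1).factorial *
        (p + q + n + k - 1).factorial : ℕ) : ℝ) := by
  obtain ⟨c, rfl⟩ := Nat.exists_eq_add_of_le' hn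
  obtain ⟨a, rfl⟩ := Nat.exists_eq_add_of_le' hp
  obtain ⟨b, rfl⟩ := Nat.exists_eq_add_of_le' hq
  have lhs_eq : ∑ j ∈ Finset.range (min (c+1) k + 1),
      (-1 : ℝ) ^ j * (((c+1).choose j : ℕ) : ℝ) *
        ((((c+1) - 1 + (a+1) + (k - j)).factorial
          * ((c+1) - 1 + (b+1) + (k - j)).factorial : ℕ) : ℝ) /
        ((((c+1) - 1 + (a+1) + (b+1) + (k - j)).factorial * (k - j).factorial : ℕ) : ℝ)
      = ∑ j ∈ Finset.range (min (c+1) k + 1), pfF a b c k j := by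
    refine Finset.sum_congr rfl fun j _ => ?_
    rw [pfF,
      show (c+1) - 1 + (a+1) + (k - j) = c + a + 1 + (k - j) from by omega,
      show (c+1) - 1 + (b+1) + (k - j) = c + b + 1 + (k - j) from by omega,
      show (c+1) - 1 + (a+1) + (b+1) + (k - j) = c + a + b + 2 + (k - j) from by omega]
  rw [lhs_eq, pf_closed,
    show a + 1 + (c+1) - 1 = a + c + 1 from by omega,
    show b + 1 + (c+1) - 1 = b + c + 1 from by omega,
    show a + 1 + k - 1 = a + k from by omega,
    show b + 1 + k - 1 = b + k from by omega,
    show a + 1 - 1 = a from by omega,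
    show b + 1 - 1 = b from by omega,
    show a + 1 + (b+1) + (c+1) + k - 1 = a + b + c + k + 2 from by omega]
end

section
/- The Pfaff–Saalschütz identity: for a nonnegative integer n and parameters a, b, c (real, with c and 1+a+b-n-c avoiding nonpositive-integer degeneracies making denominators vanish within the summation range), Σ_{j=0}^{n} [(-n)_j (a)_j (b)_j] / [(c)_j (1+a+b-c-n)_j j!] = (c-a)_n (c-b)_n / [(c)_n (c-a-b)_n]. -/
set_option maxHeartbeats 2000000

open Finset Polynomial

private lemma poch_succ_left' (m : ℕ) (x : ℝ) :
    (ascPochhammer ℝ (m + 1)).eval x = x * (ascPochhammer ℝ m).eval (x + 1) := by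
  rw [ascPochhammer_succ_left]
  simp [Polynomial.eval_comp]

private lemma poch_split (j m : ℕ) (x : ℝ) :
    (ascPochhammer ℝ (j + m)).eval x
      = (ascPochhammer ℝ j).eval x * (ascPochhammer ℝ m).eval (x + j) := by
  rw [← ascPochhammer_mul]
  simp [Polynomial.eval_comp]

private lemma poch_neg_nat (n : ℕ) : ∀ j : ℕ, j ≤ n →
    (ascPochhammer ℝ j).eval (-(n : ℝ)) = (-1) ^ j * (n.choose j) * j.factorial := by
  intro j
  induction j with
  | zero => simp
  | succ j ih =>
    intro hj
    have hjn : j ≤ n := by omega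
    rw [ascPochhammer_succ_eval, ih hjn]
    have hch : ((n.choose (j + 1)) : ℝ) * (j + 1) = (n.choose j : ℝ) * ((n : ℝ) - j) := by
      have := Nat.choose_succ_right_eq n j
      have hsub : ((n - j : ℕ) : ℝ) = (n : ℝ) - j := by
        push_cast [Nat.cast_sub hjn]; ring
      calc ((n.choose (j + 1)) : ℝ) * (j + 1) = ((n.choose (j + 1) * (j + 1) : ℕ) : ℝ) := by
            push_cast; ring
        _ = ((n.choose j * (n - j) : ℕ) : ℝ) := by rw [this]
        _ = (n.choose j : ℝ) * ((n : ℝ) - j) := by push_cast [Nat.cast_sub hjn]; ring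
    have hfact : ((j + 1).factorial : ℝ) = (j + 1) * (j.factorial : ℝ) := by
      push_cast [Nat.factorial_succ]; ring
    rw [hfact]
    linear_combination ((-1) ^ j * (j.factorial : ℝ)) * hch
    
private lemma poch_reflect (n : ℕ) (x : ℝ) :
    (ascPochhammer ℝ n).eval x = (-1) ^ n * (ascPochhammer ℝ n).eval (1 - x - n) := by
  induction n generalizing x with
  | zero => simp
  | succ n ih =>
    rw [ascPochhammer_succ_eval, ih]
    have h1 : (1 : ℝ) - x - (n + 1 : ℕ) = -x - n := by push_cast; ring
    rw [h1, poch_succ_left']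
    have h2 : -x - (n : ℝ) + 1 = 1 - x - n := by ring
    rw [h2]
    ring

/-- The summand of the denominator-free Pfaff–Saalschütz identity. -/
noncomputable def pfsaTerm (a b c : ℝ) (n j : ℕ) : ℝ :=
  (-1) ^ j * (n.choose j) * (ascPochhammer ℝ j).eval a * (ascPochhammer ℝ j).eval b *
    (ascPochhammer ℝ (n - j)).eval (c + j) *
    (ascPochhammer ℝ (n - j)).eval (1 + a + b - c - (n : ℝ) + j)

/-- The WZ certificate function. -/
noncomputable def pfsaCert (a b c : ℝ) (n j : ℕ) : ℝ :=
  -((-1) ^ j * ((n + 1).choose j) * (ascPochhammer ℝ j).eval a * (ascPochhammer ℝ j).eval b *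
    (j : ℝ) * (ascPochhammer ℝ (n + 1 - j)).eval (c + j - 1) *
    (ascPochhammer ℝ (n + 1 - j)).eval (1 + a + b - c - (n : ℝ) + j - 1))

private lemma pfsa_step (a b c : ℝ) (n j : ℕ) (hj : j ≤ n + 1) :
    ((n : ℝ) + 1) * pfsaTerm a b c (n + 1) j
      + ((n : ℝ) + 1) * (c - a + n) * (c - b + n) * pfsaTerm a b c n j
      = pfsaCert a b c n (j + 1) - pfsaCert a b c n j := by
  rcases Nat.lt_or_ge j (n + 1) with h | h
  · obtain ⟨m, rfl⟩ : ∃ m, n = j + m := ⟨n - j, by omega⟩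
    simp only [pfsaTerm, pfsaCert]
    have e1 : j + m + 1 - j = m + 1 := by omega
    have e2 : j + m - j = m := by omega
    have e3 : j + m + 1 - (j + 1) = m := by omega
    simp only [e1, e2, e3]
    have hA1 : (ascPochhammer ℝ (j + 1)).eval a
        = (ascPochhammer ℝ j).eval a * (a + j) := ascPochhammer_succ_eval _ _
    have hB1 : (ascPochhammer ℝ (j + 1)).eval b
        = (ascPochhammer ℝ j).eval b * (b + j) := ascPochhammer_succ_eval _ _
    have hC1 : (ascPochhammer ℝ (m + 1)).eval (c + j)
        = (ascPochhammer ℝ m).eval (c + j) * (c + j + m) := ascPochhammer_succ_eval _ _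
    have hC2 : (ascPochhammer ℝ (m + 1)).eval (c + j - 1)
        = (c + j - 1) * (ascPochhammer ℝ m).eval (c + j) := by
      rw [poch_succ_left', show c + (j : ℝ) - 1 + 1 = c + j from by ring]
    have hD1 : (ascPochhammer ℝ (m + 1)).eval (1 + a + b - c - ((j + m + 1 : ℕ) : ℝ) + j)
        = (1 + a + b - c - ((j + m : ℕ) : ℝ) + j - 1) *
          (ascPochhammer ℝ m).eval (1 + a + b - c - ((j + m : ℕ) : ℝ) + j) := by
      rw [show (1 : ℝ) + a + b - c - ((j + m + 1 : ℕ) : ℝ) + j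
            = (1 + a + b - c - ((j + m : ℕ) : ℝ) + j) - 1 from by push_cast; ring,
        poch_succ_left',
        show (1 : ℝ) + a + b - c - ((j + m : ℕ) : ℝ) + j - 1 + 1
            = 1 + a + b - c - ((j + m : ℕ) : ℝ) + j from by ring]
    have hD2 : (ascPochhammer ℝ (m + 1)).eval (1 + a + b - c - ((j + m : ℕ) : ℝ) + j - 1)
        = (1 + a + b - c - ((j + m : ℕ) : ℝ) + j - 1) *
          (ascPochhammer ℝ m).eval (1 + a + b - c - ((j + m : ℕ) : ℝ) + j) := by
      rw [poch_succ_left',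
        show (1 : ℝ) + a + b - c - ((j + m : ℕ) : ℝ) + j - 1 + 1
            = 1 + a + b - c - ((j + m : ℕ) : ℝ) + j from by ring]
    have hD3 : (ascPochhammer ℝ m).eval (c + ((j + 1 : ℕ) : ℝ) - 1)
        = (ascPochhammer ℝ m).eval (c + j) := by
      rw [show c + ((j + 1 : ℕ) : ℝ) - 1 = c + j from by push_cast; ring]
    have hD4 : (ascPochhammer ℝ m).eval (1 + a + b - c - ((j + m : ℕ) : ℝ) + ((j + 1 : ℕ) : ℝ) - 1)
        = (ascPochhammer ℝ m).eval (1 + a + b - c - ((j + m : ℕ) : ℝ) + j) := by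
      rw [show (1 : ℝ) + a + b - c - ((j + m : ℕ) : ℝ) + ((j + 1 : ℕ) : ℝ) - 1
          = 1 + a + b - c - ((j + m : ℕ) : ℝ) + j from by push_cast; ring]
    rw [hA1, hB1, hC1, hC2, hD1, hD2, hD3, hD4]
    have hR1n : (j + m + 1).choose (j + 1) * (j + 1) = (j + m + 1).choose j * (m + 1) := by
      have h2 := Nat.choose_succ_right_eq (j + m + 1) j
      rwa [show j + m + 1 - j = m + 1 from by omega] at h2
    have hR2n : (j + m + 1) * ((j + m).choose j) = (j + m + 1).choose j * (m + 1) := by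
      have h1 := Nat.add_one_mul_choose_eq (j + m) j
      exact h1.trans hR1n
    have hj1 : ((j : ℝ) + 1) ≠ 0 := by positivity
    have hjm1 : ((j : ℝ) + m + 1) ≠ 0 := by positivity
    have hx3 : (((j + m + 1).choose (j + 1) : ℕ) : ℝ)
        = ((j + m + 1).choose j : ℝ) * ((m : ℝ) + 1) / ((j : ℝ) + 1) := by
      rw [eq_div_iff hj1]
      exact_mod_cast congrArg (Nat.cast (R := ℝ)) hR1n
    have hx1 : (((j + m).choose j : ℕ) : ℝ)
        = ((j + m + 1).choose j : ℝ) * ((m : ℝ) + 1) / ((j : ℝ) + m + 1) := by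
      rw [eq_div_iff hjm1]
      have h := congrArg (Nat.cast (R := ℝ)) hR2n
      push_cast at h
      linarith [h]
    rw [hx3, hx1]
    push_cast
    field_simp
    ring
  · have hje : j = n + 1 := by omega
    subst hje
    have h0 : n + 1 - (n + 1) = 0 := by omega
    have h1 : (n : ℕ) + 1 - (n + 1 + 1) = 0 := by omega
    simp only [pfsaTerm, pfsaCert, h0, h1, Nat.choose_self, ascPochhammer_zero,
      Polynomial.eval_one, Nat.choose_eq_zero_of_lt (by omega : n < n + 1),
      Nat.choose_eq_zero_of_lt (by omega : n + 1 < n + 1 + 1)]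
    push_cast
    ring

private lemma pfsa_telescope (a b c : ℝ) (n : ℕ) :
    ∑ j ∈ Finset.range (n + 2),
      (((n : ℝ) + 1) * pfsaTerm a b c (n + 1) j
        + ((n : ℝ) + 1) * (c - a + n) * (c - b + n) * pfsaTerm a b c n j) = 0 := by
  have hcongr : ∀ j ∈ Finset.range (n + 2),
      (((n : ℝ) + 1) * pfsaTerm a b c (n + 1) j
        + ((n : ℝ) + 1) * (c - a + n) * (c - b + n) * pfsaTerm a b c n j)
      = pfsaCert a b c n (j + 1) - pfsaCert a b c n j := by
    intro j hj
    exact pfsa_step a b c n j (by simpa [Nat.lt_succ_iff] using Finset.mem_range.mp hj)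
  rw [Finset.sum_congr rfl hcongr, Finset.sum_range_sub]
  have hend : pfsaCert a b c n (n + 2) = 0 := by
    simp [pfsaCert, Nat.choose_eq_zero_of_lt (by omega : n + 1 < n + 2)]
  have hstart : pfsaCert a b c n 0 = 0 := by
    simp [pfsaCert]
  rw [hend, hstart, sub_zero]

private lemma pfsa_star (n : ℕ) : ∀ a b c : ℝ,
    ∑ j ∈ Finset.range (n + 1), pfsaTerm a b c n j
      = (-1) ^ n * (ascPochhammer ℝ n).eval (c - a) * (ascPochhammer ℝ n).eval (c - b) := by
  induction n with
  | zero => intro a b c; simp [pfsaTerm]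
  | succ n ih =>
    intro a b c
    have ht := pfsa_telescope a b c n
    rw [Finset.sum_add_distrib, ← Finset.mul_sum, ← Finset.mul_sum] at ht
    have hz : pfsaTerm a b c n (n + 1) = 0 := by
      simp [pfsaTerm, Nat.choose_eq_zero_of_lt (by omega : n < n + 1)]
    rw [show n + 2 = (n + 1) + 1 from rfl] at ht
    rw [Finset.sum_range_succ (f := pfsaTerm a b c n), hz, add_zero, ih] at ht
    have hn1 : ((n : ℝ) + 1) ≠ 0 := by positivity
    rw [ascPochhammer_succ_eval, ascPochhammer_succ_eval]
    apply mul_left_cancel₀ hn1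
    linear_combination ht

/-- The Pfaff–Saalschütz identity. -/
theorem pfaff_saalschutz (n : ℕ) (a b c : ℝ)
    (hc : ∀ j ≤ n, (ascPochhammer ℝ j).eval c ≠ 0)
    (hd : ∀ j ≤ n, (ascPochhammer ℝ j).eval (1 + a + b - c - n) ≠ 0)
    (he : (ascPochhammer ℝ n).eval (c - a - b) ≠ 0) :
    ∑ j ∈ Finset.range (n + 1),
      ((ascPochhammer ℝ j).eval (-(n : ℝ)) * (ascPochhammer ℝ j).eval a *
          (ascPochhammer ℝ j).eval b) /
        ((ascPochhammer ℝ j).eval c * (ascPochhammer ℝ j).eval (1 + a + b - c - n) *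
          (j.factorial : ℝ)) =
    ((ascPochhammer ℝ n).eval (c - a) * (ascPochhammer ℝ n).eval (c - b)) /
      ((ascPochhammer ℝ n).eval c * (ascPochhammer ℝ n).eval (c - a - b)) := by
  have hcn := hc n le_rfl
  have hdn := hd n le_rfl
  have hterm : ∀ j ∈ Finset.range (n + 1),
      ((ascPochhammer ℝ j).eval (-(n : ℝ)) * (ascPochhammer ℝ j).eval a *
          (ascPochhammer ℝ j).eval b) /
        ((ascPochhammer ℝ j).eval c * (ascPochhammer ℝ j).eval (1 + a + b - c - n) *
          (j.factorial : ℝ))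
      = pfsaTerm a b c n j /
          ((ascPochhammer ℝ n).eval c * (ascPochhammer ℝ n).eval (1 + a + b - c - n)) := by
    intro j hj
    have hjn : j ≤ n := by simpa [Nat.lt_succ_iff] using Finset.mem_range.mp hj
    obtain ⟨m, hm⟩ : ∃ m, n = j + m := ⟨n - j, by omega⟩
    have hsplitc : (ascPochhammer ℝ n).eval c
        = (ascPochhammer ℝ j).eval c * (ascPochhammer ℝ m).eval (c + j) := by
      rw [hm]; exact poch_split j m c
    have hsplitd : (ascPochhammer ℝ n).eval (1 + a + b - c - n)
        = (ascPochhammer ℝ j).eval (1 + a + b - c - n) *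
          (ascPochhammer ℝ m).eval (1 + a + b - c - (n : ℝ) + j) := by
      rw [hm] at hdn ⊢
      exact poch_split j m _
    have hc1 : (ascPochhammer ℝ j).eval c ≠ 0 := hc j hjn
    have hc2 : (ascPochhammer ℝ m).eval (c + j) ≠ 0 := by
      intro h0
      exact hcn (by rw [hsplitc, h0, mul_zero])
    have hd1 : (ascPochhammer ℝ j).eval (1 + a + b - c - n) ≠ 0 := hd j hjn
    have hd2 : (ascPochhammer ℝ m).eval (1 + a + b - c - (n : ℝ) + j) ≠ 0 := by
      intro h0
      exact hdn (by rw [hsplitd, h0, mul_zero])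
    have hfac : (j.factorial : ℝ) ≠ 0 := by positivity
    rw [poch_neg_nat n j hjn, hsplitc, hsplitd]
    simp only [pfsaTerm]
    have hnm : n - j = m := by omega
    rw [hnm]
    field_simp
  rw [Finset.sum_congr rfl hterm, ← Finset.sum_div, pfsa_star n a b c]
  have hrefl : (ascPochhammer ℝ n).eval (1 + a + b - c - (n : ℝ))
      = (-1) ^ n * (ascPochhammer ℝ n).eval (c - a - b) := by
    rw [poch_reflect n (1 + a + b - c - (n : ℝ))]
    have : (1 : ℝ) - (1 + a + b - c - (n : ℝ)) - n = c - a - b := by ring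
    rw [this]
  rw [hrefl]
  have hsgn : ((-1 : ℝ)) ^ n ≠ 0 := by
    apply pow_ne_zero; norm_num
  field_simp
end

section
/- For integers n ≥ 1 and p, q ≥ 0 with p+q ≥ 0, and 0 ≤ r < 1: (1-r²)^n · r^{p+q} · Σ_{k=0}^∞ [(n-1+p+k)!(n-1+q+k)!]/[(n-1)!(n-1+p+q+k)! k!] · r^{2k} = r^{p+q} · [(p+n-1)!(q+n-1)!]/[(n-1)!(p-1)!(q-1)!] · Σ_{k=0}^∞ [(p+k-1)!(q+k-1)!]/[(n-1+p+q+k)! k!] · r^{2k}, for p, q ≥ 1. -/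
open Finset

set_option maxHeartbeats 1000000

namespace PoissonSzegoAux

/-- The coefficient `u i = (a+b+1+i)!(a+c+1+i)! / ((a+b+c+2+i)! i!)`. -/
noncomputable def u (a b c i : ℕ) : ℝ :=
  (((a + b + 1 + i).factorial * (a + c + 1 + i).factorial : ℕ) : ℝ) /
    (((a + b + c + 2 + i).factorial * i.factorial : ℕ) : ℝ)

/-- The signed binomial coefficient `(-1)^j C(a+1, j)`. -/
noncomputable def cc (a j : ℕ) : ℝ := (-1) ^ j * ((a + 1).choose j : ℝ)

/-- The Cauchy-product coefficient. -/
noncomputable def S (a b c m : ℕ) : ℝ := ∑ j ∈ range (m + 1), cc a j * u a b c (m - j)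

/-- Closed form (Pfaff–Saalschütz). -/
noncomputable def rhs (a b c m : ℕ) : ℝ :=
  (((a + b + 1).factorial * (a + c + 1).factorial * (b + m).factorial * (c + m).factorial : ℕ) : ℝ) /
    ((b.factorial * c.factorial * (a + b + c + 2 + m).factorial * m.factorial : ℕ) : ℝ)

lemma u_pos (a b c i : ℕ) : 0 < u a b c i := by
  unfold u
  positivity

lemma u_rec (a b c i : ℕ) :
    u a b c (i + 1) * (((a : ℝ) + b + c + 3 + i) * ((i : ℝ) + 1)) =
      u a b c i * (((a : ℝ) + b + 2 + i) * ((a : ℝ) + c + 2 + i)) := by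
  unfold u
  have e1 : a + b + 1 + (i + 1) = (a + b + 1 + i) + 1 := by omega
  have e2 : a + c + 1 + (i + 1) = (a + c + 1 + i) + 1 := by omega
  have e3 : a + b + c + 2 + (i + 1) = (a + b + c + 2 + i) + 1 := by omega
  rw [e1, e2, e3, Nat.factorial_succ (a+b+1+i), Nat.factorial_succ (a+c+1+i),
    Nat.factorial_succ (a+b+c+2+i), Nat.factorial_succ i]
  have h1 : ((((a + b + c + 2 + i) + 1) * (a+b+c+2+i).factorial * ((i+1) * i.factorial) : ℕ) : ℝ) ≠ 0 := by
    positivity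
  have h2 : (((a + b + c + 2 + i).factorial * i.factorial : ℕ) : ℝ) ≠ 0 := by positivity
  field_simp
  push_cast
  ring

lemma cc_rec (a j : ℕ) (h : j ≤ a + 1) :
    cc a (j + 1) * ((j : ℝ) + 1) = -(cc a j) * ((a : ℝ) + 1 - j) := by
  unfold cc
  have hnat := Nat.choose_succ_right_eq (a + 1) j
  have hcast : (((a + 1).choose (j + 1) : ℕ) : ℝ) * ((j : ℝ) + 1)
      = (((a + 1).choose j : ℕ) : ℝ) * ((a : ℝ) + 1 - (j : ℝ)) := by
    have := congrArg (fun t : ℕ => (t : ℝ)) hnat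
    push_cast [Nat.cast_sub h] at this
    push_cast
    linarith [this]
  rw [pow_succ]
  linear_combination (-((-1:ℝ)^j)) * hcast

lemma S_rec (a b c m : ℕ) :
    ((a : ℝ) + b + c + m + 3) * ((m : ℝ) + 1) * S a b c (m + 1) =
      ((b : ℝ) + m + 1) * ((c : ℝ) + m + 1) * S a b c m := by
  classical
  set K : ℝ := (a : ℝ) + b + c + 2 * m + 4 with hK
  set D : ℕ → ℝ := fun j =>
    if j ≤ m + 1 then (j : ℝ) * ((j : ℝ) - K) * cc a j * u a b c (m + 1 - j) else 0 with hD
  have tele : ∑ j ∈ range (m + 2), (D (j + 1) - D j) = D (m + 2) - D 0 :=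
    Finset.sum_range_sub D (m + 2)
  have hD0 : D 0 = 0 := by simp [hD]
  have hDtop : D (m + 2) = 0 := by simp [hD]
  have perj : ∀ j ∈ range (m + 2),
      ((a : ℝ) + b + c + m + 3) * ((m : ℝ) + 1) * (cc a j * u a b c (m + 1 - j)) -
        (if j ≤ m then ((b : ℝ) + m + 1) * ((c : ℝ) + m + 1) * (cc a j * u a b c (m - j)) else 0)
        = D (j + 1) - D j := by
    intro j hj
    rw [mem_range] at hj
    rcases Nat.lt_or_ge j (m + 1) with hjm | hjm
    · -- j ≤ m
      have hjm' : j ≤ m := by omega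
      obtain ⟨i, rfl⟩ : ∃ i, m = j + i := ⟨m - j, by omega⟩
      rw [if_pos hjm']
      have e1 : j + i + 1 - j = i + 1 := by omega
      have e2 : j + i - j = i := by omega
      have e3 : j + i + 1 - (j + 1) = i := by omega
      have g1 : D (j + 1) = ((j:ℝ) + 1) * (((j:ℝ) + 1) - K) * cc a (j + 1) * u a b c i := by
        simp only [hD]
        rw [if_pos (by omega : j + 1 ≤ j + i + 1), e3]
        push_cast
        ring
      have g2 : D j = (j : ℝ) * ((j : ℝ) - K) * cc a j * u a b c (i + 1) := by
        simp only [hD]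
        rw [if_pos (by omega : j ≤ j + i + 1), e1]
      rw [g1, g2, e1, e2]
      by_cases hch : (a + 1).choose j = 0
      · have hch' : (a + 1).choose (j + 1) = 0 := by
          have := Nat.choose_eq_zero_iff.mp hch
          exact Nat.choose_eq_zero_of_lt (by omega)
        have z1 : cc a j = 0 := by simp [cc, hch]
        have z2 : cc a (j + 1) = 0 := by simp [cc, hch']
        rw [z1, z2]; ring
      · have hja : j ≤ a + 1 := by
          by_contra hcon
          exact hch (Nat.choose_eq_zero_of_lt (by omega))
        have k1 := cc_rec a j hja
        have k2 := u_rec a b c i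
        have hne : ((j : ℝ) + 1) * (((a : ℝ) + b + c + 3 + i) * ((i : ℝ) + 1)) ≠ 0 := by
          positivity
        apply mul_left_cancel₀ hne
        rw [hK]
        push_cast
        linear_combination
          (((j:ℝ) + 1) * ((((a:ℝ) + b + c + (j + i) + 3) * (((j:ℝ)+i) + 1))
              + (j:ℝ) * ((j:ℝ) - ((a:ℝ) + b + c + 2*((j:ℝ)+(i:ℝ)) + 4))) * cc a j) * k2
          + (-(((j:ℝ) + 1 - ((a:ℝ) + b + c + 2*((j:ℝ)+(i:ℝ)) + 4)))
              * (((a : ℝ) + b + c + 3 + i) * ((i : ℝ) + 1)) * u a b c i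
              * (((j:ℝ)+1))) * k1
    · -- j = m + 1
      have hj1 : j = m + 1 := by omega
      subst hj1
      rw [if_neg (by omega)]
      have g1 : D (m + 1 + 1) = 0 := by simp [hD]
      have g2 : D (m + 1) = ((m:ℝ) + 1) * (((m:ℝ) + 1) - K) * cc a (m + 1) * u a b c 0 := by
        simp only [hD]
        rw [if_pos (le_refl (m+1)), Nat.sub_self]
        push_cast
        ring
      rw [g1, g2, Nat.sub_self, hK]
      push_cast
      ring
  have sum1 : ∑ j ∈ range (m + 2),
      ((a : ℝ) + b + c + m + 3) * ((m : ℝ) + 1) * (cc a j * u a b c (m + 1 - j))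
      = ((a : ℝ) + b + c + m + 3) * ((m : ℝ) + 1) * S a b c (m + 1) := by
    rw [S, mul_sum]
  have sum2 : ∑ j ∈ range (m + 2),
      (if j ≤ m then ((b : ℝ) + m + 1) * ((c : ℝ) + m + 1) * (cc a j * u a b c (m - j)) else 0)
      = ((b : ℝ) + m + 1) * ((c : ℝ) + m + 1) * S a b c m := by
    rw [Finset.sum_range_succ, if_neg (by omega), add_zero, S, mul_sum]
    apply Finset.sum_congr rfl
    intro j hj
    rw [mem_range] at hj
    rw [if_pos (by omega)]
  have := Finset.sum_congr rfl perj
  rw [Finset.sum_sub_distrib, sum1, sum2, tele, hD0, hDtop] at this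
  linarith [this]

theorem S_eq (a b c m : ℕ) : S a b c m = rhs a b c m := by
  induction m with
  | zero =>
    have h0 : S a b c 0 = u a b c 0 := by simp [S, cc]
    rw [h0]
    simp only [u, rhs, Nat.add_zero, Nat.factorial_zero, mul_one]
    rw [div_eq_div_iff (by positivity) (by positivity)]
    push_cast
    ring
  | succ m ih =>
    have h := S_rec a b c m
    have hα : ((a : ℝ) + b + c + m + 3) * ((m : ℝ) + 1) ≠ 0 := by positivity
    have hr : ((a : ℝ) + b + c + m + 3) * ((m : ℝ) + 1) * rhs a b c (m + 1) =
        ((b : ℝ) + m + 1) * ((c : ℝ) + m + 1) * rhs a b c m := by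
      unfold rhs
      have e1 : b + (m + 1) = (b + m) + 1 := by omega
      have e2 : c + (m + 1) = (c + m) + 1 := by omega
      have e3 : a + b + c + 2 + (m + 1) = (a + b + c + 2 + m) + 1 := by omega
      rw [e1, e2, e3, Nat.factorial_succ (b+m), Nat.factorial_succ (c+m),
        Nat.factorial_succ (a+b+c+2+m), Nat.factorial_succ m]
      rw [mul_div_assoc', mul_div_assoc', div_eq_div_iff (by positivity) (by positivity)]
      push_cast
      ring
    apply mul_left_cancel₀ hα
    rw [h, ih, hr]

lemma fact_add_le (k d : ℕ) : (k + d).factorial ≤ k.factorial * (k + d) ^ d := by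
  induction d with
  | zero => simp
  | succ d ih =>
    calc (k + (d + 1)).factorial = (k + d + 1) * (k + d).factorial := Nat.factorial_succ (k + d)
      _ ≤ (k + d + 1) * (k.factorial * (k + d) ^ d) := Nat.mul_le_mul_left _ ih
      _ = k.factorial * ((k + d + 1) * (k + d) ^ d) := by ring
      _ ≤ k.factorial * ((k + d + 1) * (k + d + 1) ^ d) := by
          exact Nat.mul_le_mul_left _ (Nat.mul_le_mul_left _
            (Nat.pow_le_pow_left (by omega) d))
      _ = k.factorial * (k + (d + 1)) ^ (d + 1) := by ring_nf
  
lemma summable_aux (d : ℕ) {x : ℝ} (hx0 : 0 ≤ x) (hx1 : x < 1) :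
    Summable (fun k : ℕ => ((k : ℝ) + d) ^ d * x ^ k) := by
  have hx : ‖x‖ < 1 := by rwa [Real.norm_eq_abs, abs_of_nonneg hx0]
  have heq : (fun k : ℕ => ((k : ℝ) + d) ^ d * x ^ k) =
      fun k : ℕ => ∑ i ∈ range (d + 1), ((d : ℝ) ^ (d - i) * ((d.choose i : ℕ) : ℝ)) *
        ((k : ℝ) ^ i * x ^ k) := by
    funext k
    rw [add_pow, Finset.sum_mul]
    apply Finset.sum_congr rfl
    intro i hi
    ring
  rw [heq]
  exact summable_sum (fun i _ =>
    (summable_pow_mul_geometric_of_norm_lt_one i hx).mul_left _)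

lemma summable_u (a b c : ℕ) {x : ℝ} (hx0 : 0 ≤ x) (hx1 : x < 1) :
    Summable (fun k : ℕ => u a b c k * x ^ k) := by
  apply Summable.of_nonneg_of_le (fun k => by unfold u; positivity)
    (fun k => ?_) (summable_aux (a + c + 1) hx0 hx1)
  have hu : u a b c k ≤ ((k : ℝ) + ((a + c + 1 : ℕ) : ℝ)) ^ (a + c + 1) := by
    rw [u, div_le_iff₀ (by positivity)]
    have hnat : (a + b + 1 + k).factorial * (a + c + 1 + k).factorial ≤
        (k + (a + c + 1)) ^ (a + c + 1) * ((a + b + c + 2 + k).factorial * k.factorial) := by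
      have h1 : (a + b + 1 + k).factorial ≤ (a + b + c + 2 + k).factorial :=
        Nat.factorial_le (by omega)
      have h2 : (a + c + 1 + k).factorial ≤ k.factorial * (k + (a + c + 1)) ^ (a + c + 1) := by
        have e : a + c + 1 + k = k + (a + c + 1) := by omega
        rw [e]
        exact fact_add_le k (a + c + 1)
      calc (a + b + 1 + k).factorial * (a + c + 1 + k).factorial
          ≤ (a + b + c + 2 + k).factorial * (k.factorial * (k + (a + c + 1)) ^ (a + c + 1)) :=
            Nat.mul_le_mul h1 h2
        _ = (k + (a + c + 1)) ^ (a + c + 1) * ((a + b + c + 2 + k).factorial * k.factorial) := by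
            ring
    calc (((a + b + 1 + k).factorial * (a + c + 1 + k).factorial : ℕ) : ℝ)
        ≤ (((k + (a + c + 1)) ^ (a + c + 1) * ((a + b + c + 2 + k).factorial * k.factorial) : ℕ) : ℝ) :=
          Nat.cast_le.mpr hnat
      _ = ((k : ℝ) + ((a + c + 1 : ℕ) : ℝ)) ^ (a + c + 1) *
            (((a + b + c + 2 + k).factorial * k.factorial : ℕ) : ℝ) := by push_cast; ring
  exact mul_le_mul_of_nonneg_right hu (pow_nonneg hx0 k)

lemma key (a b c : ℕ) {x : ℝ} (hx0 : 0 ≤ x) (hx1 : x < 1) :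
    (1 - x) ^ (a + 1) * ∑' k : ℕ, u a b c k * x ^ k = ∑' m : ℕ, S a b c m * x ^ m := by
  classical
  have hsum : Summable (fun k : ℕ => u a b c k * x ^ k) := summable_u a b c hx0 hx1
  set F : ℕ → ℕ → ℝ := fun j m => if j ≤ m then cc a j * u a b c (m - j) * x ^ m else 0 with hF
  have hcomp : ∀ j : ℕ, (fun k => F j (j + k)) =
      fun k => (cc a j * x ^ j) * (u a b c k * x ^ k) := by
    intro j; funext k
    simp only [hF]
    rw [if_pos (Nat.le_add_right j k), Nat.add_sub_cancel_left, pow_add]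
    ring
  have hinj : ∀ j : ℕ, Function.Injective (fun k : ℕ => j + k) := by
    intro j x y h
    simpa using h
  have hFsum : ∀ j : ℕ, Summable (F j) := by
    intro j
    rw [← Function.Injective.summable_iff (hinj j) ?hz]
    case hz =>
      intro m hm
      simp only [hF]
      rw [if_neg]
      intro hjm
      exact hm ⟨m - j, by show j + (m - j) = m; omega⟩
    have : (F j) ∘ (fun k : ℕ => j + k) = fun k => (cc a j * x ^ j) * (u a b c k * x ^ k) :=
      hcomp j
    rw [this]
    exact hsum.mul_left _
  have hreindex : ∀ j : ℕ, ∑' k : ℕ, (cc a j * x ^ j) * (u a b c k * x ^ k) = ∑' m, F j m := by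
    intro j
    rw [← hcomp j]
    apply Function.Injective.tsum_eq (hinj j)
    intro m hm
    by_cases h : j ≤ m
    · exact ⟨m - j, by show j + (m - j) = m; omega⟩
    · exact absurd (by simp only [hF]; rw [if_neg h] : F j m = 0)
        (Function.mem_support.mp hm)
  have expand : (1 - x) ^ (a + 1) = ∑ j ∈ range (a + 2), cc a j * x ^ j := by
    rw [show (1 : ℝ) - x = -x + 1 by ring, add_pow]
    apply Finset.sum_congr rfl
    intro j hj
    simp only [one_pow, mul_one]
    rw [cc, neg_pow]
    ring
  have perm : ∀ m : ℕ, ∑ j ∈ range (a + 2), F j m = S a b c m * x ^ m := by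
    intro m
    have h1 : ∑ j ∈ range (a + 2), F j m = ∑ j ∈ range (a + m + 2), F j m := by
      apply Finset.sum_subset (Finset.range_subset_range.mpr (by omega))
      intro j hj hnj
      simp only [Finset.mem_range] at hj hnj
      have hch : (a + 1).choose j = 0 := Nat.choose_eq_zero_of_lt (by omega)
      simp [hF, cc, hch]
    have h2 : ∑ j ∈ range (m + 1), F j m = ∑ j ∈ range (a + m + 2), F j m := by
      apply Finset.sum_subset (Finset.range_subset_range.mpr (by omega))
      intro j hj hnj
      simp only [Finset.mem_range] at hj hnj
      simp only [hF]
      rw [if_neg (by omega)]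
    rw [h1, ← h2, S, Finset.sum_mul]
    apply Finset.sum_congr rfl
    intro j hj
    simp only [Finset.mem_range] at hj
    simp only [hF]
    rw [if_pos (by omega)]
  calc (1 - x) ^ (a + 1) * ∑' k : ℕ, u a b c k * x ^ k
      = ∑ j ∈ range (a + 2), (cc a j * x ^ j) * ∑' k : ℕ, u a b c k * x ^ k := by
        rw [expand, Finset.sum_mul]
    _ = ∑ j ∈ range (a + 2), ∑' m : ℕ, F j m := by
        apply Finset.sum_congr rfl
        intro j _
        rw [← hreindex j, tsum_mul_left]
    _ = ∑' m : ℕ, ∑ j ∈ range (a + 2), F j m := (Summable.tsum_finsetSum (fun j _ => hFsum j)).symm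
    _ = ∑' m : ℕ, S a b c m * x ^ m := tsum_congr perm


end PoissonSzegoAux


open PoissonSzegoAux

/-- Conversion of the expansion of 1/|1-r⟨ξ,η⟩|^{2n} into Folland's coefficients
S_n^{p,q}(r) for the Poisson–Szegő kernel. -/
theorem poisson_szego_series_identity (n p q : ℕ) (hn : 1 ≤ n) (hp : 1 ≤ p) (hq : 1 ≤ q)
    (r : ℝ) (hr0 : 0 ≤ r) (hr1 : r < 1) :
    (1 - r ^ 2) ^ n * r ^ (p + q) *
        ∑' k : ℕ, (((n - 1 + p + k).factorial * (n - 1 + q + k).factorial : ℕ) : ℝ) /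
          (((n - 1).factorial * (n - 1 + p + q + k).factorial * k.factorial : ℕ) : ℝ) *
          r ^ (2 * k) =
      r ^ (p + q) *
        ((((p + n - 1).factorial * (q + n - 1).factorial : ℕ) : ℝ) /
          (((n - 1).factorial * (p - 1).factorial * (q - 1).factorial : ℕ) : ℝ)) *
        ∑' k : ℕ, (((p + k - 1).factorial * (q + k - 1).factorial : ℕ) : ℝ) /
          (((n - 1 + p + q + k).factorial * k.factorial : ℕ) : ℝ) * r ^ (2 * k) := by
  obtain ⟨a, rfl⟩ : ∃ a, n = a + 1 := ⟨n - 1, by omega⟩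
  obtain ⟨b, rfl⟩ : ∃ b, p = b + 1 := ⟨p - 1, by omega⟩
  obtain ⟨c, rfl⟩ : ∃ c, q = c + 1 := ⟨q - 1, by omega⟩
  simp only [Nat.add_sub_cancel]
  have hx0 : (0:ℝ) ≤ r ^ 2 := by positivity
  have hx1 : r ^ 2 < 1 := by nlinarith
  have i4 : b + 1 + (a + 1) - 1 = a + b + 1 := by omega
  have i5 : c + 1 + (a + 1) - 1 = a + c + 1 := by omega
  rw [i4, i5]
  have eL : (∑' k : ℕ, (((a + (b + 1) + k).factorial * (a + (c + 1) + k).factorial : ℕ) : ℝ) /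
      ((a.factorial * (a + (b + 1) + (c + 1) + k).factorial * k.factorial : ℕ) : ℝ) * r ^ (2 * k))
      = ∑' k : ℕ, ((a.factorial : ℝ))⁻¹ * (u a b c k * (r ^ 2) ^ k) := by
    apply tsum_congr
    intro k
    have i1 : a + (b + 1) + k = a + b + 1 + k := by omega
    have i2 : a + (c + 1) + k = a + c + 1 + k := by omega
    have i3 : a + (b + 1) + (c + 1) + k = a + b + c + 2 + k := by omega
    rw [i1, i2, i3, pow_mul]
    simp only [u]
    push_cast
    ring
  have eR : (∑' k : ℕ, (((b + 1 + k - 1).factorial * (c + 1 + k - 1).factorial : ℕ) : ℝ) /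
      (((a + (b + 1) + (c + 1) + k).factorial * k.factorial : ℕ) : ℝ) * r ^ (2 * k))
      = ∑' m : ℕ, (((b + m).factorial * (c + m).factorial : ℕ) : ℝ) /
          (((a + b + c + 2 + m).factorial * m.factorial : ℕ) : ℝ) * (r ^ 2) ^ m := by
    apply tsum_congr
    intro k
    have i1 : b + 1 + k - 1 = b + k := by omega
    have i2 : c + 1 + k - 1 = c + k := by omega
    have i3 : a + (b + 1) + (c + 1) + k = a + b + c + 2 + k := by omega
    rw [i1, i2, i3, pow_mul]
  rw [eL, eR, tsum_mul_left]
  have hkey : (1 - r ^ 2) ^ (a + 1) * ∑' k : ℕ, u a b c k * (r ^ 2) ^ k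
      = (((a + b + 1).factorial * (a + c + 1).factorial : ℕ) : ℝ) /
          ((b.factorial * c.factorial : ℕ) : ℝ) *
        ∑' m : ℕ, (((b + m).factorial * (c + m).factorial : ℕ) : ℝ) /
          (((a + b + c + 2 + m).factorial * m.factorial : ℕ) : ℝ) * (r ^ 2) ^ m := by
    rw [key a b c hx0 hx1, ← tsum_mul_left]
    apply tsum_congr
    intro m
    rw [S_eq]
    simp only [rhs]
    push_cast
    ring
  push_cast at hkey ⊢
  linear_combination (r ^ (b + 1 + (c + 1)) * ((a.factorial : ℝ))⁻¹) * hkey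
end

section
/- Let α ≥ 0 be an integer and define the disc polynomial W^α_{p,q}(w) = [(α+1)_{p+q} / ((α+1)_p (α+1)_q)] · w^p w̄^q · ₂F₁(-p, -q; -α-p-q; 1/|w|²) for w ≠ 0 (the hypergeometric sum terminates, so the expression is a polynomial in w, w̄ extended to all of ℂ). Then for all w in the closed unit disc |w| ≤ 1, one has |W^α_{p,q}(w)| ≤ 1, with W^α_{p,q}(1) = 1. -/
open MvPolynomial Finset

/-- The disc polynomial W^α_{p,q} in the Dunkl–Xu normalization, written as a polynomial
in w and w̄ (the terminating hypergeometric series with denominators cleared). -/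
noncomputable def discW (α p q : ℕ) (w : ℂ) : ℂ :=
  (((ascPochhammer ℝ (p + q)).eval ((α : ℝ) + 1) /
      ((ascPochhammer ℝ p).eval ((α : ℝ) + 1) * (ascPochhammer ℝ q).eval ((α : ℝ) + 1)) : ℝ) : ℂ) *
    ∑ i ∈ Finset.range (min p q + 1),
      ((((ascPochhammer ℝ i).eval (-(p : ℝ)) * (ascPochhammer ℝ i).eval (-(q : ℝ))) /
          ((ascPochhammer ℝ i).eval (-(α : ℝ) - p - q) * (i.factorial : ℝ)) : ℝ) : ℂ) *
        w ^ (p - i) * ((starRingEnd ℂ) w) ^ (q - i)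

namespace DiscProof

set_option linter.unusedSectionVars false

variable {σ : Type*} [Fintype σ] [DecidableEq σ]

/-- weight: product of factorials of the exponents -/
noncomputable def wt (m : σ →₀ ℕ) : ℝ := ∏ v : σ, ((m v).factorial : ℝ)

lemma wt_pos (m : σ →₀ ℕ) : 0 < wt m :=
  Finset.prod_pos fun v _ => by positivity

lemma wt_zero : wt (0 : σ →₀ ℕ) = 1 := by simp [wt]

lemma wt_add_single (b : σ →₀ ℕ) (v : σ) :
    wt (b + Finsupp.single v 1) = ((b v : ℝ) + 1) * wt b := by
  classical
  unfold wt
  have key : ∀ u : σ, ((((b + Finsupp.single v 1 : σ →₀ ℕ)) u).factorial : ℝ)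
      = (if u = v then ((b v : ℝ) + 1) else 1) * ((b u).factorial : ℝ) := by
    intro u
    by_cases h : u = v
    · subst h
      have h2 : ((b + Finsupp.single u 1 : σ →₀ ℕ)) u = b u + 1 := by simp
      rw [h2, if_pos rfl, Nat.factorial_succ]; push_cast; ring
    · have h2 : ((b + Finsupp.single v 1 : σ →₀ ℕ)) u = b u := by
        simp [Finsupp.single_apply, Ne.symm h]
      rw [h2, if_neg h, one_mul]
  rw [Finset.prod_congr rfl (fun u _ => key u), Finset.prod_mul_distrib]
  congr 1
  rw [Finset.prod_ite_eq' Finset.univ v (fun _ => ((b v : ℝ) + 1))]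
  simp

/-- The Fischer pairing, antilinear in the first slot. -/
noncomputable def fp (f g : MvPolynomial σ ℂ) : ℂ :=
  ∑ m ∈ f.support ∪ g.support,
    (wt m : ℂ) * (starRingEnd ℂ) (f.coeff m) * g.coeff m

lemma fp_eq_sum {f g : MvPolynomial σ ℂ} {T : Finset (σ →₀ ℕ)}
    (hf : f.support ⊆ T) (hg : g.support ⊆ T) :
    fp f g = ∑ m ∈ T, (wt m : ℂ) * (starRingEnd ℂ) (f.coeff m) * g.coeff m := by
  unfold fp
  refine Finset.sum_subset (Finset.union_subset hf hg) ?_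
  intro m hmT hm
  rw [Finset.mem_union, not_or] at hm
  rw [MvPolynomial.notMem_support_iff.1 hm.1]
  simp

lemma fp_conj_symm (f g : MvPolynomial σ ℂ) : fp g f = (starRingEnd ℂ) (fp f g) := by
  rw [fp, fp, Finset.union_comm, map_sum]
  refine Finset.sum_congr rfl fun m _ => ?_
  simp only [map_mul, Complex.conj_conj, Complex.conj_ofReal]
  ring

lemma fp_add_right (f g h : MvPolynomial σ ℂ) : fp f (g + h) = fp f g + fp f h := by
  classical
  set T := f.support ∪ g.support ∪ h.support ∪ (g + h).support with hT
  have sub1 : f.support ⊆ T := by intro m hm; simp only [hT, Finset.mem_union]; tauto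
  have sub2 : g.support ⊆ T := by intro m hm; simp only [hT, Finset.mem_union]; tauto
  have sub3 : h.support ⊆ T := by intro m hm; simp only [hT, Finset.mem_union]; tauto
  have sub4 : (g + h).support ⊆ T := by intro m hm; simp only [hT, Finset.mem_union]; tauto
  rw [fp_eq_sum sub1 sub4, fp_eq_sum sub1 sub2, fp_eq_sum sub1 sub3, ← Finset.sum_add_distrib]
  refine Finset.sum_congr rfl fun m _ => ?_
  rw [MvPolynomial.coeff_add]; ring

lemma fp_smul_right (f g : MvPolynomial σ ℂ) (c : ℂ) : fp f (c • g) = c * fp f g := by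
  classical
  have hsub : (c • g).support ⊆ g.support := MvPolynomial.support_smul
  rw [fp_eq_sum (g := c • g) (T := f.support ∪ g.support) Finset.subset_union_left
      (hsub.trans Finset.subset_union_right),
    fp_eq_sum (g := g) (T := f.support ∪ g.support) Finset.subset_union_left
      Finset.subset_union_right, Finset.mul_sum]
  refine Finset.sum_congr rfl fun m _ => ?_
  rw [MvPolynomial.coeff_smul]
  simp only [smul_eq_mul]; ring

lemma fp_smul_left (f g : MvPolynomial σ ℂ) (c : ℂ) :
    fp (c • f) g = (starRingEnd ℂ) c * fp f g := by
  rw [fp_conj_symm, fp_smul_right, map_mul, ← fp_conj_symm]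

lemma fp_C_mul_right (f g : MvPolynomial σ ℂ) (c : ℂ) : fp f (C c * g) = c * fp f g := by
  rw [← MvPolynomial.smul_eq_C_mul, fp_smul_right]

lemma fp_C_mul_left (f g : MvPolynomial σ ℂ) (c : ℂ) :
    fp (C c * f) g = (starRingEnd ℂ) c * fp f g := by
  rw [← MvPolynomial.smul_eq_C_mul, fp_smul_left]

lemma fp_zero_right (f : MvPolynomial σ ℂ) : fp f 0 = 0 := by
  have := fp_smul_right f 0 0
  simpa using this

lemma fp_sum_right {ι : Type*} (f : MvPolynomial σ ℂ) (s : Finset ι)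
    (g : ι → MvPolynomial σ ℂ) : fp f (∑ j ∈ s, g j) = ∑ j ∈ s, fp f (g j) := by
  classical
  induction s using Finset.induction_on with
  | empty => simpa using fp_zero_right f
  | insert a s' hj ih => rw [Finset.sum_insert hj, fp_add_right, ih,
      Finset.sum_insert hj]

lemma fp_monomial_right (f : MvPolynomial σ ℂ) (b : σ →₀ ℕ) (d : ℂ) :
    fp f (monomial b d) = (wt b : ℂ) * (starRingEnd ℂ) (f.coeff b) * d := by
  classical
  rw [fp_eq_sum (f := f) (g := monomial b d)
    (T := insert b (f.support ∪ (monomial b d).support))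
    (Finset.subset_union_left.trans (Finset.subset_insert _ _))
    (Finset.subset_union_right.trans (Finset.subset_insert _ _))]
  rw [Finset.sum_eq_single_of_mem b (Finset.mem_insert_self _ _)]
  · rw [MvPolynomial.coeff_monomial, if_pos rfl]
  · intro m _ hm
    rw [MvPolynomial.coeff_monomial, if_neg (fun h => hm h.symm)]
    simp

lemma fp_one_right (f : MvPolynomial σ ℂ) : fp f 1 = (starRingEnd ℂ) (f.coeff 0) := by
  have := fp_monomial_right f 0 1
  simpa [wt_zero] using this

lemma fp_one_left (g : MvPolynomial σ ℂ) : fp 1 g = g.coeff 0 := by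
  rw [fp_conj_symm, fp_one_right]; simp

lemma coeff_pderiv (v : σ) (f : MvPolynomial σ ℂ) (m : σ →₀ ℕ) :
    (MvPolynomial.pderiv v f).coeff m = ((m v : ℂ) + 1) * f.coeff (m + Finsupp.single v 1) := by
  classical
  induction f using MvPolynomial.induction_on' with
  | monomial u a =>
    rw [MvPolynomial.pderiv_monomial]
    by_cases hu : u v = 0
    · rw [MvPolynomial.coeff_monomial, MvPolynomial.coeff_monomial]
      have h2 : u ≠ m + Finsupp.single v 1 := by
        intro h; rw [h] at hu; simp at hu
      rw [if_neg h2]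
      by_cases h3 : u - Finsupp.single v 1 = m
      · rw [if_pos h3]; simp [hu]
      · rw [if_neg h3]; simp
    · have hle : Finsupp.single v 1 ≤ u := Finsupp.single_le_iff.2 (by omega)
      rw [MvPolynomial.coeff_monomial, MvPolynomial.coeff_monomial]
      by_cases h3 : u - Finsupp.single v 1 = m
      · have h4 : u = m + Finsupp.single v 1 := by
          rw [← h3, tsub_add_cancel_of_le hle]
        rw [if_pos h3, if_pos h4]
        have h5 : u v = m v + 1 := by rw [h4]; simp
        rw [h5]; push_cast; ring
      · have h4 : u ≠ m + Finsupp.single v 1 := by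
          intro h; apply h3
          rw [h, add_tsub_cancel_right]
        rw [if_neg h3, if_neg h4]
        simp
  | add f g hf hg =>
    rw [map_add, MvPolynomial.coeff_add, MvPolynomial.coeff_add, hf, hg]; ring

lemma fp_X_mul_right (f g : MvPolynomial σ ℂ) (v : σ) :
    fp f (X v * g) = fp (MvPolynomial.pderiv v f) g := by
  classical
  induction g using MvPolynomial.induction_on' with
  | monomial b d =>
    rw [show (X v * monomial b d : MvPolynomial σ ℂ) = monomial (b + Finsupp.single v 1) d by
      rw [MvPolynomial.X, MvPolynomial.monomial_mul, one_mul, add_comm]]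
    rw [fp_monomial_right, fp_monomial_right, coeff_pderiv, wt_add_single]
    simp only [map_mul, map_add, map_one, Complex.conj_ofReal, map_natCast,
      Complex.ofReal_mul, Complex.ofReal_add, Complex.ofReal_natCast, Complex.ofReal_one]
    ring
  | add a b ha hb => rw [mul_add, fp_add_right, fp_add_right, ha, hb]

lemma fp_X_mul_left (f g : MvPolynomial σ ℂ) (v : σ) :
    fp (X v * f) g = fp f (MvPolynomial.pderiv v g) := by
  rw [fp_conj_symm, fp_X_mul_right, ← fp_conj_symm]


noncomputable section

variable (n : ℕ)

abbrev Rp (n : ℕ) := MvPolynomial (Fin n ⊕ Fin n) ℂ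

def SP : Rp n := ∑ i : Fin n, X (Sum.inl i) * X (Sum.inr i)

variable {n}

def Af (x : Fin n → ℂ) : Rp n := ∑ i : Fin n, C ((starRingEnd ℂ) (x i)) * X (Sum.inl i)

def Bf (x : Fin n → ℂ) : Rp n := ∑ i : Fin n, C (x i) * X (Sum.inr i)

def lap (f : Rp n) : Rp n :=
  ∑ i : Fin n, MvPolynomial.pderiv (Sum.inr i) (MvPolynomial.pderiv (Sum.inl i) f)

def ip (x y : Fin n → ℂ) : ℂ := ∑ i : Fin n, x i * (starRingEnd ℂ) (y i)

lemma pd1_SP (i : Fin n) : MvPolynomial.pderiv (Sum.inl i) (SP n) = X (Sum.inr i) := by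
  unfold SP
  rw [map_sum]
  rw [Finset.sum_eq_single_of_mem i (Finset.mem_univ i)]
  · rw [MvPolynomial.pderiv_mul, pderiv_X_self,
      pderiv_X_of_ne (by simp : (Sum.inr i : Fin n ⊕ Fin n) ≠ Sum.inl i)]
    ring
  · intro k _ hk
    rw [MvPolynomial.pderiv_mul,
      pderiv_X_of_ne (by simp [hk] : (Sum.inl k : Fin n ⊕ Fin n) ≠ Sum.inl i),
      pderiv_X_of_ne (by simp : (Sum.inr k : Fin n ⊕ Fin n) ≠ Sum.inl i)]
    ring

lemma pd2_SP (i : Fin n) : MvPolynomial.pderiv (Sum.inr i) (SP n) = X (Sum.inl i) := by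
  unfold SP
  rw [map_sum]
  rw [Finset.sum_eq_single_of_mem i (Finset.mem_univ i)]
  · rw [MvPolynomial.pderiv_mul, pderiv_X_self,
      pderiv_X_of_ne (by simp : (Sum.inl i : Fin n ⊕ Fin n) ≠ Sum.inr i)]
    ring
  · intro k _ hk
    rw [MvPolynomial.pderiv_mul,
      pderiv_X_of_ne (by simp [hk] : (Sum.inr k : Fin n ⊕ Fin n) ≠ Sum.inr i),
      pderiv_X_of_ne (by simp : (Sum.inl k : Fin n ⊕ Fin n) ≠ Sum.inr i)]
    ring

lemma pd1_Af (x : Fin n → ℂ) (i : Fin n) :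
    MvPolynomial.pderiv (Sum.inl i) (Af x) = C ((starRingEnd ℂ) (x i)) := by
  unfold Af
  rw [map_sum]
  rw [Finset.sum_eq_single_of_mem i (Finset.mem_univ i)]
  · rw [MvPolynomial.pderiv_C_mul, pderiv_X_self, mul_one]
  · intro k _ hk
    rw [MvPolynomial.pderiv_C_mul,
      pderiv_X_of_ne (by simp [hk] : (Sum.inl k : Fin n ⊕ Fin n) ≠ Sum.inl i), mul_zero]

lemma pd2_Af (x : Fin n → ℂ) (i : Fin n) :
    MvPolynomial.pderiv (Sum.inr i) (Af x) = 0 := by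
  unfold Af
  rw [map_sum]
  refine Finset.sum_eq_zero fun k _ => ?_
  rw [MvPolynomial.pderiv_C_mul,
    pderiv_X_of_ne (by simp : (Sum.inl k : Fin n ⊕ Fin n) ≠ Sum.inr i), mul_zero]

lemma pd2_Bf (x : Fin n → ℂ) (i : Fin n) :
    MvPolynomial.pderiv (Sum.inr i) (Bf x) = C (x i) := by
  unfold Bf
  rw [map_sum]
  rw [Finset.sum_eq_single_of_mem i (Finset.mem_univ i)]
  · rw [MvPolynomial.pderiv_C_mul, pderiv_X_self, mul_one]
  · intro k _ hk
    rw [MvPolynomial.pderiv_C_mul,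
      pderiv_X_of_ne (by simp [hk] : (Sum.inr k : Fin n ⊕ Fin n) ≠ Sum.inr i), mul_zero]

lemma pd1_Bf (x : Fin n → ℂ) (i : Fin n) :
    MvPolynomial.pderiv (Sum.inl i) (Bf x) = 0 := by
  unfold Bf
  rw [map_sum]
  refine Finset.sum_eq_zero fun k _ => ?_
  rw [MvPolynomial.pderiv_C_mul,
    pderiv_X_of_ne (by simp : (Sum.inr k : Fin n ⊕ Fin n) ≠ Sum.inl i), mul_zero]


lemma pderiv_nat (v : Fin n ⊕ Fin n) (k : ℕ) :
    MvPolynomial.pderiv v ((k : Rp n)) = 0 := by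
  rw [← map_natCast (C : ℂ →+* Rp n) k, MvPolynomial.pderiv_C]

lemma lap_term (x : Fin n → ℂ) (hx : ∑ i : Fin n, (starRingEnd ℂ) (x i) * x i = 1)
    (j a b : ℕ) :
    lap (SP n ^ j * Af x ^ a * Bf x ^ b)
      = ((j : Rp n) * ((j-1 : ℕ) : Rp n)) * (SP n ^ (j-1-1) * SP n * (Af x ^ a * Bf x ^ b))
      + ((n : Rp n) * (j : Rp n)) * (SP n ^ (j-1) * (Af x ^ a * Bf x ^ b))
      + ((j : Rp n) * (b : Rp n)) * (SP n ^ (j-1) * (Af x ^ a * (Bf x ^ (b-1) * Bf x)))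
      + ((j : Rp n) * (a : Rp n)) * (SP n ^ (j-1) * ((Af x ^ (a-1) * Af x) * Bf x ^ b))
      + ((a : Rp n) * (b : Rp n)) * (SP n ^ j * (Af x ^ (a-1) * Bf x ^ (b-1))) := by
  have key : ∀ i : Fin n,
      MvPolynomial.pderiv (Sum.inr i) (MvPolynomial.pderiv (Sum.inl i)
        (SP n ^ j * Af x ^ a * Bf x ^ b))
      = (X (Sum.inl i) * X (Sum.inr i)) *
          (((j : Rp n) * ((j-1 : ℕ) : Rp n)) * (SP n ^ (j-1-1) * (Af x ^ a * Bf x ^ b)))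
        + ((j : Rp n)) * (SP n ^ (j-1) * (Af x ^ a * Bf x ^ b))
        + (C (x i) * X (Sum.inr i)) *
          (((j : Rp n) * (b : Rp n)) * (SP n ^ (j-1) * (Af x ^ a * Bf x ^ (b-1))))
        + (C ((starRingEnd ℂ) (x i)) * X (Sum.inl i)) *
          (((j : Rp n) * (a : Rp n)) * (SP n ^ (j-1) * (Af x ^ (a-1) * Bf x ^ b)))
        + (C ((starRingEnd ℂ) (x i)) * C (x i)) *
          (((a : Rp n) * (b : Rp n)) * (SP n ^ j * (Af x ^ (a-1) * Bf x ^ (b-1)))) := by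
    intro i
    simp only [MvPolynomial.pderiv_mul, MvPolynomial.pderiv_pow, pd1_SP, pd2_SP, pd1_Af,
      pd2_Af, pd1_Bf, pd2_Bf, MvPolynomial.pderiv_C, pderiv_nat, MvPolynomial.pderiv_X_self,
      map_add, mul_zero, zero_mul, add_zero, zero_add, mul_one]
    ring
  unfold lap
  rw [Finset.sum_congr rfl (fun i _ => key i)]
  simp only [Finset.sum_add_distrib, ← Finset.sum_mul]
  have hS : (∑ i : Fin n, X (Sum.inl i) * X (Sum.inr i)) = SP n := rfl
  have hA : (∑ i : Fin n, C ((starRingEnd ℂ) (x i)) * X (Sum.inl i)) = Af x := rfl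
  have hB : (∑ i : Fin n, C (x i) * X (Sum.inr i)) = Bf x := rfl
  have hC1 : (∑ i : Fin n, C ((starRingEnd ℂ) (x i)) * C (x i) : Rp n) = 1 := by
    simp only [← map_mul, ← map_sum, hx, map_one]
  have hcard : (∑ _i : Fin n, (j : Rp n)) = (n : Rp n) * (j : Rp n) := by
    rw [Finset.sum_const, Finset.card_univ, Fintype.card_fin, nsmul_eq_mul]
  rw [hS, hA, hB, hC1, hcard]
  ring

lemma pow_fix1 (j : ℕ) (Z : Rp n) :
    ((j : Rp n) * ((j-1 : ℕ) : Rp n)) * (SP n ^ (j-1-1) * SP n * Z)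
      = ((j*(j-1) : ℕ) : Rp n) * (SP n ^ (j-1) * Z) := by
  match j with
  | 0 => simp
  | 1 => simp
  | (m+2) =>
    have h1 : m + 2 - 1 - 1 = m := rfl
    have h2 : m + 2 - 1 = m + 1 := rfl
    rw [h1, h2, ← pow_succ]
    push_cast; ring

lemma pow_fix2 (b : ℕ) (c W₁ W₂ B : Rp n) :
    (c * (b : Rp n)) * (W₁ * (W₂ * (B ^ (b-1) * B)))
      = (c * (b : Rp n)) * (W₁ * (W₂ * B ^ b)) := by
  match b with
  | 0 => simp
  | (m+1) =>
    have h1 : m + 1 - 1 = m := rfl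
    rw [h1, ← pow_succ]

lemma pow_fix3 (a : ℕ) (c W₁ W₂ A : Rp n) :
    (c * (a : Rp n)) * (W₁ * ((A ^ (a-1) * A) * W₂))
      = (c * (a : Rp n)) * (W₁ * (A ^ a * W₂)) := by
  match a with
  | 0 => simp
  | (m+1) =>
    have h1 : m + 1 - 1 = m := rfl
    rw [h1, ← pow_succ]

lemma lap_term_clean (x : Fin n → ℂ) (hx : ∑ i : Fin n, (starRingEnd ℂ) (x i) * x i = 1)
    (j a b : ℕ) :
    lap (SP n ^ j * Af x ^ a * Bf x ^ b)
      = ((j*(n+a+b+j-1) : ℕ) : Rp n) * (SP n ^ (j-1) * (Af x ^ a * Bf x ^ b))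
      + ((a*b : ℕ) : Rp n) * (SP n ^ j * (Af x ^ (a-1) * Bf x ^ (b-1))) := by
  rw [lap_term x hx j a b, pow_fix1 j (Af x ^ a * Bf x ^ b), pow_fix2 b, pow_fix3 a]
  have hnat : (j*(j-1) : ℕ) + n*j + j*b + j*a = j*(n+a+b+j-1) := by
    match j with
    | 0 => simp
    | (m+1) =>
      have h1 : m + 1 - 1 = m := rfl
      have h2 : n + a + b + (m+1) - 1 = n + a + b + m := rfl
      rw [h1, h2]; ring
  have hcast : ((j*(j-1) : ℕ) : Rp n) + (n : Rp n)*(j : Rp n) + (j : Rp n)*(b : Rp n)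
      + (j : Rp n)*(a : Rp n) = ((j*(n+a+b+j-1) : ℕ) : Rp n) := by
    rw [← hnat]; push_cast; ring
  rw [← hcast]
  push_cast
  ring

/-- coefficients of the (unnormalized) disc polynomial -/
def dc (α p q : ℕ) (j : ℕ) : ℝ :=
  ((-1:ℝ))^j * (Nat.descFactorial p j) * (Nat.descFactorial q j) /
    ((Nat.descFactorial (α+p+q) j) * (Nat.factorial j))

lemma dc_zero (α p q : ℕ) : dc α p q 0 = 1 := by simp [dc]

lemma dc_rec (α p q j : ℕ) (hjp : j < p) (hjq : j < q) :
    dc α p q (j+1) * (((j+1)*(α+p+q-j) : ℕ) : ℝ)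
      + dc α p q j * (((p-j)*(q-j) : ℕ) : ℝ) = 0 := by
  have hd : (Nat.descFactorial (α+p+q) j : ℝ) ≠ 0 := by
    have := Nat.descFactorial_eq_zero_iff_lt.not.2 (by omega : ¬ (α+p+q < j))
    exact_mod_cast fun h => this (by exact_mod_cast h)
  have hf : (Nat.factorial j : ℝ) ≠ 0 := by
    exact_mod_cast Nat.factorial_ne_zero j
  have hs : ((α+p+q-j : ℕ) : ℝ) ≠ 0 := Nat.cast_ne_zero.2 (by omega)
  unfold dc
  rw [Nat.descFactorial_succ p, Nat.descFactorial_succ q, Nat.descFactorial_succ (α+p+q),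
    Nat.factorial_succ]
  push_cast
  field_simp
  ring

/-- the harmonic "zonal" polynomial -/
def Ff (α p q : ℕ) (x : Fin n → ℂ) : Rp n :=
  ∑ j ∈ Finset.range (min p q + 1),
    C ((dc α p q j : ℂ)) * (SP n ^ j * Af x ^ (p-j) * Bf x ^ (q-j))

lemma lap_Cmul (c : ℂ) (f : Rp n) : lap (C c * f) = C c * lap f := by
  unfold lap
  rw [Finset.mul_sum]
  exact Finset.sum_congr rfl fun i _ => by
    rw [MvPolynomial.pderiv_C_mul, MvPolynomial.pderiv_C_mul]

lemma lap_sum {ι : Type*} (s : Finset ι) (g : ι → Rp n) :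
    lap (∑ j ∈ s, g j) = ∑ j ∈ s, lap (g j) := by
  unfold lap
  rw [Finset.sum_comm]
  exact Finset.sum_congr rfl fun i _ => by rw [map_sum, map_sum]

theorem lap_Ff {α p q : ℕ} (hn : n = α + 2) (x : Fin n → ℂ)
    (hx : ∑ i : Fin n, (starRingEnd ℂ) (x i) * x i = 1) :
    lap (Ff α p q x) = 0 := by
  set m := min p q with hm
  unfold Ff
  rw [lap_sum]
  have step : ∀ j ∈ Finset.range (m+1),
      lap (C ((dc α p q j : ℂ)) * (SP n ^ j * Af x ^ (p-j) * Bf x ^ (q-j)))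
      = C ((dc α p q j : ℂ)) * (((j*(n+(p-j)+(q-j)+j-1) : ℕ) : Rp n)
            * (SP n ^ (j-1) * (Af x ^ (p-j) * Bf x ^ (q-j))))
        + C ((dc α p q j : ℂ)) * ((((p-j)*(q-j) : ℕ) : Rp n)
            * (SP n ^ j * (Af x ^ (p-j-1) * Bf x ^ (q-j-1)))) := by
    intro j _
    rw [lap_Cmul, lap_term_clean x hx j (p-j) (q-j), mul_add]
  rw [Finset.sum_congr rfl step, Finset.sum_add_distrib]
  rw [Finset.sum_range_succ', Finset.sum_range_succ]
  have hzero1 : C ((dc α p q 0 : ℂ)) * (((0*(n+(p-0)+(q-0)+0-1) : ℕ) : Rp n)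
      * (SP n ^ (0-1) * (Af x ^ (p-0) * Bf x ^ (q-0)))) = 0 := by
    norm_num
  have hzero2 : C ((dc α p q m : ℂ)) * ((((p-m)*(q-m) : ℕ) : Rp n)
      * (SP n ^ m * (Af x ^ (p-m-1) * Bf x ^ (q-m-1)))) = 0 := by
    have : (p-m)*(q-m) = 0 := by
      rcases Nat.le_total p q with h | h
      · have : m = p := by omega
        simp [this]
      · have : m = q := by omega
        simp [this]
    rw [this]
    norm_num
  rw [hzero1, hzero2, add_zero, add_zero, ← Finset.sum_add_distrib]
  refine Finset.sum_eq_zero ?_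
  intro j hj
  rw [Finset.mem_range] at hj
  have hjp : j < p := by omega
  have hjq : j < q := by omega
  -- rewrite the shifted term
  have hsub1 : (j+1) - 1 = j := rfl
  have hsub2 : p - (j+1) = p - j - 1 := by omega
  have hsub3 : q - (j+1) = q - j - 1 := by omega
  have hw1 : (j+1)*(n+(p-j-1)+(q-j-1)+(j+1)-1) = (j+1)*(α+p+q-j) := by
    have h : n+(p-j-1)+(q-j-1)+(j+1)-1 = α+p+q-j := by omega
    rw [h]
  rw [hsub1, hsub2, hsub3, hw1]
  have key : (dc α p q (j+1) : ℂ) * (((j+1)*(α+p+q-j) : ℕ) : ℂ)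
      + (dc α p q j : ℂ) * (((p-j)*(q-j) : ℕ) : ℂ) = 0 := by
    have := dc_rec α p q j hjp hjq
    have h2 : ((dc α p q (j+1) * (((j+1)*(α+p+q-j) : ℕ) : ℝ)
      + dc α p q j * (((p-j)*(q-j) : ℕ) : ℝ) : ℝ) : ℂ) = ((0:ℝ) : ℂ) := by rw [this]
    push_cast at h2 ⊢
    linear_combination h2
  have expand : ∀ (c₁ c₂ : ℂ) (k₁ k₂ : ℕ) (V : Rp n),
      C c₁ * ((k₁ : Rp n) * V) + C c₂ * ((k₂ : Rp n) * V)
        = C (c₁ * (k₁ : ℂ) + c₂ * (k₂ : ℂ)) * V := by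
    intro c₁ c₂ k₁ k₂ V
    rw [map_add, map_mul, map_mul, map_natCast C k₁, map_natCast C k₂]
    ring
  rw [expand, key, map_zero, zero_mul]

def Pop (x : Fin n → ℂ) (g : Rp n) : Rp n :=
  ∑ i : Fin n, C (x i) * MvPolynomial.pderiv (Sum.inl i) g

def Qop (x : Fin n → ℂ) (g : Rp n) : Rp n :=
  ∑ i : Fin n, C ((starRingEnd ℂ) (x i)) * MvPolynomial.pderiv (Sum.inr i) g

lemma fp_zero_left (g : Rp n) : fp 0 g = 0 := by
  rw [fp_conj_symm, fp_zero_right, map_zero]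

lemma fp_sum_left {ι : Type*} (s : Finset ι) (t : ι → Rp n) (g : Rp n) :
    fp (∑ j ∈ s, t j) g = ∑ j ∈ s, fp (t j) g := by
  rw [fp_conj_symm, fp_sum_right, map_sum]
  exact Finset.sum_congr rfl fun j _ => by rw [← fp_conj_symm]

lemma fp_SP_mul_right (f g : Rp n) : fp f (SP n * g) = fp (lap f) g := by
  have h1 : SP n * g = ∑ i : Fin n, X (Sum.inl i) * (X (Sum.inr i) * g) := by
    rw [SP, Finset.sum_mul]
    exact Finset.sum_congr rfl fun i _ => by ring
  rw [h1, fp_sum_right, lap, fp_sum_left]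
  exact Finset.sum_congr rfl fun i _ => by
    rw [fp_X_mul_right, fp_X_mul_right]

lemma fp_Af_mul_left (x : Fin n → ℂ) (f g : Rp n) : fp (Af x * f) g = fp f (Pop x g) := by
  have h1 : Af x * f = ∑ i : Fin n, C ((starRingEnd ℂ) (x i)) * (X (Sum.inl i) * f) := by
    rw [Af, Finset.sum_mul]
    exact Finset.sum_congr rfl fun i _ => by ring
  rw [h1, fp_sum_left, Pop, fp_sum_right]
  exact Finset.sum_congr rfl fun i _ => by
    rw [fp_C_mul_left, fp_X_mul_left, fp_C_mul_right, Complex.conj_conj]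

lemma fp_Bf_mul_left (x : Fin n → ℂ) (f g : Rp n) : fp (Bf x * f) g = fp f (Qop x g) := by
  have h1 : Bf x * f = ∑ i : Fin n, C (x i) * (X (Sum.inr i) * f) := by
    rw [Bf, Finset.sum_mul]
    exact Finset.sum_congr rfl fun i _ => by ring
  rw [h1, fp_sum_left, Qop, fp_sum_right]
  exact Finset.sum_congr rfl fun i _ => by
    rw [fp_C_mul_left, fp_X_mul_left, fp_C_mul_right]

lemma fp_SP_mul_left (f g : Rp n) : fp (SP n * f) g = fp f (lap g) := by
  have h1 : SP n * f = ∑ i : Fin n, X (Sum.inl i) * (X (Sum.inr i) * f) := by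
    rw [SP, Finset.sum_mul]
    exact Finset.sum_congr rfl fun i _ => by ring
  rw [h1, fp_sum_left, lap, fp_sum_right]
  exact Finset.sum_congr rfl fun i _ => by
    rw [fp_X_mul_left, fp_X_mul_left]

lemma fp_SP_pow_left (k : ℕ) (f g : Rp n) : fp (SP n ^ k * f) g = fp f (lap^[k] g) := by
  induction k generalizing g with
  | zero => simp
  | succ k ih =>
    rw [pow_succ', mul_assoc, fp_SP_mul_left, ih, ← Function.iterate_succ_apply]

lemma fp_Af_pow_left (x : Fin n → ℂ) (k : ℕ) (f g : Rp n) :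
    fp (Af x ^ k * f) g = fp f ((Pop x)^[k] g) := by
  induction k generalizing g with
  | zero => simp
  | succ k ih =>
    rw [pow_succ', mul_assoc, fp_Af_mul_left, ih, ← Function.iterate_succ_apply]

lemma fp_Bf_pow_left (x : Fin n → ℂ) (k : ℕ) (f g : Rp n) :
    fp (Bf x ^ k * f) g = fp f ((Qop x)^[k] g) := by
  induction k generalizing g with
  | zero => simp
  | succ k ih =>
    rw [pow_succ', mul_assoc, fp_Bf_mul_left, ih, ← Function.iterate_succ_apply]

lemma Pop_Cmul (x : Fin n → ℂ) (c : ℂ) (g : Rp n) : Pop x (C c * g) = C c * Pop x g := by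
  unfold Pop
  rw [Finset.mul_sum]
  exact Finset.sum_congr rfl fun i _ => by rw [MvPolynomial.pderiv_C_mul]; ring

lemma Qop_Cmul (x : Fin n → ℂ) (c : ℂ) (g : Rp n) : Qop x (C c * g) = C c * Qop x g := by
  unfold Qop
  rw [Finset.mul_sum]
  exact Finset.sum_congr rfl fun i _ => by rw [MvPolynomial.pderiv_C_mul]; ring

lemma Pop_AB (x y : Fin n → ℂ) (c d : ℕ) :
    Pop x (Af y ^ c * Bf y ^ d)
      = C (ip x y) * ((c : Rp n) * (Af y ^ (c-1) * Bf y ^ d)) := by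
  unfold Pop
  have key : ∀ i : Fin n, C (x i) * MvPolynomial.pderiv (Sum.inl i) (Af y ^ c * Bf y ^ d)
      = C (x i * (starRingEnd ℂ) (y i)) * ((c : Rp n) * (Af y ^ (c-1) * Bf y ^ d)) := by
    intro i
    rw [MvPolynomial.pderiv_mul, MvPolynomial.pderiv_pow, MvPolynomial.pderiv_pow,
      pd1_Af, pd1_Bf, map_mul]
    ring
  rw [Finset.sum_congr rfl fun i _ => key i, ← Finset.sum_mul, ← map_sum]
  rfl

lemma Qop_AB (x y : Fin n → ℂ) (c d : ℕ) :
    Qop x (Af y ^ c * Bf y ^ d)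
      = C ((starRingEnd ℂ) (ip x y)) * ((d : Rp n) * (Af y ^ c * Bf y ^ (d-1))) := by
  unfold Qop
  have key : ∀ i : Fin n,
      C ((starRingEnd ℂ) (x i)) * MvPolynomial.pderiv (Sum.inr i) (Af y ^ c * Bf y ^ d)
      = C ((starRingEnd ℂ) (x i) * y i) * ((d : Rp n) * (Af y ^ c * Bf y ^ (d-1))) := by
    intro i
    rw [MvPolynomial.pderiv_mul, MvPolynomial.pderiv_pow, MvPolynomial.pderiv_pow,
      pd2_Af, pd2_Bf, map_mul]
    ring
  rw [Finset.sum_congr rfl fun i _ => key i, ← Finset.sum_mul, ← map_sum]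
  have : (∑ i : Fin n, (starRingEnd ℂ) (x i) * y i) = (starRingEnd ℂ) (ip x y) := by
    rw [ip, map_sum]
    exact Finset.sum_congr rfl fun i _ => by rw [map_mul, Complex.conj_conj]
  rw [this]

lemma lap_AB (y : Fin n → ℂ) (hy : ∑ i : Fin n, (starRingEnd ℂ) (y i) * y i = 1) (c d : ℕ) :
    lap (Af y ^ c * Bf y ^ d) = ((c*d : ℕ) : Rp n) * (Af y ^ (c-1) * Bf y ^ (d-1)) := by
  have h := lap_term_clean y hy 0 c d
  simp only [pow_zero, one_mul, Nat.zero_mul, Nat.mul_zero, Nat.cast_zero, zero_mul,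
    zero_add] at h
  exact h

lemma lap_iter (y : Fin n → ℂ) (hy : ∑ i : Fin n, (starRingEnd ℂ) (y i) * y i = 1)
    (k c d : ℕ) :
    lap^[k] (Af y ^ c * Bf y ^ d)
      = C (((c.descFactorial k * d.descFactorial k : ℕ) : ℂ))
          * (Af y ^ (c-k) * Bf y ^ (d-k)) := by
  induction k with
  | zero => simp
  | succ k ih =>
    rw [Function.iterate_succ_apply', ih, lap_Cmul, lap_AB y hy]
    have e1 : c - k - 1 = c - (k+1) := by omega
    have e2 : d - k - 1 = d - (k+1) := by omega
    rw [e1, e2, ← mul_assoc, ← MvPolynomial.C_eq_coe_nat, ← map_mul]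
    congr 1
    rw [Nat.descFactorial_succ, Nat.descFactorial_succ]
    push_cast
    ring

lemma Pop_iter (x y : Fin n → ℂ) (a c d : ℕ) :
    (Pop x)^[a] (Af y ^ c * Bf y ^ d)
      = C ((c.descFactorial a : ℂ) * ip x y ^ a) * (Af y ^ (c-a) * Bf y ^ d) := by
  induction a with
  | zero => simp
  | succ a ih =>
    rw [Function.iterate_succ_apply', ih, Pop_Cmul, Pop_AB]
    have e1 : c - a - 1 = c - (a+1) := by omega
    rw [e1, ← MvPolynomial.C_eq_coe_nat, ← mul_assoc, ← map_mul, ← mul_assoc, ← map_mul]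
    congr 2
    rw [Nat.descFactorial_succ]
    push_cast
    ring

lemma Qop_iter (x y : Fin n → ℂ) (b c d : ℕ) :
    (Qop x)^[b] (Af y ^ c * Bf y ^ d)
      = C ((d.descFactorial b : ℂ) * (starRingEnd ℂ) (ip x y) ^ b)
          * (Af y ^ c * Bf y ^ (d-b)) := by
  induction b with
  | zero => simp
  | succ b ih =>
    rw [Function.iterate_succ_apply', ih, Qop_Cmul, Qop_AB]
    have e1 : d - b - 1 = d - (b+1) := by omega
    rw [e1, ← MvPolynomial.C_eq_coe_nat, ← mul_assoc, ← map_mul, ← mul_assoc, ← map_mul]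
    congr 2
    rw [Nat.descFactorial_succ]
    push_cast
    ring

lemma Pop_iter_Cmul (x : Fin n → ℂ) (k : ℕ) (c : ℂ) (g : Rp n) :
    (Pop x)^[k] (C c * g) = C c * (Pop x)^[k] g := by
  induction k generalizing g with
  | zero => simp
  | succ k ih => rw [Function.iterate_succ_apply, Function.iterate_succ_apply, Pop_Cmul, ih]

lemma Qop_iter_Cmul (x : Fin n → ℂ) (k : ℕ) (c : ℂ) (g : Rp n) :
    (Qop x)^[k] (C c * g) = C c * (Qop x)^[k] g := by
  induction k generalizing g with
  | zero => simp
  | succ k ih => rw [Function.iterate_succ_apply, Function.iterate_succ_apply, Qop_Cmul, ih]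

lemma fp_term_K (x y : Fin n → ℂ) (hy : ∑ i : Fin n, (starRingEnd ℂ) (y i) * y i = 1)
    {p q j : ℕ} (hjp : j ≤ p) (hjq : j ≤ q) :
    fp (SP n ^ j * Af x ^ (p-j) * Bf x ^ (q-j)) (Af y ^ p * Bf y ^ q)
      = ((p.descFactorial j * q.descFactorial j * (p-j).factorial * (q-j).factorial : ℕ) : ℂ)
          * ip x y ^ (p-j) * (starRingEnd ℂ) (ip x y) ^ (q-j) := by
  have h1 : SP n ^ j * Af x ^ (p-j) * Bf x ^ (q-j)
      = SP n ^ j * (Af x ^ (p-j) * (Bf x ^ (q-j) * 1)) := by ring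
  rw [h1, fp_SP_pow_left, fp_Af_pow_left, fp_Bf_pow_left, fp_one_left]
  rw [lap_iter y hy, Pop_iter_Cmul, Pop_iter, Nat.sub_self, Qop_iter_Cmul, Qop_iter_Cmul,
    Qop_iter, Nat.sub_self]
  simp only [pow_zero, one_mul, mul_one, ← map_mul, MvPolynomial.coeff_zero_C]
  rw [Nat.descFactorial_self, Nat.descFactorial_self]
  push_cast
  ring

theorem fp_FF {α p q : ℕ} (hn : n = α + 2) (x y : Fin n → ℂ)
    (hx : ∑ i : Fin n, (starRingEnd ℂ) (x i) * x i = 1)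
    (hy : ∑ i : Fin n, (starRingEnd ℂ) (y i) * y i = 1) :
    fp (Ff α p q x) (Ff α p q y)
      = ((p.factorial * q.factorial : ℕ) : ℂ) * ∑ j ∈ Finset.range (min p q + 1),
          (dc α p q j : ℂ) * ip x y ^ (p-j) * (starRingEnd ℂ) (ip x y) ^ (q-j) := by
  have expandY : Ff α p q y = ∑ j ∈ Finset.range (min p q + 1),
      C ((dc α p q j : ℂ)) * (SP n ^ j * Af y ^ (p-j) * Bf y ^ (q-j)) := rfl
  rw [expandY, fp_sum_right]
  have hT : ∀ j ∈ Finset.range (min p q + 1),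
      fp (Ff α p q x) (C ((dc α p q j : ℂ)) * (SP n ^ j * Af y ^ (p-j) * Bf y ^ (q-j)))
        = (dc α p q j : ℂ) * fp (Ff α p q x) (SP n ^ j * Af y ^ (p-j) * Bf y ^ (q-j)) :=
    fun j _ => fp_C_mul_right _ _ _
  rw [Finset.sum_congr rfl hT, Finset.sum_range_succ']
  have hvan : ∀ j, fp (Ff α p q x) (SP n ^ (j+1) * Af y ^ (p-(j+1)) * Bf y ^ (q-(j+1))) = 0 := by
    intro j
    have hsp : SP n ^ (j+1) * Af y ^ (p-(j+1)) * Bf y ^ (q-(j+1))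
        = SP n * (SP n ^ j * Af y ^ (p-(j+1)) * Bf y ^ (q-(j+1))) := by
      rw [pow_succ']; ring
    rw [hsp, fp_SP_mul_right, lap_Ff hn x hx, fp_zero_left]
  simp only [hvan, mul_zero, Finset.sum_const_zero, zero_add]
  have hT0 : SP n ^ 0 * Af y ^ (p-0) * Bf y ^ (q-0) = Af y ^ p * Bf y ^ q := by
    norm_num
  rw [hT0, dc_zero, Complex.ofReal_one, one_mul]
  have expandX : Ff α p q x = ∑ j ∈ Finset.range (min p q + 1),
      C ((dc α p q j : ℂ)) * (SP n ^ j * Af x ^ (p-j) * Bf x ^ (q-j)) := rfl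
  rw [expandX, fp_sum_left, Finset.mul_sum]
  refine Finset.sum_congr rfl ?_
  intro j hj
  rw [Finset.mem_range] at hj
  have hjp : j ≤ p := by omega
  have hjq : j ≤ q := by omega
  rw [fp_C_mul_left, fp_term_K x y hy hjp hjq, Complex.conj_ofReal]
  have efac : (p.descFactorial j * q.descFactorial j * (p-j).factorial * (q-j).factorial)
      = p.factorial * q.factorial := by
    have e1 := Nat.factorial_mul_descFactorial hjp
    have e2 := Nat.factorial_mul_descFactorial hjq
    calc p.descFactorial j * q.descFactorial j * (p-j).factorial * (q-j).factorial
        = ((p-j).factorial * p.descFactorial j) * ((q-j).factorial * q.descFactorial j) := by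
          ring
      _ = p.factorial * q.factorial := by rw [e1, e2]
  rw [efac]
  push_cast
  ring

end

section CS

variable {σ : Type*} [Fintype σ] [DecidableEq σ]

noncomputable def fpr (f : MvPolynomial σ ℂ) : ℝ :=
  ∑ m ∈ f.support, wt m * ‖f.coeff m‖^2

lemma fpr_nonneg (f : MvPolynomial σ ℂ) : 0 ≤ fpr f :=
  Finset.sum_nonneg fun m _ => mul_nonneg (wt_pos m).le (by positivity)

lemma conj_mul_self (c : ℂ) : (starRingEnd ℂ) c * c = ((‖c‖^2 : ℝ) : ℂ) := by
  rw [mul_comm, Complex.mul_conj, Complex.normSq_eq_norm_sq]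

lemma fp_self_eq (f : MvPolynomial σ ℂ) : fp f f = ((fpr f : ℝ) : ℂ) := by
  unfold fp fpr
  rw [Finset.union_self, Complex.ofReal_sum]
  refine Finset.sum_congr rfl fun m _ => ?_
  rw [mul_assoc, conj_mul_self]
  push_cast
  ring

lemma fp_cauchy (f g : MvPolynomial σ ℂ) : ‖fp f g‖^2 ≤ fpr f * fpr g := by
  classical
  set T := f.support ∪ g.support with hT
  have h1 : ‖fp f g‖ ≤ ∑ m ∈ T, wt m * (‖f.coeff m‖ * ‖g.coeff m‖) := by
    refine (norm_sum_le _ _).trans (le_of_eq (Finset.sum_congr rfl fun m _ => ?_))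
    rw [norm_mul, norm_mul]
    have h2 : ‖((wt m : ℝ) : ℂ)‖ = wt m := by
      rw [Complex.norm_real, Real.norm_eq_abs, abs_of_pos (wt_pos m)]
    rw [h2, RCLike.norm_conj, mul_assoc]
  have h2 : (∑ m ∈ T, wt m * (‖f.coeff m‖ * ‖g.coeff m‖))^2
      ≤ (∑ m ∈ T, wt m * ‖f.coeff m‖^2) * (∑ m ∈ T, wt m * ‖g.coeff m‖^2) := by
    refine Finset.sum_sq_le_sum_mul_sum_of_sq_eq_mul T ?_ ?_ ?_
    · intro m _; exact mul_nonneg (wt_pos m).le (by positivity)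
    · intro m _; exact mul_nonneg (wt_pos m).le (by positivity)
    · intro m _; ring
  have h3 : (∑ m ∈ T, wt m * ‖f.coeff m‖^2) = fpr f := by
    refine (Finset.sum_subset Finset.subset_union_left fun m _ hm => ?_).symm
    rw [MvPolynomial.notMem_support_iff.1 hm]
    simp
  have h4 : (∑ m ∈ T, wt m * ‖g.coeff m‖^2) = fpr g := by
    refine (Finset.sum_subset Finset.subset_union_right fun m _ hm => ?_).symm
    rw [MvPolynomial.notMem_support_iff.1 hm]
    simp
  calc ‖fp f g‖^2 ≤ (∑ m ∈ T, wt m * (‖f.coeff m‖ * ‖g.coeff m‖))^2 :=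
        pow_le_pow_left₀ (norm_nonneg _) h1 2
    _ ≤ _ := h2
    _ = fpr f * fpr g := by rw [h3, h4]

end CS

noncomputable section Final

/-- the unnormalized disc polynomial -/
def Wc (α p q : ℕ) (w : ℂ) : ℂ :=
  ∑ j ∈ Finset.range (min p q + 1),
    ((dc α p q j : ℝ) : ℂ) * w^(p-j) * ((starRingEnd ℂ) w)^(q-j)

def Sval (α p q : ℕ) : ℝ := ∑ j ∈ Finset.range (min p q + 1), dc α p q j

def pre (α p q : ℕ) : ℝ :=
  (ascPochhammer ℝ (p + q)).eval ((α : ℝ) + 1) /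
    ((ascPochhammer ℝ p).eval ((α : ℝ) + 1) * (ascPochhammer ℝ q).eval ((α : ℝ) + 1))

lemma coeff_eq_dc (α p q j : ℕ) :
    ((ascPochhammer ℝ j).eval (-(p : ℝ)) * (ascPochhammer ℝ j).eval (-(q : ℝ))) /
      ((ascPochhammer ℝ j).eval (-(α : ℝ) - p - q) * (j.factorial : ℝ)) = dc α p q j := by
  have e1 : (ascPochhammer ℝ j).eval (-(p : ℝ)) = (-1:ℝ)^j * (p.descFactorial j : ℝ) := by
    rw [ascPochhammer_eval_neg_eq_descPochhammer, descPochhammer_eval_eq_descFactorial]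
  have e2 : (ascPochhammer ℝ j).eval (-(q : ℝ)) = (-1:ℝ)^j * (q.descFactorial j : ℝ) := by
    rw [ascPochhammer_eval_neg_eq_descPochhammer, descPochhammer_eval_eq_descFactorial]
  have e3 : (ascPochhammer ℝ j).eval (-(α : ℝ) - p - q)
      = (-1:ℝ)^j * ((α+p+q).descFactorial j : ℝ) := by
    have h : -(α : ℝ) - p - q = -(((α+p+q : ℕ)) : ℝ) := by push_cast; ring
    rw [h, ascPochhammer_eval_neg_eq_descPochhammer, descPochhammer_eval_eq_descFactorial]
  rw [e1, e2, e3]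
  unfold dc
  rcases Nat.even_or_odd j with he | ho
  · rw [he.neg_one_pow]
    ring_nf
  · rw [ho.neg_one_pow]
    have key : ∀ P Q A F : ℝ, ((-1) * P) * ((-1) * Q) / (((-1) * A) * F)
        = (-1) * P * Q / (A * F) := by
      intro P Q A F
      rw [show ((-1:ℝ) * P) * ((-1) * Q) = P * Q by ring,
        show ((-1:ℝ) * A) * F = -(A*F) by ring, div_neg,
        show (-1:ℝ) * P * Q = -(P*Q) by ring, neg_div]
    exact key _ _ _ _

lemma discW_eq (α p q : ℕ) (w : ℂ) :
    discW α p q w = ((pre α p q : ℝ) : ℂ) * Wc α p q w := by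
  unfold discW Wc pre
  congr 1
  refine Finset.sum_congr rfl fun j _ => ?_
  rw [coeff_eq_dc]

lemma pre_pos (α p q : ℕ) : 0 < pre α p q := by
  have h : (0:ℝ) < (α : ℝ) + 1 := by positivity
  exact div_pos (ascPochhammer_pos _ _ h)
    (mul_pos (ascPochhammer_pos _ _ h) (ascPochhammer_pos _ _ h))

lemma fact_ne (k : ℕ) : ((k.factorial : ℝ)) ≠ 0 := by
  exact_mod_cast k.factorial_ne_zero

lemma pre_eq (α p q : ℕ) : pre α p q
    = ((α+p+q).factorial : ℝ) * (α.factorial : ℝ)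
      / (((α+p).factorial : ℝ) * ((α+q).factorial : ℝ)) := by
  have key : ∀ k : ℕ, (ascPochhammer ℝ k).eval ((α : ℝ) + 1)
      = ((α+k).factorial : ℝ) / (α.factorial : ℝ) := by
    intro k
    rw [eq_div_iff (fact_ne α), mul_comm]
    exact_mod_cast factorial_mul_ascPochhammer ℝ α k
  unfold pre
  rw [key, key, key]
  have h1 : α + (p + q) = α + p + q := by ring
  rw [h1]
  field_simp

lemma dc_term_eq (α p q j : ℕ) (hjp : j ≤ p) (hjq : j ≤ q) :
    dc α p q j = ((-1:ℝ))^j * (p.choose j : ℝ) * ((α+p+q-j).choose (q-j) : ℝ)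
      * ((q.factorial : ℝ) * ((α+p).factorial : ℝ) / ((α+p+q).factorial : ℝ)) := by
  have f1 : (p.descFactorial j : ℝ) = (j.factorial : ℝ) * (p.choose j : ℝ) := by
    exact_mod_cast Nat.descFactorial_eq_factorial_mul_choose p j
  have f2 : (q.descFactorial j : ℝ) = (j.factorial : ℝ) * (q.choose j : ℝ) := by
    exact_mod_cast Nat.descFactorial_eq_factorial_mul_choose q j
  have hAdF : ((α+p+q).descFactorial j : ℝ)
      = ((α+p+q).factorial : ℝ) / ((α+p+q-j).factorial : ℝ) := by
    rw [eq_div_iff (fact_ne _)]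
    have h := Nat.factorial_mul_descFactorial (show j ≤ α+p+q by omega)
    have h2 : (α+p+q).descFactorial j * (α+p+q-j).factorial = (α+p+q).factorial := by
      rw [mul_comm]; exact h
    exact_mod_cast h2
  have hsub : α+p+q-j - (q-j) = α+p := by omega
  have hChoose : ((α+p+q-j).choose (q-j) : ℝ)
      = ((α+p+q-j).factorial : ℝ) / (((q-j).factorial : ℝ) * ((α+p).factorial : ℝ)) := by
    rw [eq_div_iff (mul_ne_zero (fact_ne _) (fact_ne _))]
    have h := Nat.choose_mul_factorial_mul_factorial (show q-j ≤ α+p+q-j by omega)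
    rw [hsub] at h
    exact_mod_cast by push_cast [← h]; ring
  have hCq : (q.choose j : ℝ) = (q.factorial : ℝ)
      / ((j.factorial : ℝ) * ((q-j).factorial : ℝ)) := by
    rw [eq_div_iff (mul_ne_zero (fact_ne _) (fact_ne _))]
    exact_mod_cast by
      have h := Nat.choose_mul_factorial_mul_factorial hjq
      push_cast [← h]; ring
  unfold dc
  rw [f1, f2, hAdF, hChoose, hCq]
  have n1 := fact_ne j
  have n2 := fact_ne (q-j)
  have n3 := fact_ne (α+p+q-j)
  have n4 := fact_ne (α+p+q)
  have n5 := fact_ne (α+p)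
  field_simp

lemma binom_sum (α p q : ℕ) :
    (∑ j ∈ Finset.range (min p q + 1),
      ((-1:ℝ))^j * (p.choose j : ℝ) * ((α+p+q-j).choose (q-j) : ℝ))
      = ((α+q).choose q : ℝ) := by
  -- polynomial identity
  have hpoly : ((1 + Polynomial.X : Polynomial ℝ))^(α+q)
      = ∑ j ∈ Finset.range (p+1),
          Polynomial.C (((-1:ℝ))^j * (p.choose j : ℝ)) * ((1 + Polynomial.X)^(α+p+q-j) * Polynomial.X^j) := by
    have h1 : ((-Polynomial.X + (1 + Polynomial.X) : Polynomial ℝ))^p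
        = ∑ j ∈ Finset.range (p+1),
            (-Polynomial.X)^j * (1 + Polynomial.X)^(p-j) * ((p.choose j : ℕ) : Polynomial ℝ) := add_pow _ _ p
    have h2 : ((-Polynomial.X + (1 + Polynomial.X) : Polynomial ℝ)) = 1 := by ring
    rw [h2, one_pow] at h1
    calc ((1 + Polynomial.X : Polynomial ℝ))^(α+q)
        = (∑ j ∈ Finset.range (p+1),
            (-Polynomial.X)^j * (1 + Polynomial.X)^(p-j) * ((p.choose j : ℕ) : Polynomial ℝ))
            * (1 + Polynomial.X)^(α+q) := by rw [← h1, one_mul]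
      _ = _ := by
          rw [Finset.sum_mul]
          refine Finset.sum_congr rfl fun j hj => ?_
          rw [Finset.mem_range] at hj
          have e1 : (1 + Polynomial.X : Polynomial ℝ)^(p-j) * (1 + Polynomial.X)^(α+q) = (1+Polynomial.X)^(α+p+q-j) := by
            rw [← pow_add]
            congr 1
            omega
          have e2 : (-Polynomial.X : Polynomial ℝ)^j = Polynomial.C ((-1:ℝ)^j) * Polynomial.X^j := by
            rw [neg_pow]
            congr 1
            rw [map_pow, map_neg, map_one]
          have e3 : ((p.choose j : ℕ) : Polynomial ℝ) = Polynomial.C ((p.choose j : ℝ)) := by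
            rw [map_natCast]
          calc (-Polynomial.X : Polynomial ℝ)^j * (1 + Polynomial.X)^(p-j) * ((p.choose j : ℕ) : Polynomial ℝ)
                * (1 + Polynomial.X)^(α+q)
              = ((-Polynomial.X)^j * ((p.choose j : ℕ) : Polynomial ℝ))
                  * ((1 + Polynomial.X)^(p-j) * (1 + Polynomial.X)^(α+q)) := by ring
            _ = _ := by
                rw [e1, e2, e3, map_mul]
                ring
  -- take coefficient q
  have hc := congrArg (fun f : Polynomial ℝ => f.coeff q) hpoly
  simp only [Polynomial.finset_sum_coeff] at hc
  rw [add_comm (1 : Polynomial ℝ) Polynomial.X, Polynomial.coeff_X_add_one_pow] at hc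
  have hterm : ∀ j ∈ Finset.range (p+1),
      (Polynomial.C (((-1:ℝ))^j * (p.choose j : ℝ)) * ((Polynomial.X + 1)^(α+p+q-j) * Polynomial.X^j)).coeff q
      = if j ≤ q then ((-1:ℝ))^j * (p.choose j : ℝ) * ((α+p+q-j).choose (q-j) : ℝ) else 0 := by
    intro j _
    rw [Polynomial.coeff_C_mul, Polynomial.coeff_mul_X_pow']
    by_cases h : j ≤ q
    · rw [if_pos h, if_pos h, Polynomial.coeff_X_add_one_pow]
    · rw [if_neg h, if_neg h, mul_zero]
  rw [Finset.sum_congr rfl hterm, ← Finset.sum_filter] at hc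
  have hset : (Finset.range (p+1)).filter (fun j => j ≤ q) = Finset.range (min p q + 1) := by
    ext j
    simp only [Finset.mem_filter, Finset.mem_range]
    omega
  rw [hset] at hc
  exact hc.symm

lemma pre_mul_S (α p q : ℕ) : pre α p q * Sval α p q = 1 := by
  have hterm : ∀ j ∈ Finset.range (min p q + 1),
      dc α p q j = ((-1:ℝ))^j * (p.choose j : ℝ) * ((α+p+q-j).choose (q-j) : ℝ)
        * ((q.factorial : ℝ) * ((α+p).factorial : ℝ) / ((α+p+q).factorial : ℝ)) := by
    intro j hj
    rw [Finset.mem_range] at hj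
    exact dc_term_eq α p q j (by omega) (by omega)
  have hS : Sval α p q = ((α+q).choose q : ℝ)
      * ((q.factorial : ℝ) * ((α+p).factorial : ℝ) / ((α+p+q).factorial : ℝ)) := by
    calc Sval α p q = ∑ j ∈ Finset.range (min p q + 1),
          ((-1:ℝ))^j * (p.choose j : ℝ) * ((α+p+q-j).choose (q-j) : ℝ)
            * ((q.factorial : ℝ) * ((α+p).factorial : ℝ) / ((α+p+q).factorial : ℝ)) :=
        Finset.sum_congr rfl hterm
      _ = (∑ j ∈ Finset.range (min p q + 1),
          ((-1:ℝ))^j * (p.choose j : ℝ) * ((α+p+q-j).choose (q-j) : ℝ))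
            * ((q.factorial : ℝ) * ((α+p).factorial : ℝ) / ((α+p+q).factorial : ℝ)) := by
        rw [← Finset.sum_mul]
      _ = _ := by rw [binom_sum]
  rw [hS, pre_eq]
  have hcf : ((α+q).choose q : ℝ) * (q.factorial : ℝ) * (α.factorial : ℝ)
      = ((α+q).factorial : ℝ) := by
    have h := Nat.choose_mul_factorial_mul_factorial (show q ≤ α+q by omega)
    have h2 : α + q - q = α := by omega
    rw [h2] at h
    exact_mod_cast h
  have n1 := fact_ne α
  have n2 := fact_ne q
  have n3 := fact_ne (α+p)
  have n4 := fact_ne (α+q)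
  have n5 := fact_ne (α+p+q)
  field_simp
  linear_combination hcf

lemma Wc_one (α p q : ℕ) : Wc α p q 1 = ((Sval α p q : ℝ) : ℂ) := by
  unfold Wc Sval
  rw [Complex.ofReal_sum]
  refine Finset.sum_congr rfl fun j _ => ?_
  rw [map_one, one_pow, one_pow, mul_one, mul_one]

lemma norm_Wc_le (α p q : ℕ) (w : ℂ) (hw : ‖w‖ ≤ 1) :
    ‖Wc α p q w‖ ≤ Sval α p q := by
  have hs2 : (0:ℝ) ≤ 1 - ‖w‖^2 := by nlinarith [norm_nonneg w]
  set s : ℝ := Real.sqrt (1 - ‖w‖^2) with hs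
  have hssq : s^2 = 1 - ‖w‖^2 := Real.sq_sqrt hs2
  set xv : Fin (α+2) → ℂ := fun i => if (i : ℕ) = 0 then 1 else 0 with hxv
  set yv : Fin (α+2) → ℂ :=
    fun i => if (i : ℕ) = 0 then (starRingEnd ℂ) w else if (i : ℕ) = 1 then (s:ℂ) else 0 with hyv
  have hxval : ∀ i : Fin (α+2), (starRingEnd ℂ) (xv i) * xv i
      = if i = 0 then 1 else 0 := by
    intro i
    by_cases h : i = 0
    · subst h; simp [hxv]
    · have h2 : (i : ℕ) ≠ 0 := fun hh => h (Fin.ext hh)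
      simp [hxv, h2, h]
  have hx : ∑ i : Fin (α+2), (starRingEnd ℂ) (xv i) * xv i = 1 := by
    rw [Finset.sum_congr rfl fun i _ => hxval i]
    simp
  have hyval0 : yv 0 = (starRingEnd ℂ) w := by simp [hyv]
  have hyval1 : yv 1 = (s:ℂ) := by
    have h1 : ((1 : Fin (α+2)) : ℕ) = 1 := rfl
    simp [hyv, h1]
  have hyvals : ∀ i : Fin α, yv (i.succ.succ) = 0 := by
    intro i
    have h1 : ((i.succ.succ : Fin (α+2)) : ℕ) = (i : ℕ) + 2 := by
      simp [Fin.val_succ]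
    simp [hyv, h1]
  have hy : ∑ i : Fin (α+2), (starRingEnd ℂ) (yv i) * yv i = 1 := by
    rw [Fin.sum_univ_succ, Fin.sum_univ_succ]
    rw [Fin.succ_zero_eq_one, hyval0, hyval1]
    have htail : ∀ i : Fin α, (starRingEnd ℂ) (yv i.succ.succ) * yv i.succ.succ = 0 := by
      intro i; rw [hyvals]; simp
    rw [Finset.sum_congr rfl fun i _ => htail i]
    rw [Complex.conj_conj]
    have h1 : (starRingEnd ℂ) ((s:ℝ):ℂ) * ((s:ℝ):ℂ) = ((s^2 : ℝ) : ℂ) := by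
      rw [Complex.conj_ofReal]
      push_cast; ring
    rw [h1, hssq]
    have h2 : w * (starRingEnd ℂ) w = ((‖w‖^2 : ℝ) : ℂ) := by
      rw [Complex.mul_conj, Complex.normSq_eq_norm_sq]
    rw [h2]
    rw [Finset.sum_const_zero, add_zero, ← Complex.ofReal_add]
    norm_num
  have hipxy : ip xv yv = w := by
    unfold ip
    have key : ∀ i : Fin (α+2), xv i * (starRingEnd ℂ) (yv i) = if i = 0 then w else 0 := by
      intro i
      by_cases h : i = 0
      · subst h
        simp [hxv, hyval0]
      · have h2 : (i : ℕ) ≠ 0 := fun hh => h (Fin.ext hh)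
        simp [hxv, h2, h]
    rw [Finset.sum_congr rfl fun i _ => key i]
    simp
  have hipxx : ip xv xv = 1 := by
    unfold ip
    rw [Finset.sum_congr rfl fun i _ => (mul_comm (xv i) _).trans (hxval i)]
    simp
  have hipyy : ip yv yv = 1 := by
    unfold ip
    rw [Finset.sum_congr rfl fun i _ => mul_comm (yv i) ((starRingEnd ℂ) (yv i))]
    exact hy
  have main := fp_FF (α := α) (p := p) (q := q) rfl xv yv hx hy
  have selfx := fp_FF (α := α) (p := p) (q := q) rfl xv xv hx hx
  have selfy := fp_FF (α := α) (p := p) (q := q) rfl yv yv hy hy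
  rw [hipxy] at main
  rw [hipxx] at selfx
  rw [hipyy] at selfy
  have hone : ∑ j ∈ Finset.range (min p q + 1),
      (dc α p q j : ℂ) * (1:ℂ)^(p-j) * (starRingEnd ℂ) (1:ℂ)^(q-j)
      = ((Sval α p q : ℝ) : ℂ) := by
    unfold Sval
    rw [Complex.ofReal_sum]
    refine Finset.sum_congr rfl fun j _ => ?_
    rw [map_one, one_pow, one_pow, mul_one, mul_one]
  rw [hone] at selfx selfy
  have hmainW : fp (Ff α p q xv) (Ff α p q yv)
      = ((p.factorial * q.factorial : ℕ) : ℂ) * Wc α p q w := by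
    rw [main]; rfl
  set N : ℝ := ((p.factorial * q.factorial : ℕ) : ℝ) with hN
  have hNpos : (0:ℝ) < N := by
    rw [hN]; positivity
  have hfprx : fpr (Ff α p q xv) = N * Sval α p q := by
    have h1 := fp_self_eq (Ff α p q xv)
    rw [selfx] at h1
    have h2 : ((N * Sval α p q : ℝ) : ℂ) = ((fpr (Ff α p q xv) : ℝ) : ℂ) := by
      rw [← h1, hN]; push_cast; ring
    exact_mod_cast h2.symm
  have hfpry : fpr (Ff α p q yv) = N * Sval α p q := by
    have h1 := fp_self_eq (Ff α p q yv)
    rw [selfy] at h1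
    have h2 : ((N * Sval α p q : ℝ) : ℂ) = ((fpr (Ff α p q yv) : ℝ) : ℂ) := by
      rw [← h1, hN]; push_cast; ring
    exact_mod_cast h2.symm
  have hcs := fp_cauchy (Ff α p q xv) (Ff α p q yv)
  rw [hfprx, hfpry, hmainW] at hcs
  have hNS : 0 ≤ N * Sval α p q := by
    rw [← hfprx]; exact fpr_nonneg _
  have hnorm : ‖((p.factorial * q.factorial : ℕ) : ℂ) * Wc α p q w‖
      = N * ‖Wc α p q w‖ := by
    rw [norm_mul]
    congr 1
    rw [hN]
    simp
  rw [hnorm] at hcs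
  have h5 : (N * ‖Wc α p q w‖)^2 ≤ (N * Sval α p q)^2 := by
    calc (N * ‖Wc α p q w‖)^2 ≤ N * Sval α p q * (N * Sval α p q) := hcs
      _ = (N * Sval α p q)^2 := by ring
  have h6 : N * ‖Wc α p q w‖ ≤ N * Sval α p q :=
    (pow_le_pow_iff_left₀ (by positivity) hNS two_ne_zero).mp h5
  exact le_of_mul_le_mul_left h6 hNpos

theorem discW_bound' (α p q : ℕ) :
    (∀ w : ℂ, ‖w‖ ≤ 1 → ‖discW α p q w‖ ≤ 1) ∧ discW α p q 1 = 1 := by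
  constructor
  · intro w hw
    rw [discW_eq]
    rw [norm_mul, Complex.norm_real, Real.norm_eq_abs, abs_of_pos (pre_pos α p q)]
    calc pre α p q * ‖Wc α p q w‖ ≤ pre α p q * Sval α p q :=
          mul_le_mul_of_nonneg_left (norm_Wc_le α p q w hw) (pre_pos α p q).le
      _ = 1 := pre_mul_S α p q
  · rw [discW_eq, Wc_one, ← Complex.ofReal_mul, pre_mul_S]
    simp

end Final

end DiscProof

/-- Disc polynomials are bounded by 1 on the closed unit disc and equal 1 at w = 1. -/
theorem discW_bound (α p q : ℕ) :
    (∀ w : ℂ, ‖w‖ ≤ 1 → ‖discW α p q w‖ ≤ 1) ∧ discW α p q 1 = 1 := by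
  exact DiscProof.discW_bound' α p q
end

section
/- Let α ≥ 0 be an integer, p, q nonnegative integers, m = min(p,q), and define W^α_{k,j} as the disc polynomials and γ_k^{p,q} = [p! q! (α+1+p+q-2k)(α+p-k)!(α+q-k)!] / [k! α! (α+1+p+q-k)! (p-k)! (q-k)!]. Then for every w in the closed unit disc, w^p w̄^q = Σ_{k=0}^{m} γ_k^{p,q} · W^α_{p-k,q-k}(w). -/
open Finset

lemma diff_step (f : ℕ → ℝ) (n : ℕ) :
    ∑ k ∈ Finset.range (n+2), (-1:ℝ)^k * ((n+1).choose k : ℝ) * f k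
      = ∑ k ∈ Finset.range (n+1), (-1:ℝ)^k * (n.choose k : ℝ) * f k
        - ∑ k ∈ Finset.range (n+1), (-1:ℝ)^k * (n.choose k : ℝ) * f (k+1) := by
  have e1 : ∑ k ∈ Finset.range (n+2), (-1:ℝ)^k * ((n+1).choose k : ℝ) * f k
      = (∑ k ∈ Finset.range (n+1), (-1:ℝ)^(k+1) * ((n+1).choose (k+1) : ℝ) * f (k+1)) + f 0 := by
    rw [Finset.sum_range_succ']
    simp
  have e2 : ∑ k ∈ Finset.range (n+1), (-1:ℝ)^(k+1) * ((n+1).choose (k+1) : ℝ) * f (k+1)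
      = (∑ k ∈ Finset.range (n+1), -((-1:ℝ)^k * (n.choose k : ℝ) * f (k+1)))
        + ∑ k ∈ Finset.range (n+1), -((-1:ℝ)^k * (n.choose (k+1) : ℝ) * f (k+1)) := by
    rw [← Finset.sum_add_distrib]
    refine Finset.sum_congr rfl fun k _ => ?_
    rw [Nat.choose_succ_succ]
    push_cast
    ring
  have e3 : ∑ k ∈ Finset.range (n+1), -((-1:ℝ)^k * (n.choose (k+1) : ℝ) * f (k+1))
      = (∑ k ∈ Finset.range (n+1), (-1:ℝ)^k * (n.choose k : ℝ) * f k) - f 0 := by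
    have e4 : ∑ k ∈ Finset.range (n+2), (-1:ℝ)^k * (n.choose k : ℝ) * f k
        = (∑ k ∈ Finset.range (n+1), (-1:ℝ)^(k+1) * (n.choose (k+1) : ℝ) * f (k+1)) + f 0 := by
      rw [Finset.sum_range_succ']
      simp
    have e5 : ∑ k ∈ Finset.range (n+2), (-1:ℝ)^k * (n.choose k : ℝ) * f k
        = ∑ k ∈ Finset.range (n+1), (-1:ℝ)^k * (n.choose k : ℝ) * f k := by
      rw [Finset.sum_range_succ]
      simp [Nat.choose_succ_self]
    have e6 : ∑ k ∈ Finset.range (n+1), -((-1:ℝ)^k * (n.choose (k+1) : ℝ) * f (k+1))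
        = ∑ k ∈ Finset.range (n+1), (-1:ℝ)^(k+1) * (n.choose (k+1) : ℝ) * f (k+1) := by
      refine Finset.sum_congr rfl fun k _ => ?_
      ring
    rw [e6]
    have := e4.symm.trans e5
    linarith [this]
  rw [e1, e2, e3]
  have : ∑ k ∈ Finset.range (n+1), -((-1:ℝ)^k * (n.choose k : ℝ) * f (k+1))
      = -∑ k ∈ Finset.range (n+1), (-1:ℝ)^k * (n.choose k : ℝ) * f (k+1) := by
    rw [← Finset.sum_neg_distrib]
  rw [this]
  ring

lemma keyB (m : ℕ) : ∀ (n x : ℕ),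
    ∑ k ∈ Finset.range (n+1), (-1:ℝ)^k * (n.choose k : ℝ)
        * (((x+k).factorial : ℝ) / ((x+m+k).factorial : ℝ))
      = (m.ascFactorial n : ℝ) * (x.factorial : ℝ) / ((x+m+n).factorial : ℝ)
  | 0, x => by simp
  | (n+1), x => by
    rw [show n+1+1 = n+2 from rfl,
      diff_step (fun k => ((x+k).factorial : ℝ) / ((x+m+k).factorial : ℝ)) n]
    have ih1 := keyB m n x
    have ih2 := keyB m n (x+1)
    have hs : ∑ k ∈ Finset.range (n+1), (-1:ℝ)^k * (n.choose k : ℝ)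
        * (((x+(k+1)).factorial : ℝ) / ((x+m+(k+1)).factorial : ℝ))
        = ∑ k ∈ Finset.range (n+1), (-1:ℝ)^k * (n.choose k : ℝ)
        * (((x+1+k).factorial : ℝ) / ((x+1+m+k).factorial : ℝ)) := by
      refine Finset.sum_congr rfl fun k _ => ?_
      rw [show x+(k+1) = x+1+k from by omega, show x+m+(k+1) = x+1+m+k from by omega]
    rw [hs, ih1, ih2]
    have h1 : (x+1+m+n) = (x+m+n)+1 := by omega
    have h2 : (x+m+(n+1)) = (x+m+n)+1 := by omega
    rw [h1, h2, Nat.factorial_succ ((x+m+n)), Nat.ascFactorial_succ, Nat.factorial_succ x]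
    have hf : ((x+m+n).factorial : ℝ) ≠ 0 := Nat.cast_ne_zero.mpr (Nat.factorial_ne_zero _)
    have hx : ((x+m+n        :ℕ) : ℝ) + 1 ≠ 0 := by positivity
    field_simp
    push_cast
    ring

lemma keyC (j X : ℕ) :
    ∑ k ∈ Finset.range (j+1), (-1:ℝ)^k * (j.choose k : ℝ) * ((X+1+2*k : ℕ) : ℝ)
        * (((X+k).factorial : ℝ) / ((X+j+1+k).factorial : ℝ))
      = if j = 0 then 1 else 0 := by
  have hsplit : ∀ k : ℕ, (-1:ℝ)^k * (j.choose k : ℝ) * ((X+1+2*k : ℕ) : ℝ)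
        * (((X+k).factorial : ℝ) / ((X+j+1+k).factorial : ℝ))
      = (-1:ℝ)^k * (j.choose k : ℝ) * (((X+1+k).factorial : ℝ) / ((X+1+j+k).factorial : ℝ))
        + (k : ℝ) * ((-1:ℝ)^k * (j.choose k : ℝ)
            * (((X+k).factorial : ℝ) / ((X+j+1+k).factorial : ℝ))) := by
    intro k
    have h1 : ((X+1+k).factorial : ℝ) = ((X+1+k : ℕ) : ℝ) * ((X+k).factorial : ℝ) := by
      rw [show X+1+k = (X+k)+1 from by omega, Nat.factorial_succ]
      push_cast; ring
    have h2 : X+1+j+k = X+j+1+k := by omega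
    rw [h1, h2]
    push_cast
    ring
  rw [Finset.sum_congr rfl fun k _ => hsplit k, Finset.sum_add_distrib, keyB j j (X+1)]
  rcases Nat.eq_zero_or_pos j with hj | hj
  · subst hj
    rw [if_pos rfl]
    have hne : (((X+1).factorial : ℕ) : ℝ) ≠ 0 := Nat.cast_ne_zero.mpr (Nat.factorial_ne_zero _)
    simp [Finset.sum_range_one, div_self hne]
  · obtain ⟨j', rfl⟩ : ∃ j', j = j'+1 := ⟨j-1, by omega⟩
    rw [if_neg (by omega)]
    -- second sum
    have h2 : ∑ k ∈ Finset.range (j'+1+1), (k : ℝ) * ((-1:ℝ)^k * ((j'+1).choose k : ℝ)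
            * (((X+k).factorial : ℝ) / ((X+(j'+1)+1+k).factorial : ℝ)))
        = -((j'+1 : ℕ) : ℝ) * ((j'+2).ascFactorial j' * ((X+1).factorial : ℝ)
              / ((X+1+(j'+2)+j').factorial : ℝ)) := by
      rw [Finset.sum_range_succ' (fun k => (k : ℝ) * ((-1:ℝ)^k * ((j'+1).choose k : ℝ)
            * (((X+k).factorial : ℝ) / ((X+(j'+1)+1+k).factorial : ℝ)))) (j'+1)]
      rw [← keyB (j'+2) j' (X+1)]
      simp only [Nat.cast_zero, zero_mul, add_zero]
      rw [neg_mul, Finset.mul_sum, ← Finset.sum_neg_distrib]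
      refine Finset.sum_congr rfl fun k hk => ?_
      have hc : ((k:ℕ)+1 : ℝ) * (((j'+1).choose (k+1) : ℕ) : ℝ)
          = ((j'+1 : ℕ) : ℝ) * ((j'.choose k : ℕ) : ℝ) := by
        have h := congrArg (fun t : ℕ => (t : ℝ)) (Nat.add_one_mul_choose_eq j' k)
        push_cast at h ⊢
        linear_combination -h
      have harg1 : X+(k+1) = X+1+k := by omega
      have harg2 : X+(j'+1)+1+(k+1) = X+1+(j'+2)+k := by omega
      rw [harg1, harg2]
      rw [pow_succ]
      push_cast at hc ⊢
      linear_combination (-(-1:ℝ)^k * (((X+1+k).factorial : ℝ) / ((X+1+(j'+2)+k).factorial : ℝ))) * hc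
    rw [h2]
    have hnat : (j'+1).ascFactorial (j'+1) = (j'+1) * (j'+2).ascFactorial j' := by
      rw [Nat.ascFactorial_succ, ← Nat.succ_ascFactorial]
    have hden : X+1+(j'+2)+j' = X+1+(j'+1)+(j'+1) := by omega
    rw [hden, hnat]
    push_cast
    ring

lemma poch_nat (α n : ℕ) : (ascPochhammer ℝ n).eval ((α:ℝ)+1)
    = (((α+n).factorial : ℕ) : ℝ) / ((α.factorial : ℕ) : ℝ) := by
  have h0 : ((α:ℝ)+1) = (((α+1 : ℕ) : ℕ) : ℝ) := by push_cast; ring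
  rw [h0, ← ascPochhammer_eval_cast, ascPochhammer_nat_eq_ascFactorial]
  rw [eq_div_iff (Nat.cast_ne_zero.mpr (Nat.factorial_ne_zero α))]
  rw [← Nat.cast_mul, mul_comm, Nat.factorial_mul_ascFactorial]

lemma poch_neg (n i : ℕ) : (ascPochhammer ℝ i).eval (-(n:ℝ))
    = (-1:ℝ)^i * ((n.descFactorial i : ℕ) : ℝ) := by
  rw [ascPochhammer_eval_neg_eq_descPochhammer, descPochhammer_eval_eq_descFactorial]

lemma desc_cast (n i : ℕ) (h : i ≤ n) :
    ((n.descFactorial i : ℕ) : ℝ) = ((n.factorial : ℕ) : ℝ) / (((n-i).factorial : ℕ) : ℝ) := by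
  rw [eq_div_iff (Nat.cast_ne_zero.mpr (Nat.factorial_ne_zero _)), ← Nat.cast_mul, mul_comm,
    Nat.factorial_mul_descFactorial h]

lemma term_eq (α u v j l : ℕ) (hl : l ≤ j) :
    ((((j+u).factorial * (j+v).factorial * (α + 1 + (u + l) + (v + l)) * (α + (u + l)).factorial
          * (α + (v + l)).factorial : ℕ) : ℝ) /
        (((j - l).factorial * α.factorial * (α + 1 + (u + l) + (j + v)).factorial
          * (u + l).factorial * (v + l).factorial : ℕ) : ℝ))
      * ((ascPochhammer ℝ (u + l + (v + l))).eval ((α:ℝ)+1) /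
          ((ascPochhammer ℝ (u + l)).eval ((α:ℝ)+1) * (ascPochhammer ℝ (v + l)).eval ((α:ℝ)+1)))
      * (((ascPochhammer ℝ l).eval (-((u + l : ℕ):ℝ)) * (ascPochhammer ℝ l).eval (-((v + l : ℕ):ℝ))) /
          ((ascPochhammer ℝ l).eval (-(α:ℝ) - ((u + l : ℕ):ℝ) - ((v + l : ℕ):ℝ)) * (l.factorial : ℝ)))
    = (((j+u).factorial : ℝ) * ((j+v).factorial : ℝ)
          / ((u.factorial : ℝ) * (v.factorial : ℝ) * (j.factorial : ℝ)))
        * ((-1:ℝ)^l * (j.choose l : ℝ) * ((α+u+v+1+2*l : ℕ) : ℝ)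
            * (((α+u+v+l).factorial : ℝ) / ((α+u+v+j+1+l).factorial : ℝ))) := by
  rw [poch_nat α (u+l+(v+l)), poch_nat α (u+l), poch_nat α (v+l),
    poch_neg (u+l) l, poch_neg (v+l) l]
  have h3 : -(α:ℝ) - ((u+l : ℕ):ℝ) - ((v+l : ℕ):ℝ) = -(((α+(u+l)+(v+l) : ℕ) : ℕ) : ℝ) := by
    push_cast; ring
  rw [h3, poch_neg (α+(u+l)+(v+l)) l]
  have d1 := desc_cast (u+l) l (by omega)
  have d2 := desc_cast (v+l) l (by omega)
  have d3 := desc_cast (α+(u+l)+(v+l)) l (by omega)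
  rw [show u+l-l = u from by omega] at d1
  rw [show v+l-l = v from by omega] at d2
  rw [show α+(u+l)+(v+l)-l = α+u+v+l from by omega] at d3
  rw [d1, d2, d3, Nat.cast_choose ℝ hl]
  rw [show α+(u+l+(v+l)) = α+u+v+2*l from by omega,
    show α+(u+l)+(v+l) = α+u+v+2*l from by omega,
    show α+1+(u+l)+(v+l) = α+u+v+1+2*l from by omega,
    show α+1+(u+l)+(j+v) = α+u+v+j+1+l from by omega]
  have f1 : ((α.factorial : ℕ) : ℝ) ≠ 0 := Nat.cast_ne_zero.mpr (Nat.factorial_ne_zero _)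
  have f2 : ((u.factorial : ℕ) : ℝ) ≠ 0 := Nat.cast_ne_zero.mpr (Nat.factorial_ne_zero _)
  have f3 : ((v.factorial : ℕ) : ℝ) ≠ 0 := Nat.cast_ne_zero.mpr (Nat.factorial_ne_zero _)
  have f4 : ((j.factorial : ℕ) : ℝ) ≠ 0 := Nat.cast_ne_zero.mpr (Nat.factorial_ne_zero _)
  have f5 : ((l.factorial : ℕ) : ℝ) ≠ 0 := Nat.cast_ne_zero.mpr (Nat.factorial_ne_zero _)
  have f6 : (((j-l).factorial : ℕ) : ℝ) ≠ 0 := Nat.cast_ne_zero.mpr (Nat.factorial_ne_zero _)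
  have f7 : (((u+l).factorial : ℕ) : ℝ) ≠ 0 := Nat.cast_ne_zero.mpr (Nat.factorial_ne_zero _)
  have f8 : (((v+l).factorial : ℕ) : ℝ) ≠ 0 := Nat.cast_ne_zero.mpr (Nat.factorial_ne_zero _)
  have f9 : (((α+(u+l)).factorial : ℕ) : ℝ) ≠ 0 := Nat.cast_ne_zero.mpr (Nat.factorial_ne_zero _)
  have f10 : (((α+(v+l)).factorial : ℕ) : ℝ) ≠ 0 := Nat.cast_ne_zero.mpr (Nat.factorial_ne_zero _)
  have f11 : (((α+u+v+l).factorial : ℕ) : ℝ) ≠ 0 := Nat.cast_ne_zero.mpr (Nat.factorial_ne_zero _)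
  have f12 : (((α+u+v+2*l).factorial : ℕ) : ℝ) ≠ 0 := Nat.cast_ne_zero.mpr (Nat.factorial_ne_zero _)
  have f13 : (((α+u+v+j+1+l).factorial : ℕ) : ℝ) ≠ 0 := Nat.cast_ne_zero.mpr (Nat.factorial_ne_zero _)
  have f14 : ((-1:ℝ))^l ≠ 0 := pow_ne_zero _ (by norm_num)
  push_cast
  field_simp

lemma coeff_lemma (α u v j : ℕ) :
    ∑ l ∈ Finset.range (j+1),
      ((((j+u).factorial * (j+v).factorial * (α + 1 + (u + l) + (v + l)) * (α + (u + l)).factorial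
            * (α + (v + l)).factorial : ℕ) : ℝ) /
          (((j - l).factorial * α.factorial * (α + 1 + (u + l) + (j + v)).factorial
            * (u + l).factorial * (v + l).factorial : ℕ) : ℝ))
        * ((ascPochhammer ℝ (u + l + (v + l))).eval ((α:ℝ)+1) /
            ((ascPochhammer ℝ (u + l)).eval ((α:ℝ)+1) * (ascPochhammer ℝ (v + l)).eval ((α:ℝ)+1)))
        * (((ascPochhammer ℝ l).eval (-((u + l : ℕ):ℝ)) * (ascPochhammer ℝ l).eval (-((v + l : ℕ):ℝ))) /
            ((ascPochhammer ℝ l).eval (-(α:ℝ) - ((u + l : ℕ):ℝ) - ((v + l : ℕ):ℝ)) * (l.factorial : ℝ)))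
    = if j = 0 then 1 else 0 := by
  rw [Finset.sum_congr rfl fun l hl => term_eq α u v j l (by
    simp only [Finset.mem_range] at hl; omega)]
  rw [← Finset.mul_sum, keyC j (α+u+v)]
  split_ifs with h
  · subst h
    have f2 : ((u.factorial : ℕ) : ℝ) ≠ 0 := Nat.cast_ne_zero.mpr (Nat.factorial_ne_zero _)
    have f3 : ((v.factorial : ℕ) : ℝ) ≠ 0 := Nat.cast_ne_zero.mpr (Nat.factorial_ne_zero _)
    simp only [Nat.zero_add, Nat.factorial_zero, Nat.cast_one, mul_one]
    field_simp
  · exact mul_zero _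

/-- Expansion of the monomial w^p w̄^q into disc polynomials. -/
theorem monomial_disc_expansion (α p q : ℕ) (w : ℂ) (hw : ‖w‖ ≤ 1) :
    w ^ p * ((starRingEnd ℂ) w) ^ q =
      ∑ k ∈ Finset.range (min p q + 1),
        ((((p.factorial * q.factorial * (α + 1 + (p - k) + (q - k)) *
              (α + (p - k)).factorial * (α + (q - k)).factorial : ℕ) : ℝ) /
            ((k.factorial * α.factorial * (α + 1 + (p - k) + q).factorial *
              (p - k).factorial * (q - k).factorial : ℕ) : ℝ) : ℝ) : ℂ) *
          discW α (p - k) (q - k) w := by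
  symm
  have step1 : ∀ k ∈ Finset.range (min p q + 1),
      ((((p.factorial * q.factorial * (α + 1 + (p - k) + (q - k)) *
              (α + (p - k)).factorial * (α + (q - k)).factorial : ℕ) : ℝ) /
            ((k.factorial * α.factorial * (α + 1 + (p - k) + q).factorial *
              (p - k).factorial * (q - k).factorial : ℕ) : ℝ) : ℝ) : ℂ) *
          discW α (p - k) (q - k) w
      = ∑ i ∈ Finset.range (min p q + 1 - k),
          (((((p.factorial * q.factorial * (α + 1 + (p - k) + (q - k)) *
                (α + (p - k)).factorial * (α + (q - k)).factorial : ℕ) : ℝ) /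
              ((k.factorial * α.factorial * (α + 1 + (p - k) + q).factorial *
                (p - k).factorial * (q - k).factorial : ℕ) : ℝ))
            * ((ascPochhammer ℝ (p - k + (q - k))).eval ((α:ℝ)+1) /
                ((ascPochhammer ℝ (p - k)).eval ((α:ℝ)+1) * (ascPochhammer ℝ (q - k)).eval ((α:ℝ)+1)))
            * (((ascPochhammer ℝ i).eval (-((p - k : ℕ):ℝ)) * (ascPochhammer ℝ i).eval (-((q - k : ℕ):ℝ))) /
                ((ascPochhammer ℝ i).eval (-(α:ℝ) - ((p - k : ℕ):ℝ) - ((q - k : ℕ):ℝ)) * (i.factorial : ℝ))) : ℝ) : ℂ)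
          * (w ^ (p - (k + i)) * ((starRingEnd ℂ) w) ^ (q - (k + i))) := by
    intro k hk
    simp only [Finset.mem_range] at hk
    simp only [discW]
    rw [show min (p-k) (q-k) + 1 = min p q + 1 - k from by omega]
    rw [Finset.mul_sum, Finset.mul_sum]
    refine Finset.sum_congr rfl fun i hi => ?_
    rw [show p - (k + i) = p - k - i from by omega, show q - (k + i) = q - k - i from by omega]
    push_cast
    ring
  rw [Finset.sum_congr rfl step1]
  rw [(Finset.sum_range_diag_flip (min p q + 1) (fun k i =>
      (((((p.factorial * q.factorial * (α + 1 + (p - k) + (q - k)) *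
                (α + (p - k)).factorial * (α + (q - k)).factorial : ℕ) : ℝ) /
              ((k.factorial * α.factorial * (α + 1 + (p - k) + q).factorial *
                (p - k).factorial * (q - k).factorial : ℕ) : ℝ))
            * ((ascPochhammer ℝ (p - k + (q - k))).eval ((α:ℝ)+1) /
                ((ascPochhammer ℝ (p - k)).eval ((α:ℝ)+1) * (ascPochhammer ℝ (q - k)).eval ((α:ℝ)+1)))
            * (((ascPochhammer ℝ i).eval (-((p - k : ℕ):ℝ)) * (ascPochhammer ℝ i).eval (-((q - k : ℕ):ℝ))) /
                ((ascPochhammer ℝ i).eval (-(α:ℝ) - ((p - k : ℕ):ℝ) - ((q - k : ℕ):ℝ)) * (i.factorial : ℝ))) : ℝ) : ℂ)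
          * (w ^ (p - (k + i)) * ((starRingEnd ℂ) w) ^ (q - (k + i))))).symm]
  have inner : ∀ j ∈ Finset.range (min p q + 1),
      ∑ k ∈ Finset.range (j + 1),
        (((((p.factorial * q.factorial * (α + 1 + (p - k) + (q - k)) *
                (α + (p - k)).factorial * (α + (q - k)).factorial : ℕ) : ℝ) /
              ((k.factorial * α.factorial * (α + 1 + (p - k) + q).factorial *
                (p - k).factorial * (q - k).factorial : ℕ) : ℝ))
            * ((ascPochhammer ℝ (p - k + (q - k))).eval ((α:ℝ)+1) /
                ((ascPochhammer ℝ (p - k)).eval ((α:ℝ)+1) * (ascPochhammer ℝ (q - k)).eval ((α:ℝ)+1)))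
            * (((ascPochhammer ℝ (j - k)).eval (-((p - k : ℕ):ℝ)) * (ascPochhammer ℝ (j - k)).eval (-((q - k : ℕ):ℝ))) /
                ((ascPochhammer ℝ (j - k)).eval (-(α:ℝ) - ((p - k : ℕ):ℝ) - ((q - k : ℕ):ℝ)) * ((j - k).factorial : ℝ))) : ℝ) : ℂ)
          * (w ^ (p - (k + (j - k))) * ((starRingEnd ℂ) w) ^ (q - (k + (j - k))))
      = (if j = 0 then (1:ℂ) else 0) * (w ^ (p - j) * ((starRingEnd ℂ) w) ^ (q - j)) := by
    intro j hj
    simp only [Finset.mem_range] at hj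
    have hexp : ∀ k ∈ Finset.range (j + 1), k + (j - k) = j := by
      intro k hk
      simp only [Finset.mem_range] at hk
      omega
    rw [Finset.sum_congr rfl fun k hk => by rw [hexp k hk]]
    rw [← Finset.sum_mul]
    congr 1
    rw [← Complex.ofReal_sum]
    have hjp : j ≤ p := le_trans (by omega) (Nat.min_le_left p q)
    have hjq : j ≤ q := le_trans (by omega) (Nat.min_le_right p q)
    obtain ⟨u, rfl⟩ := Nat.exists_eq_add_of_le hjp
    obtain ⟨v, rfl⟩ := Nat.exists_eq_add_of_le hjq
    have hreal : ∑ k ∈ Finset.range (j + 1),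
        ((((j+u).factorial * (j+v).factorial * (α + 1 + ((j+u) - k) + ((j+v) - k)) *
                (α + ((j+u) - k)).factorial * (α + ((j+v) - k)).factorial : ℕ) : ℝ) /
              ((k.factorial * α.factorial * (α + 1 + ((j+u) - k) + (j+v)).factorial *
                ((j+u) - k).factorial * ((j+v) - k).factorial : ℕ) : ℝ))
            * ((ascPochhammer ℝ ((j+u) - k + ((j+v) - k))).eval ((α:ℝ)+1) /
                ((ascPochhammer ℝ ((j+u) - k)).eval ((α:ℝ)+1) * (ascPochhammer ℝ ((j+v) - k)).eval ((α:ℝ)+1)))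
            * (((ascPochhammer ℝ (j - k)).eval (-(((j+u) - k : ℕ):ℝ)) * (ascPochhammer ℝ (j - k)).eval (-(((j+v) - k : ℕ):ℝ))) /
                ((ascPochhammer ℝ (j - k)).eval (-(α:ℝ) - (((j+u) - k : ℕ):ℝ) - (((j+v) - k : ℕ):ℝ)) * ((j - k).factorial : ℝ)))
        = if j = 0 then (1:ℝ) else 0 := by
      rw [← Finset.sum_range_reflect]
      rw [← coeff_lemma α u v j]
      refine Finset.sum_congr rfl fun l hl => ?_
      simp only [Finset.mem_range] at hl
      rw [show j + 1 - 1 - l = j - l from by omega,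
        show j - (j - l) = l from by omega,
        show (j + u) - (j - l) = u + l from by omega,
        show (j + v) - (j - l) = v + l from by omega]
    rw [hreal]
    split_ifs <;> simp
  rw [Finset.sum_congr rfl inner]
  rw [Finset.sum_range_succ' (fun j => (if j = 0 then (1:ℂ) else 0) *
      (w ^ (p - j) * ((starRingEnd ℂ) w) ^ (q - j))) (min p q)]
  simp
end

section
/- Let n ≥ 2, α = n-2, p, q nonnegative integers with m = min(p,q), and define β_k^{(p,q)}(j) = (-1)^j (n-1+p+q-2k)(n-2+p+q-2k-j)! / [4^{k+j} k! j! (n-1+p+q-k)!]. For the polynomial P(z,z̄) = (z|η)^p (z̄|η̄)^q on ℂⁿ (η a fixed unit vector) and h_k(P) = Σ_{j=0}^{m-k} β_k^{(p,q)}(j) |z|^{2j} Δ^{k+j} P, each h_k(P) is a harmonic polynomial and P = Σ_{k=0}^{m} |z|^{2k} h_k(P). -/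
/-- The Wirtinger derivative ∂/∂z_j on functions of n complex variables. -/
noncomputable def wD {n : ℕ} (j : Fin n) (f : (Fin n → ℂ) → ℂ) : (Fin n → ℂ) → ℂ :=
  fun z => (1 / 2) * (fderiv ℝ f z (Pi.single j 1) - Complex.I * fderiv ℝ f z (Pi.single j Complex.I))

/-- The Wirtinger derivative ∂/∂z̄_j on functions of n complex variables. -/
noncomputable def wDBar {n : ℕ} (j : Fin n) (f : (Fin n → ℂ) → ℂ) : (Fin n → ℂ) → ℂ :=
  fun z => (1 / 2) * (fderiv ℝ f z (Pi.single j 1) + Complex.I * fderiv ℝ f z (Pi.single j Complex.I))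

/-- The Euclidean Laplacian on ℝ^{2n} ≅ ℂⁿ in complex coordinates: Δ = 4 Σ_j ∂²/∂z_j∂z̄_j. -/
noncomputable def cLap {n : ℕ} (f : (Fin n → ℂ) → ℂ) : (Fin n → ℂ) → ℂ :=
  fun z => 4 * ∑ j : Fin n, wD j (wDBar j f) z

/-- The zonal bihomogeneous polynomial P(z,z̄) = (z|η)^p (z|η)̄^q. -/
noncomputable def Ppoly (n p q : ℕ) (η : Fin n → ℂ) : (Fin n → ℂ) → ℂ :=
  fun z => (∑ j, z j * (starRingEnd ℂ) (η j)) ^ p *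
    ((starRingEnd ℂ) (∑ j, z j * (starRingEnd ℂ) (η j))) ^ q

/-- The k-th harmonic component h_k(P) = Σ_j β_k^{(p,q)}(j) |z|^{2j} Δ^{k+j} P. -/
noncomputable def hComp (n p q k : ℕ) (η : Fin n → ℂ) : (Fin n → ℂ) → ℂ :=
  fun z => ∑ j ∈ Finset.range (min p q - k + 1),
    (((-1 : ℝ) ^ j * (((n - 1 + (p + q - 2 * k)) * (n - 2 + (p + q - 2 * k - j)).factorial : ℕ) : ℝ) /
        (((4 ^ (k + j) * k.factorial * j.factorial * (n - 1 + (p + q - k)).factorial : ℕ)) : ℝ) : ℝ) : ℂ) *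
      (∑ i, z i * (starRingEnd ℂ) (z i)) ^ j * (cLap^[k + j] (Ppoly n p q η)) z

namespace CD
variable {n : ℕ}

noncomputable def sP (η : Fin n → ℂ) : (Fin n → ℂ) → ℂ := fun z => ∑ i, z i * (starRingEnd ℂ) (η i)
noncomputable def cP (η : Fin n → ℂ) : (Fin n → ℂ) → ℂ := fun z => (starRingEnd ℂ) (sP η z)
noncomputable def rP : (Fin n → ℂ) → ℂ := fun z : Fin n → ℂ => ∑ i, z i * (starRingEnd ℂ) (z i)

noncomputable def mon (η : Fin n → ℂ) (j a b : ℕ) : (Fin n → ℂ) → ℂ :=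
  fun z => rP z ^ j * (sP η z ^ a * cP η z ^ b)

noncomputable abbrev prj (i : Fin n) : (Fin n → ℂ) →L[ℝ] ℂ :=
  ContinuousLinearMap.proj (R := ℝ) (φ := fun _ : Fin n => ℂ) i

noncomputable abbrev cprj (i : Fin n) : (Fin n → ℂ) →L[ℝ] ℂ :=
  (Complex.conjCLE.toContinuousLinearMap).comp (prj i)

lemma hasFDerivAt_sP (η : Fin n → ℂ) (z : Fin n → ℂ) :
    HasFDerivAt (sP η) (∑ i, (starRingEnd ℂ) (η i) • prj i) z := by
  apply HasFDerivAt.fun_sum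
  intro i _
  exact (ContinuousLinearMap.hasFDerivAt (prj i)).mul_const _

lemma diff_sP (η : Fin n → ℂ) (z : Fin n → ℂ) : DifferentiableAt ℝ (sP η) z :=
  (hasFDerivAt_sP η z).differentiableAt

lemma fderiv_sP_apply (η : Fin n → ℂ) (z v : Fin n → ℂ) :
    fderiv ℝ (sP η) z v = ∑ i, v i * (starRingEnd ℂ) (η i) := by
  rw [(hasFDerivAt_sP η z).fderiv]
  simp [mul_comm]

lemma hasFDerivAt_cP (η : Fin n → ℂ) (z : Fin n → ℂ) :
    HasFDerivAt (cP η)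
      ((Complex.conjCLE.toContinuousLinearMap).comp (∑ i, (starRingEnd ℂ) (η i) • prj i)) z :=
  (ContinuousLinearMap.hasFDerivAt (Complex.conjCLE.toContinuousLinearMap)).comp z (hasFDerivAt_sP η z)

lemma diff_cP (η : Fin n → ℂ) (z : Fin n → ℂ) : DifferentiableAt ℝ (cP η) z :=
  (hasFDerivAt_cP η z).differentiableAt

lemma fderiv_cP_apply (η : Fin n → ℂ) (z v : Fin n → ℂ) :
    fderiv ℝ (cP η) z v = (starRingEnd ℂ) (∑ i, v i * (starRingEnd ℂ) (η i)) := by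
  rw [(hasFDerivAt_cP η z).fderiv]
  simp [mul_comm]

lemma diff_proj (i : Fin n) (z : Fin n → ℂ) : DifferentiableAt ℝ (fun z : Fin n → ℂ => z i) z :=
  (ContinuousLinearMap.hasFDerivAt (prj i)).differentiableAt

lemma fderiv_proj_apply (i : Fin n) (z v : Fin n → ℂ) :
    fderiv ℝ (fun z : Fin n → ℂ => z i) z v = v i := by
  rw [show (fun z : Fin n → ℂ => z i) = ⇑(prj i) from rfl,
    (ContinuousLinearMap.hasFDerivAt (prj i)).fderiv]
  simp

lemma diff_conj_proj (i : Fin n) (z : Fin n → ℂ) :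
    DifferentiableAt ℝ (fun z : Fin n → ℂ => (starRingEnd ℂ) (z i)) z :=
  (ContinuousLinearMap.hasFDerivAt (cprj i)).differentiableAt

lemma diff_rP (z : Fin n → ℂ) : DifferentiableAt ℝ (rP : (Fin n → ℂ) → ℂ) z := by
  apply DifferentiableAt.fun_sum
  intro i _
  exact (diff_proj i z).mul (diff_conj_proj i z)

lemma fderiv_rP_apply (z v : Fin n → ℂ) :
    fderiv ℝ (rP : (Fin n → ℂ) → ℂ) z v
      = ∑ i, (v i * (starRingEnd ℂ) (z i) + z i * (starRingEnd ℂ) (v i)) := by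
  have h : HasFDerivAt (rP : (Fin n → ℂ) → ℂ)
      (∑ i, (z i • cprj i + (starRingEnd ℂ) (z i) • prj i)) z := by
    apply HasFDerivAt.fun_sum
    intro i _
    exact (ContinuousLinearMap.hasFDerivAt (prj i)).mul (ContinuousLinearMap.hasFDerivAt (cprj i))
  rw [h.fderiv]
  simp only [ContinuousLinearMap.sum_apply, ContinuousLinearMap.add_apply,
    ContinuousLinearMap.smul_apply, ContinuousLinearMap.comp_apply,
    ContinuousLinearMap.proj_apply, Complex.conjCLE_apply, ContinuousLinearEquiv.coe_coe,
    smul_eq_mul]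
  exact Finset.sum_congr rfl fun i _ => by ring
end CD

-- Layer 2: derivation rules for wD/wDBar
variable {𝕜ι : Type*}

lemma chalf1 (x : ℂ) : (1/2 : ℂ) * ((x + Complex.I * (Complex.I * x))) = 0 := by
  rw [← mul_assoc, Complex.I_mul_I]; ring

lemma chalf2 (x : ℂ) : (1/2 : ℂ) * ((x - Complex.I * (Complex.I * x))) = x := by
  rw [← mul_assoc, Complex.I_mul_I]; ring

lemma wD_mul (i : Fin n) (f g : (Fin n → ℂ) → ℂ) (z : Fin n → ℂ)
    (hf : DifferentiableAt ℝ f z) (hg : DifferentiableAt ℝ g z) :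
    wD i (fun z => f z * g z) z = wD i f z * g z + f z * wD i g z := by
  simp only [wD, fderiv_fun_mul hf hg, ContinuousLinearMap.add_apply, ContinuousLinearMap.smul_apply,
    smul_eq_mul]
  ring

lemma wDBar_mul (i : Fin n) (f g : (Fin n → ℂ) → ℂ) (z : Fin n → ℂ)
    (hf : DifferentiableAt ℝ f z) (hg : DifferentiableAt ℝ g z) :
    wDBar i (fun z => f z * g z) z = wDBar i f z * g z + f z * wDBar i g z := by
  simp only [wDBar, fderiv_fun_mul hf hg, ContinuousLinearMap.add_apply, ContinuousLinearMap.smul_apply,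
    smul_eq_mul]
  ring

lemma wD_const_mul (i : Fin n) (c : ℂ) (g : (Fin n → ℂ) → ℂ) (z : Fin n → ℂ)
    (hg : DifferentiableAt ℝ g z) :
    wD i (fun z => c * g z) z = c * wD i g z := by
  simp only [wD, fderiv_const_mul hg c, ContinuousLinearMap.smul_apply, smul_eq_mul]
  ring

lemma wDBar_const_mul (i : Fin n) (c : ℂ) (g : (Fin n → ℂ) → ℂ) (z : Fin n → ℂ)
    (hg : DifferentiableAt ℝ g z) :
    wDBar i (fun z => c * g z) z = c * wDBar i g z := by
  simp only [wDBar, fderiv_const_mul hg c, ContinuousLinearMap.smul_apply, smul_eq_mul]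
  ring

lemma wD_sum {ι : Type*} (i : Fin n) (s : Finset ι) (f : ι → (Fin n → ℂ) → ℂ) (z : Fin n → ℂ)
    (h : ∀ j ∈ s, DifferentiableAt ℝ (f j) z) :
    wD i (fun z => ∑ j ∈ s, f j z) z = ∑ j ∈ s, wD i (f j) z := by
  simp only [wD, fderiv_fun_sum h, ContinuousLinearMap.sum_apply, Finset.mul_sum, Finset.sum_sub_distrib]
  rw [← Finset.sum_sub_distrib, Finset.mul_sum]

lemma wDBar_sum {ι : Type*} (i : Fin n) (s : Finset ι) (f : ι → (Fin n → ℂ) → ℂ) (z : Fin n → ℂ)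
    (h : ∀ j ∈ s, DifferentiableAt ℝ (f j) z) :
    wDBar i (fun z => ∑ j ∈ s, f j z) z = ∑ j ∈ s, wDBar i (f j) z := by
  simp only [wDBar, fderiv_fun_sum h, ContinuousLinearMap.sum_apply, Finset.sum_add_distrib, Finset.mul_sum]
  rw [← Finset.sum_add_distrib, Finset.mul_sum]

namespace CD

lemma wD_pow (i : Fin n) (f : (Fin n → ℂ) → ℂ) (k : ℕ) (z : Fin n → ℂ)
    (hf : ∀ w, DifferentiableAt ℝ f w) :
    wD i (fun z => f z ^ k) z = k * f z ^ (k - 1) * wD i f z := by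
  induction k generalizing z with
  | zero =>
    simp only [pow_zero, Nat.cast_zero, zero_mul]
    have : wD i (fun _ : Fin n → ℂ => (1:ℂ)) z = 0 := by
      simp [wD, fderiv_const]
    simpa using this
  | succ k ih =>
    have h1 : wD i (fun z => f z * f z ^ k) z = wD i f z * f z ^ k + f z * wD i (fun z => f z ^ k) z :=
      wD_mul i f (fun z => f z ^ k) z (hf z) ((hf z).pow k)
    have : (fun z => f z ^ (k+1)) = fun z => f z * f z ^ k := by
      funext w; rw [pow_succ']
    rw [this, h1, ih]
    rcases k with _ | k
    · simp
    · simp only [Nat.add_sub_cancel, Nat.cast_add, Nat.cast_one]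
      rw [pow_succ']
      ring_nf

lemma wDBar_pow (i : Fin n) (f : (Fin n → ℂ) → ℂ) (k : ℕ) (z : Fin n → ℂ)
    (hf : ∀ w, DifferentiableAt ℝ f w) :
    wDBar i (fun z => f z ^ k) z = k * f z ^ (k - 1) * wDBar i f z := by
  induction k generalizing z with
  | zero =>
    simp only [pow_zero, Nat.cast_zero, zero_mul]
    have : wDBar i (fun _ : Fin n → ℂ => (1:ℂ)) z = 0 := by
      simp [wDBar, fderiv_const]
    simpa using this
  | succ k ih =>
    have h1 : wDBar i (fun z => f z * f z ^ k) z
        = wDBar i f z * f z ^ k + f z * wDBar i (fun z => f z ^ k) z :=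
      wDBar_mul i f (fun z => f z ^ k) z (hf z) ((hf z).pow k)
    have : (fun z => f z ^ (k+1)) = fun z => f z * f z ^ k := by
      funext w; rw [pow_succ']
    rw [this, h1, ih]
    rcases k with _ | k
    · simp
    · simp only [Nat.add_sub_cancel, Nat.cast_add, Nat.cast_one]
      rw [pow_succ']
      ring_nf

-- base values
lemma wD_sP (η : Fin n → ℂ) (i : Fin n) (z : Fin n → ℂ) :
    wD i (sP η) z = (starRingEnd ℂ) (η i) := by
  simp only [wD, fderiv_sP_apply]
  simp only [Pi.single_apply, ite_mul, one_mul, zero_mul, Finset.sum_ite_eq', Finset.mem_univ,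
    if_true]
  exact chalf2 _

lemma wDBar_sP (η : Fin n → ℂ) (i : Fin n) (z : Fin n → ℂ) :
    wDBar i (sP η) z = 0 := by
  simp only [wDBar, fderiv_sP_apply]
  simp only [Pi.single_apply, ite_mul, one_mul, zero_mul, Finset.sum_ite_eq', Finset.mem_univ,
    if_true]
  exact chalf1 _

lemma wD_cP (η : Fin n → ℂ) (i : Fin n) (z : Fin n → ℂ) :
    wD i (cP η) z = 0 := by
  simp only [wD, fderiv_cP_apply]
  simp only [Pi.single_apply, ite_mul, one_mul, zero_mul, Finset.sum_ite_eq', Finset.mem_univ,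
    if_true, map_mul, Complex.conj_I, Complex.conj_conj]
  rw [show Complex.I * (-Complex.I * η i) = η i by
    rw [show Complex.I * (-Complex.I * η i) = -(Complex.I*Complex.I)*η i by ring, Complex.I_mul_I]; ring]
  ring

lemma wDBar_cP (η : Fin n → ℂ) (i : Fin n) (z : Fin n → ℂ) :
    wDBar i (cP η) z = η i := by
  simp only [wDBar, fderiv_cP_apply]
  simp only [Pi.single_apply, ite_mul, one_mul, zero_mul, Finset.sum_ite_eq', Finset.mem_univ,
    if_true, map_mul, Complex.conj_I, Complex.conj_conj]
  rw [show Complex.I * (-Complex.I * η i) = η i by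
    rw [show Complex.I * (-Complex.I * η i) = -(Complex.I*Complex.I)*η i by ring, Complex.I_mul_I]; ring]
  ring

lemma wD_rP (i : Fin n) (z : Fin n → ℂ) :
    wD i (rP : (Fin n → ℂ) → ℂ) z = (starRingEnd ℂ) (z i) := by
  simp only [wD, fderiv_rP_apply]
  simp only [Pi.single_apply, ite_mul, one_mul, zero_mul, mul_ite, mul_zero, mul_one,
    apply_ite (starRingEnd ℂ), map_one, map_zero, Finset.sum_add_distrib, Finset.sum_ite_eq',
    Finset.mem_univ, if_true, Complex.conj_I]
  ring_nf
  rw [Complex.I_sq]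
  ring

lemma wDBar_rP (i : Fin n) (z : Fin n → ℂ) :
    wDBar i (rP : (Fin n → ℂ) → ℂ) z = z i := by
  simp only [wDBar, fderiv_rP_apply]
  simp only [Pi.single_apply, ite_mul, one_mul, zero_mul, mul_ite, mul_zero, mul_one,
    apply_ite (starRingEnd ℂ), map_one, map_zero, Finset.sum_add_distrib, Finset.sum_ite_eq',
    Finset.mem_univ, if_true, Complex.conj_I]
  ring_nf
  rw [Complex.I_sq]
  ring

lemma wD_proj (i : Fin n) (z : Fin n → ℂ) :
    wD i (fun z : Fin n → ℂ => z i) z = 1 := by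
  simp only [wD, fderiv_proj_apply, Pi.single_eq_same]
  rw [show Complex.I * Complex.I = -1 from Complex.I_mul_I]
  norm_num
end CD

namespace CD

lemma diff_mon (η : Fin n → ℂ) (j a b : ℕ) (z : Fin n → ℂ) :
    DifferentiableAt ℝ (mon η j a b) z :=
  ((diff_rP z).pow j).mul (((diff_sP η z).pow a).mul ((diff_cP η z).pow b))

lemma wD_mon (η : Fin n → ℂ) (i : Fin n) (j a b : ℕ) (z : Fin n → ℂ) :
    wD i (mon η j a b) z
      = (j : ℂ) * (starRingEnd ℂ) (z i) * mon η (j-1) a b z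
        + (a : ℂ) * (starRingEnd ℂ) (η i) * mon η j (a-1) b z := by
  have h1 : wD i (mon η j a b) z
      = wD i (fun z => rP z ^ j) z * (sP η z ^ a * cP η z ^ b)
        + rP z ^ j * wD i (fun z => sP η z ^ a * cP η z ^ b) z :=
    wD_mul i _ _ z ((diff_rP z).pow j) (((diff_sP η z).pow a).mul ((diff_cP η z).pow b))
  have h2 : wD i (fun z => sP η z ^ a * cP η z ^ b) z
      = wD i (fun z => sP η z ^ a) z * cP η z ^ b + sP η z ^ a * wD i (fun z => cP η z ^ b) z :=
    wD_mul i _ _ z ((diff_sP η z).pow a) ((diff_cP η z).pow b)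
  rw [show mon η j a b = fun z => rP z ^ j * (sP η z ^ a * cP η z ^ b) from rfl] at *
  rw [h1, h2, wD_pow i rP j z diff_rP, wD_pow i (sP η) a z (diff_sP η),
    wD_pow i (cP η) b z (diff_cP η), wD_rP, wD_sP, wD_cP]
  show _ = (j : ℂ) * _ * (rP z ^ (j-1) * (sP η z ^ a * cP η z ^ b))
        + (a : ℂ) * _ * (rP z ^ j * (sP η z ^ (a-1) * cP η z ^ b))
  ring

lemma wDBar_mon (η : Fin n → ℂ) (i : Fin n) (j a b : ℕ) (z : Fin n → ℂ) :
    wDBar i (mon η j a b) z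
      = (j : ℂ) * z i * mon η (j-1) a b z
        + (b : ℂ) * η i * mon η j a (b-1) z := by
  have h1 : wDBar i (mon η j a b) z
      = wDBar i (fun z => rP z ^ j) z * (sP η z ^ a * cP η z ^ b)
        + rP z ^ j * wDBar i (fun z => sP η z ^ a * cP η z ^ b) z :=
    wDBar_mul i _ _ z ((diff_rP z).pow j) (((diff_sP η z).pow a).mul ((diff_cP η z).pow b))
  have h2 : wDBar i (fun z => sP η z ^ a * cP η z ^ b) z
      = wDBar i (fun z => sP η z ^ a) z * cP η z ^ b + sP η z ^ a * wDBar i (fun z => cP η z ^ b) z :=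
    wDBar_mul i _ _ z ((diff_sP η z).pow a) ((diff_cP η z).pow b)
  rw [show mon η j a b = fun z => rP z ^ j * (sP η z ^ a * cP η z ^ b) from rfl] at *
  rw [h1, h2, wDBar_pow i rP j z diff_rP, wDBar_pow i (sP η) a z (diff_sP η),
    wDBar_pow i (cP η) b z (diff_cP η), wDBar_rP, wDBar_sP, wDBar_cP]
  show _ = (j : ℂ) * _ * (rP z ^ (j-1) * (sP η z ^ a * cP η z ^ b))
        + (b : ℂ) * _ * (rP z ^ j * (sP η z ^ a * cP η z ^ (b-1)))
  ring

lemma rP_mul_mon (η : Fin n → ℂ) (e a b : ℕ) (z : Fin n → ℂ) :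
    rP z * mon η e a b z = mon η (e+1) a b z := by
  show rP z * (rP z ^ e * _) = rP z ^ (e+1) * _
  rw [pow_succ]; ring

lemma sP_mul_mon (η : Fin n → ℂ) (e a b : ℕ) (z : Fin n → ℂ) :
    sP η z * mon η e a b z = mon η e (a+1) b z := by
  show sP η z * (_ * (sP η z ^ a * _)) = _ * (sP η z ^ (a+1) * _)
  rw [pow_succ]; ring

lemma cP_mul_mon (η : Fin n → ℂ) (e a b : ℕ) (z : Fin n → ℂ) :
    cP η z * mon η e a b z = mon η e a (b+1) z := by
  show cP η z * (_ * (_ * cP η z ^ b)) = _ * (_ * cP η z ^ (b+1))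
  rw [pow_succ]; ring

lemma cP_eq_sum (η : Fin n → ℂ) (z : Fin n → ℂ) :
    cP η z = ∑ i, η i * (starRingEnd ℂ) (z i) := by
  simp only [cP, sP, map_sum, map_mul, Complex.conj_conj]
  exact Finset.sum_congr rfl fun i _ => mul_comm _ _

end CD

namespace CD

lemma inner_sum (η : Fin n → ℂ) (hη : ∑ i, η i * (starRingEnd ℂ) (η i) = 1)
    (j a b : ℕ) (z : Fin n → ℂ) :
    ∑ i, ((j : ℂ) * (mon η (j-1) a b z
            + z i * (((j-1 : ℕ) : ℂ) * (starRingEnd ℂ) (z i) * mon η (j-1-1) a b z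
                + (a : ℂ) * (starRingEnd ℂ) (η i) * mon η (j-1) (a-1) b z))
        + (b : ℂ) * η i * ((j : ℂ) * (starRingEnd ℂ) (z i) * mon η (j-1) a (b-1) z
                + (a : ℂ) * (starRingEnd ℂ) (η i) * mon η j (a-1) (b-1) z))
      = (j : ℂ) * ((n : ℂ) + (j : ℂ) - 1 + (a : ℂ) + (b : ℂ)) * mon η (j-1) a b z
        + (a : ℂ) * (b : ℂ) * mon η j (a-1) (b-1) z := by
  have expand : ∀ i : Fin n,
      ((j : ℂ) * (mon η (j-1) a b z
            + z i * (((j-1 : ℕ) : ℂ) * (starRingEnd ℂ) (z i) * mon η (j-1-1) a b z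
                + (a : ℂ) * (starRingEnd ℂ) (η i) * mon η (j-1) (a-1) b z))
        + (b : ℂ) * η i * ((j : ℂ) * (starRingEnd ℂ) (z i) * mon η (j-1) a (b-1) z
                + (a : ℂ) * (starRingEnd ℂ) (η i) * mon η j (a-1) (b-1) z))
      = ((j : ℂ) * mon η (j-1) a b z)
        + ((j : ℂ) * ((j-1 : ℕ) : ℂ) * mon η (j-1-1) a b z) * (z i * (starRingEnd ℂ) (z i))
        + ((j : ℂ) * (a : ℂ) * mon η (j-1) (a-1) b z) * (z i * (starRingEnd ℂ) (η i))
        + ((b : ℂ) * (j : ℂ) * mon η (j-1) a (b-1) z) * (η i * (starRingEnd ℂ) (z i))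
        + ((b : ℂ) * (a : ℂ) * mon η j (a-1) (b-1) z) * (η i * (starRingEnd ℂ) (η i)) :=
    fun i => by ring
  rw [Finset.sum_congr rfl fun i _ => expand i]
  simp only [Finset.sum_add_distrib, ← Finset.mul_sum, Finset.sum_const, Finset.card_univ,
    Fintype.card_fin, nsmul_eq_mul, hη, mul_one]
  rw [show (∑ i, z i * (starRingEnd ℂ) (z i)) = rP z from rfl,
    show (∑ i, z i * (starRingEnd ℂ) (η i)) = sP η z from rfl,
    ← cP_eq_sum]
  have h1 : (j : ℂ) * ((j-1 : ℕ) : ℂ) * mon η (j-1-1) a b z * rP z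
      = (j : ℂ) * ((j : ℂ) - 1) * mon η (j-1) a b z := by
    rcases j with _ | j
    · simp
    · rcases j with _ | j
      · simp
      · rw [show j + 1 + 1 - 1 - 1 = j from rfl, show j + 1 + 1 - 1 = j + 1 from rfl,
          ← rP_mul_mon η j a b z]
        push_cast
        ring
  have h2 : (j : ℂ) * (a : ℂ) * mon η (j-1) (a-1) b z * sP η z
      = (j : ℂ) * (a : ℂ) * mon η (j-1) a b z := by
    rcases a with _ | a
    · simp
    · rw [Nat.add_sub_cancel, ← sP_mul_mon η (j-1) a b z]
      ring
  have h3 : (b : ℂ) * (j : ℂ) * mon η (j-1) a (b-1) z * cP η z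
      = (b : ℂ) * (j : ℂ) * mon η (j-1) a b z := by
    rcases b with _ | b
    · simp
    · rw [Nat.add_sub_cancel, ← cP_mul_mon η (j-1) a b z]
      ring
  rw [h1, h2, h3]
  ring

end CD

lemma wD_add (i : Fin n) (f g : (Fin n → ℂ) → ℂ) (z : Fin n → ℂ)
    (hf : DifferentiableAt ℝ f z) (hg : DifferentiableAt ℝ g z) :
    wD i (fun z => f z + g z) z = wD i f z + wD i g z := by
  simp only [wD, fderiv_fun_add hf hg, ContinuousLinearMap.add_apply]
  ring

namespace CD

lemma sum_wD_wDBar (η : Fin n → ℂ) (hη : ∑ i, η i * (starRingEnd ℂ) (η i) = 1)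
    (J : ℕ) (C : ℕ → ℂ) (A B : ℕ → ℕ) (w : Fin n → ℂ) :
    ∑ i, wD i (wDBar i (fun z => ∑ j ∈ Finset.range J, C j * mon η j (A j) (B j) z)) w
      = ∑ j ∈ Finset.range J, C j *
          ((j : ℂ) * ((n : ℂ) + (j:ℂ) - 1 + (A j : ℂ) + (B j : ℂ)) * mon η (j-1) (A j) (B j) w
            + (A j : ℂ) * (B j : ℂ) * mon η j (A j - 1) (B j - 1) w) := by
  have hBar : ∀ i : Fin n,
      wDBar i (fun z => ∑ j ∈ Finset.range J, C j * mon η j (A j) (B j) z)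
        = fun w => ∑ j ∈ Finset.range J,
            C j * ((j : ℂ) * w i * mon η (j-1) (A j) (B j) w
              + (B j : ℂ) * η i * mon η j (A j) (B j - 1) w) := by
    intro i; funext v
    rw [wDBar_sum i _ _ v (fun j _ => (diff_mon η j (A j) (B j) v).const_mul (C j))]
    refine Finset.sum_congr rfl fun j _ => ?_
    rw [wDBar_const_mul i (C j) _ v (diff_mon η j (A j) (B j) v), wDBar_mon]
  have hstep : ∀ i : Fin n,
      wD i (wDBar i (fun z => ∑ j ∈ Finset.range J, C j * mon η j (A j) (B j) z)) w
        = ∑ j ∈ Finset.range J,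
            C j * ((j : ℂ) * (mon η (j-1) (A j) (B j) w
                + w i * (((j-1 : ℕ) : ℂ) * (starRingEnd ℂ) (w i) * mon η (j-1-1) (A j) (B j) w
                    + (A j : ℂ) * (starRingEnd ℂ) (η i) * mon η (j-1) (A j - 1) (B j) w))
              + (B j : ℂ) * η i * ((j : ℂ) * (starRingEnd ℂ) (w i) * mon η (j-1) (A j) (B j - 1) w
                    + (A j : ℂ) * (starRingEnd ℂ) (η i) * mon η j (A j - 1) (B j - 1) w)) := by
    intro i
    rw [hBar i]
    have d1 : ∀ j : ℕ, DifferentiableAt ℝ (fun v : Fin n → ℂ => (j : ℂ) * v i * mon η (j-1) (A j) (B j) v) w :=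
      fun j => ((diff_proj i w).const_mul _).mul (diff_mon η (j-1) (A j) (B j) w)
    have d2 : ∀ j : ℕ, DifferentiableAt ℝ (fun v : Fin n → ℂ => (B j : ℂ) * η i * mon η j (A j) (B j - 1) v) w :=
      fun j => (diff_mon η j (A j) (B j - 1) w).const_mul _
    rw [wD_sum i _ _ w (fun j _ => ((d1 j).fun_add (d2 j)).const_mul (C j))]
    refine Finset.sum_congr rfl fun j _ => ?_
    rw [wD_const_mul i (C j) _ w ((d1 j).fun_add (d2 j)),
      wD_add i _ _ w (d1 j) (d2 j),
      wD_mul i (fun v => (j:ℂ) * v i) (mon η (j-1) (A j) (B j)) w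
        ((diff_proj i w).const_mul _) (diff_mon η (j-1) (A j) (B j) w),
      wD_const_mul i ((B j : ℂ) * η i) _ w (diff_mon η j (A j) (B j - 1) w),
      wD_const_mul i ((j : ℂ)) _ w (diff_proj i w),
      wD_proj, wD_mon, wD_mon]
    ring
  rw [Finset.sum_congr rfl (fun i _ => hstep i), Finset.sum_comm]
  refine Finset.sum_congr rfl fun j _ => ?_
  rw [← Finset.mul_sum, inner_sum η hη j (A j) (B j) w]

lemma cLap_comb (η : Fin n → ℂ) (hη : ∑ i, η i * (starRingEnd ℂ) (η i) = 1)
    (J : ℕ) (C : ℕ → ℂ) (A B : ℕ → ℕ) (w : Fin n → ℂ) :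
    cLap (fun z => ∑ j ∈ Finset.range J, C j * mon η j (A j) (B j) z) w
      = 4 * ∑ j ∈ Finset.range J, C j *
          ((j : ℂ) * ((n : ℂ) + (j:ℂ) - 1 + (A j : ℂ) + (B j : ℂ)) * mon η (j-1) (A j) (B j) w
            + (A j : ℂ) * (B j : ℂ) * mon η j (A j - 1) (B j - 1) w) := by
  rw [show cLap (fun z => ∑ j ∈ Finset.range J, C j * mon η j (A j) (B j) z) w
      = 4 * ∑ i, wD i (wDBar i (fun z => ∑ j ∈ Finset.range J, C j * mon η j (A j) (B j) z)) w
      from rfl, sum_wD_wDBar η hη J C A B w]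

end CD

namespace CD

noncomputable def betaR (n p q k j : ℕ) : ℝ :=
  (-1 : ℝ) ^ j * (((n - 1 + (p + q - 2 * k)) * (n - 2 + (p + q - 2 * k - j)).factorial : ℕ) : ℝ) /
    (((4 ^ (k + j) * k.factorial * j.factorial * (n - 1 + (p + q - k)).factorial : ℕ)) : ℝ)

noncomputable def Ccoef (n p q k j : ℕ) : ℂ :=
  ((betaR n p q k j : ℝ) : ℂ) * (((4 ^ (k+j) * p.descFactorial (k+j) * q.descFactorial (k+j) : ℕ)) : ℂ)

lemma rPpow_mul_mon (η : Fin n → ℂ) (k e a b : ℕ) (z : Fin n → ℂ) :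
    rP z ^ k * mon η e a b z = mon η (k+e) a b z := by
  show rP z ^ k * (rP z ^ e * _) = rP z ^ (k+e) * _
  rw [pow_add]; ring

lemma Ppoly_eq (η : Fin n → ℂ) (p q : ℕ) :
    Ppoly n p q η = fun z => mon η 0 p q z := by
  funext z
  show _ = rP z ^ 0 * (sP η z ^ p * cP η z ^ q)
  simp only [pow_zero, one_mul]
  rfl

lemma cLap_single (η : Fin n → ℂ) (hη : ∑ i, η i * (starRingEnd ℂ) (η i) = 1)
    (c : ℂ) (a b : ℕ) (w : Fin n → ℂ) :
    cLap (fun z => c * mon η 0 a b z) w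
      = 4 * (a : ℂ) * (b : ℂ) * (c * mon η 0 (a-1) (b-1) w) := by
  have h := cLap_comb η hη 1 (fun _ => c) (fun _ => a) (fun _ => b) w
  rw [show (fun z => ∑ j ∈ Finset.range 1, c * mon η j a b z) = (fun z => c * mon η 0 a b z)
    from by funext v; rw [Finset.sum_range_one]] at h
  rw [h, Finset.sum_range_one]
  push_cast
  ring

lemma cLap_iter (η : Fin n → ℂ) (hη : ∑ i, η i * (starRingEnd ℂ) (η i) = 1) (p q : ℕ) :
    ∀ k, cLap^[k] (Ppoly n p q η)
      = fun z => (((4 ^ k * p.descFactorial k * q.descFactorial k : ℕ)) : ℂ) * mon η 0 (p-k) (q-k) z := by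
  intro k
  induction k with
  | zero =>
    rw [Function.iterate_zero_apply, Ppoly_eq η p q]
    funext z
    simp
  | succ k ih =>
    rw [Function.iterate_succ_apply', ih]
    funext w
    rw [cLap_single η hη _ (p-k) (q-k) w,
      show p - k - 1 = p - (k+1) from by omega, show q - k - 1 = q - (k+1) from by omega]
    push_cast [Nat.descFactorial_succ, pow_succ]
    ring

lemma hComp_eq (η : Fin n → ℂ) (hη : ∑ i, η i * (starRingEnd ℂ) (η i) = 1) (p q k : ℕ) :
    hComp n p q k η = fun z => ∑ j ∈ Finset.range (min p q - k + 1),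
      Ccoef n p q k j * mon η j (p - (k+j)) (q - (k+j)) z := by
  funext z
  unfold hComp
  refine Finset.sum_congr rfl fun j _ => ?_
  rw [cLap_iter η hη p q (k+j)]
  show ((betaR n p q k j : ℝ) : ℂ) * rP z ^ j *
      ((((4 ^ (k+j) * p.descFactorial (k+j) * q.descFactorial (k+j) : ℕ)) : ℂ) * mon η 0 (p-(k+j)) (q-(k+j)) z) = _
  unfold Ccoef
  rw [show mon η j (p - (k+j)) (q - (k+j)) z = mon η (j+0) (p - (k+j)) (q - (k+j)) z from rfl,
    ← rPpow_mul_mon η j 0 (p-(k+j)) (q-(k+j)) z]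
  ring

end CD

namespace CD

lemma cb (n p q k jj : ℕ) :
    ((betaR n p q k jj : ℝ) : ℂ)
        * ((4 ^ (k+jj) * k.factorial * jj.factorial * (n - 1 + (p + q - k)).factorial : ℕ) : ℂ)
      = (-1:ℂ)^jj * (((n - 1 + (p + q - 2*k)) * (n - 2 + (p + q - 2*k - jj)).factorial : ℕ) : ℂ) := by
  have h0 : betaR n p q k jj
        * ((4 ^ (k+jj) * k.factorial * jj.factorial * (n - 1 + (p + q - k)).factorial : ℕ) : ℝ)
      = (-1:ℝ)^jj * (((n - 1 + (p + q - 2*k)) * (n - 2 + (p + q - 2*k - jj)).factorial : ℕ) : ℝ) := by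
    exact div_mul_cancel₀ _ (Nat.cast_ne_zero.mpr (by positivity))
  calc ((betaR n p q k jj : ℝ) : ℂ)
        * ((4 ^ (k+jj) * k.factorial * jj.factorial * (n - 1 + (p + q - k)).factorial : ℕ) : ℂ)
      = (((betaR n p q k jj
          * ((4 ^ (k+jj) * k.factorial * jj.factorial * (n - 1 + (p + q - k)).factorial : ℕ) : ℝ)) : ℝ) : ℂ) := by
        push_cast; ring
    _ = _ := by rw [h0]; push_cast; ring

set_option maxHeartbeats 1000000 in
lemma key_harm (n p q k j : ℕ) (hn : 2 ≤ n) (hk : k ≤ min p q) (hj : j + 1 ≤ min p q - k) :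
    Ccoef n p q k (j+1) * (((j+1 : ℕ) : ℂ) * ((n : ℂ) + ((j+1 : ℕ) : ℂ) - 1
        + ((p - (k+(j+1)) : ℕ) : ℂ) + ((q - (k+(j+1)) : ℕ) : ℂ)))
      + Ccoef n p q k j * (((p - (k+j) : ℕ) : ℂ) * ((q - (k+j) : ℕ) : ℂ)) = 0 := by
  obtain ⟨p₁, hp⟩ : ∃ p₁, p = k+j+1+p₁ := ⟨p - (k+j+1), by omega⟩
  obtain ⟨q₁, hq⟩ : ∃ q₁, q = k+j+1+q₁ := ⟨q - (k+j+1), by omega⟩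
  obtain ⟨n₂, hn2⟩ : ∃ n₂, n = 2+n₂ := ⟨n-2, by omega⟩
  have hD : ((4 ^ (k+(j+1)) * k.factorial * (j+1).factorial * (n - 1 + (p + q - k)).factorial : ℕ) : ℂ) ≠ 0 :=
    Nat.cast_ne_zero.mpr (by positivity)
  refine mul_right_cancel₀ hD ?_
  rw [zero_mul]
  have hsplit : (4 ^ (k+(j+1)) * k.factorial * (j+1).factorial * (n - 1 + (p + q - k)).factorial : ℕ)
      = (4 ^ (k+j) * k.factorial * j.factorial * (n - 1 + (p + q - k)).factorial) * (4*(j+1)) := by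
    rw [show k+(j+1) = (k+j)+1 from by omega, Nat.factorial_succ, pow_succ]
    ring
  have C1 : Ccoef n p q k (j+1)
        * ((4 ^ (k+(j+1)) * k.factorial * (j+1).factorial * (n - 1 + (p + q - k)).factorial : ℕ) : ℂ)
      = (-1:ℂ)^(j+1) * (((n - 1 + (p + q - 2*k)) * (n - 2 + (p + q - 2*k - (j+1))).factorial : ℕ) : ℂ)
        * ((4 ^ (k+(j+1)) * p.descFactorial (k+(j+1)) * q.descFactorial (k+(j+1)) : ℕ) : ℂ) := by
    unfold Ccoef
    rw [mul_right_comm, cb n p q k (j+1)]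
  have C2 : Ccoef n p q k j
        * ((4 ^ (k+(j+1)) * k.factorial * (j+1).factorial * (n - 1 + (p + q - k)).factorial : ℕ) : ℂ)
      = (-1:ℂ)^j * (((n - 1 + (p + q - 2*k)) * (n - 2 + (p + q - 2*k - j)).factorial : ℕ) : ℂ)
        * ((4 ^ (k+j) * p.descFactorial (k+j) * q.descFactorial (k+j) : ℕ) : ℂ)
        * (((4*(j+1) : ℕ)) : ℂ) := by
    unfold Ccoef
    calc ((betaR n p q k j : ℝ) : ℂ) * ((4 ^ (k+j) * p.descFactorial (k+j) * q.descFactorial (k+j) : ℕ) : ℂ)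
          * ((4 ^ (k+(j+1)) * k.factorial * (j+1).factorial * (n - 1 + (p + q - k)).factorial : ℕ) : ℂ)
        = ((betaR n p q k j : ℝ) : ℂ)
            * ((4 ^ (k+j) * k.factorial * j.factorial * (n - 1 + (p + q - k)).factorial : ℕ) : ℂ)
            * ((4 ^ (k+j) * p.descFactorial (k+j) * q.descFactorial (k+j) : ℕ) : ℂ)
            * (((4*(j+1) : ℕ)) : ℂ) := by
          rw [hsplit]; push_cast; ring
      _ = _ := by rw [cb n p q k j]
  calc (Ccoef n p q k (j+1) * (((j+1 : ℕ) : ℂ) * ((n : ℂ) + ((j+1 : ℕ) : ℂ) - 1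
        + ((p - (k+(j+1)) : ℕ) : ℂ) + ((q - (k+(j+1)) : ℕ) : ℂ)))
      + Ccoef n p q k j * (((p - (k+j) : ℕ) : ℂ) * ((q - (k+j) : ℕ) : ℂ)))
        * ((4 ^ (k+(j+1)) * k.factorial * (j+1).factorial * (n - 1 + (p + q - k)).factorial : ℕ) : ℂ)
      = (Ccoef n p q k (j+1)
          * ((4 ^ (k+(j+1)) * k.factorial * (j+1).factorial * (n - 1 + (p + q - k)).factorial : ℕ) : ℂ))
          * (((j+1 : ℕ) : ℂ) * ((n : ℂ) + ((j+1 : ℕ) : ℂ) - 1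
            + ((p - (k+(j+1)) : ℕ) : ℂ) + ((q - (k+(j+1)) : ℕ) : ℂ)))
        + (Ccoef n p q k j
          * ((4 ^ (k+(j+1)) * k.factorial * (j+1).factorial * (n - 1 + (p + q - k)).factorial : ℕ) : ℂ))
          * (((p - (k+j) : ℕ) : ℂ) * ((q - (k+j) : ℕ) : ℂ)) := by ring
    _ = 0 := by
        rw [C1, C2,
          show k+(j+1) = (k+j)+1 from by omega,
          show n - 1 + (p + q - 2*k) = n₂+2*j+3+p₁+q₁ from by omega,
          show n - 2 + (p + q - 2*k - (j+1)) = n₂+j+1+p₁+q₁ from by omega,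
          show n - 2 + (p + q - 2*k - j) = (n₂+j+1+p₁+q₁)+1 from by omega,
          show p - ((k+j)+1) = p₁ from by omega,
          show q - ((k+j)+1) = q₁ from by omega,
          show p - (k+j) = p₁+1 from by omega,
          show q - (k+j) = q₁+1 from by omega,
          Nat.factorial_succ (n₂+j+1+p₁+q₁),
          Nat.descFactorial_succ, Nat.descFactorial_succ,
          show p - (k+j) = p₁+1 from by omega,
          show q - (k+j) = q₁+1 from by omega,
          pow_succ 4 (k+j), pow_succ (-1:ℂ) j, hn2]
        push_cast
        ring

noncomputable def uAux (n p q l k : ℕ) : ℝ :=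
  if k ≤ l then
    (-1 : ℝ) ^ (l-k) * ((k * (n - 1 + (p + q - k - l)).factorial : ℕ) : ℝ) /
      (((4 ^ l * k.factorial * (l-k).factorial * (n - 1 + (p + q - k)).factorial : ℕ)) : ℝ)
  else 0

set_option maxHeartbeats 1000000 in
lemma comb_step (n p q l k : ℕ) (hn : 2 ≤ n) (hl : 1 ≤ l) (hlm : l ≤ min p q) (hk : k ≤ l) :
    (l : ℝ) * betaR n p q k (l-k) = uAux n p q l k - uAux n p q l (k+1) := by
  rcases eq_or_lt_of_le hk with rfl | hkl
  · -- k = l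
    obtain ⟨p₁, hp⟩ : ∃ p₁, p = k+p₁ := ⟨p - k, by omega⟩
    obtain ⟨q₁, hq⟩ : ∃ q₁, q = k+q₁ := ⟨q - k, by omega⟩
    obtain ⟨n₂, hn2⟩ : ∃ n₂, n = 2+n₂ := ⟨n-2, by omega⟩
    unfold uAux betaR
    rw [if_pos le_rfl, if_neg (by omega), Nat.sub_self,
      show n - 1 + (p + q - 2*k) = (n₂+p₁+q₁)+1 from by omega,
      show n - 2 + (p + q - 2*k - 0) = n₂+p₁+q₁ from by omega,
      show n - 1 + (p + q - k - k) = (n₂+p₁+q₁)+1 from by omega,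
      show k + 0 = k from rfl,
      Nat.factorial_succ (n₂+p₁+q₁)]
    push_cast
    ring
  · -- k < l
    obtain ⟨d, hd⟩ : ∃ d, l = k+1+d := ⟨l - (k+1), by omega⟩
    subst hd
    obtain ⟨p₁, hp⟩ : ∃ p₁, p = (k+1+d)+p₁ := ⟨p - (k+1+d), by omega⟩
    obtain ⟨q₁, hq⟩ : ∃ q₁, q = (k+1+d)+q₁ := ⟨q - (k+1+d), by omega⟩
    obtain ⟨n₂, hn2⟩ : ∃ n₂, n = 2+n₂ := ⟨n-2, by omega⟩
    unfold uAux betaR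
    rw [if_pos (by omega), if_pos (by omega),
      show n - 1 + (p + q - 2*k) = (n₂+d+p₁+q₁)+d+3 from by omega,
      show n - 2 + (p + q - 2*k - (k+1+d-k)) = (n₂+d+p₁+q₁)+1 from by omega,
      show n - 1 + (p + q - k - (k+1+d)) = ((n₂+d+p₁+q₁)+1)+1 from by omega,
      show n - 1 + (p + q - (k+1) - (k+1+d)) = (n₂+d+p₁+q₁)+1 from by omega,
      show n - 1 + (p + q - k) = ((n₂+d+p₁+q₁)+(k+1+d)+1)+1 from by omega,
      show n - 1 + (p + q - (k+1)) = (n₂+d+p₁+q₁)+(k+1+d)+1 from by omega,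
      show k+1+d - k = d+1 from by omega,
      show k+1+d - (k+1) = d from by omega,
      show k + (d+1) = k+1+d from by omega,
      Nat.factorial_succ ((n₂+d+p₁+q₁)+1), Nat.factorial_succ ((n₂+d+p₁+q₁)+(k+1+d)+1),
      Nat.factorial_succ d, Nat.factorial_succ k,
      pow_succ (-1:ℝ) d]
    have e1 : ((d:ℝ)+1) ≠ 0 := by positivity
    have e2 : ((k:ℝ)+1) ≠ 0 := by positivity
    have e3 : ((n₂:ℝ)+(d:ℝ)+(p₁:ℝ)+(q₁:ℝ)+2) ≠ 0 := by positivity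
    have e4 : ((n₂:ℝ)+(d:ℝ)+(p₁:ℝ)+(q₁:ℝ)+(k:ℝ)+(1:ℝ)+(d:ℝ)+2) ≠ 0 := by positivity
    have e5 : ((4:ℝ)^(k+1+d)) ≠ 0 := by positivity
    have e6 : ((k.factorial:ℝ)) ≠ 0 := by positivity
    have e7 : ((d.factorial:ℝ)) ≠ 0 := by positivity
    have e8 : (((n₂+d+p₁+q₁).factorial:ℝ)) ≠ 0 := by positivity
    have e9 : ((((n₂+d+p₁+q₁)+(k+1+d)).factorial:ℝ)) ≠ 0 := by positivity
    push_cast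
    field_simp
    ring

lemma comb_id (n p q l : ℕ) (hn : 2 ≤ n) (hl : 1 ≤ l) (hlm : l ≤ min p q) :
    ∑ k ∈ Finset.range (l+1), betaR n p q k (l-k) = 0 := by
  have h1 : (l : ℝ) * ∑ k ∈ Finset.range (l+1), betaR n p q k (l-k)
      = ∑ k ∈ Finset.range (l+1), (uAux n p q l k - uAux n p q l (k+1)) := by
    rw [Finset.mul_sum]
    refine Finset.sum_congr rfl fun k hk => ?_
    exact comb_step n p q l k hn hl hlm (by simpa [Nat.lt_succ_iff] using hk)
  rw [Finset.sum_range_sub' (fun k => uAux n p q l k) (l+1)] at h1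
  have h2 : uAux n p q l 0 = 0 := by
    unfold uAux
    rw [if_pos (Nat.zero_le l)]
    simp
  have h3 : uAux n p q l (l+1) = 0 := by
    unfold uAux
    rw [if_neg (by omega)]
  rw [h2, h3, sub_zero] at h1
  have hl' : (l : ℝ) ≠ 0 := Nat.cast_ne_zero.mpr (by omega)
  exact (mul_eq_zero.mp h1).resolve_left hl'

lemma Ccoef_zero (n p q : ℕ) (hn : 2 ≤ n) :
    (((betaR n p q 0 0 : ℝ)) : ℂ) * (((4 ^ (0+0) * p.descFactorial (0+0) * q.descFactorial (0+0) : ℕ)) : ℂ) = 1 := by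
  unfold betaR
  rw [show n - 1 + (p + q - 2*0) = (n - 2 + (p + q - 2*0 - 0)) + 1 from by omega,
    Nat.factorial_succ]
  have hne : ((((n - 2 + (p + q - 2*0 - 0)) + 1) * (n - 2 + (p + q - 2*0 - 0)).factorial : ℕ) : ℝ) ≠ 0 :=
    Nat.cast_ne_zero.mpr (by positivity)
  simp [div_self hne]
  have hB : (((n - 2 + (p + q)).factorial : ℕ) : ℂ) ≠ 0 :=
    Nat.cast_ne_zero.mpr (Nat.factorial_ne_zero _)
  have hA : ((n - 2 : ℕ) : ℂ) + ((p:ℂ) + (q:ℂ)) + 1 ≠ 0 := by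
    have h : (((n - 2) + (p + q) + 1 : ℕ) : ℂ) ≠ 0 := Nat.cast_ne_zero.mpr (by omega)
    push_cast at h
    exact h
  exact ⟨hA, Nat.factorial_ne_zero _⟩



lemma triangle (m : ℕ) (F : ℕ → ℕ → ℂ) :
    ∑ k ∈ Finset.range (m+1), ∑ j ∈ Finset.range (m-k+1), F k j
      = ∑ l ∈ Finset.range (m+1), ∑ i ∈ Finset.range (l+1), F i (l-i) := by
  rw [Finset.sum_sigma' (Finset.range (m+1)) (fun k => Finset.range (m-k+1)) (fun k j => F k j),
    Finset.sum_sigma' (Finset.range (m+1)) (fun l => Finset.range (l+1)) (fun l i => F i (l-i))]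
  refine Finset.sum_nbij' (fun x => ⟨x.1+x.2, x.1⟩) (fun x => ⟨x.2, x.1-x.2⟩) ?_ ?_ ?_ ?_ ?_
  · rintro ⟨k,j⟩ h
    simp only [Finset.mem_sigma, Finset.mem_range] at h ⊢
    omega
  · rintro ⟨l,i⟩ h
    simp only [Finset.mem_sigma, Finset.mem_range] at h ⊢
    omega
  · rintro ⟨k,j⟩ h
    simp only [Finset.mem_sigma, Finset.mem_range] at h
    have : k + j - k = j := by omega
    simp [this]
  · rintro ⟨l,i⟩ h
    simp only [Finset.mem_sigma, Finset.mem_range] at h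
    have : i + (l - i) = l := by omega
    simp [this]
  · rintro ⟨k,j⟩ h
    simp only [Finset.mem_sigma, Finset.mem_range] at h
    simp only []
    rw [show k + j - k = j from by omega]

end CD

namespace CD

lemma harm (η : Fin n → ℂ) (hn : 2 ≤ n) (hη : ∑ i, η i * (starRingEnd ℂ) (η i) = 1)
    (p q k : ℕ) (hk : k ≤ min p q) (z : Fin n → ℂ) :
    cLap (hComp n p q k η) z = 0 := by
  have h : cLap (fun z => ∑ j ∈ Finset.range (min p q - k + 1),
        Ccoef n p q k j * mon η j (p - (k+j)) (q - (k+j)) z) z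
      = 4 * ∑ j ∈ Finset.range (min p q - k + 1), Ccoef n p q k j *
          ((j : ℂ) * ((n : ℂ) + (j:ℂ) - 1 + ((p - (k+j) : ℕ) : ℂ) + ((q - (k+j) : ℕ) : ℂ))
              * mon η (j-1) (p - (k+j)) (q - (k+j)) z
            + ((p - (k+j) : ℕ) : ℂ) * ((q - (k+j) : ℕ) : ℂ)
              * mon η j (p - (k+j) - 1) (q - (k+j) - 1) z) :=
    cLap_comb η hη (min p q - k + 1) (Ccoef n p q k) (fun j => p - (k+j)) (fun j => q - (k+j)) z
  rw [hComp_eq η hη p q k, h]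
  have hS : ∑ j ∈ Finset.range (min p q - k + 1), Ccoef n p q k j *
          ((j : ℂ) * ((n : ℂ) + (j:ℂ) - 1 + ((p - (k+j) : ℕ) : ℂ) + ((q - (k+j) : ℕ) : ℂ))
              * mon η (j-1) (p - (k+j)) (q - (k+j)) z
            + ((p - (k+j) : ℕ) : ℂ) * ((q - (k+j) : ℕ) : ℂ)
              * mon η j (p - (k+j) - 1) (q - (k+j) - 1) z) = 0 := by
    have hsplit : ∀ j ∈ Finset.range (min p q - k + 1), Ccoef n p q k j *
          ((j : ℂ) * ((n : ℂ) + (j:ℂ) - 1 + ((p - (k+j) : ℕ) : ℂ) + ((q - (k+j) : ℕ) : ℂ))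
              * mon η (j-1) (p - (k+j)) (q - (k+j)) z
            + ((p - (k+j) : ℕ) : ℂ) * ((q - (k+j) : ℕ) : ℂ)
              * mon η j (p - (k+j) - 1) (q - (k+j) - 1) z)
        = Ccoef n p q k j *
          ((j : ℂ) * ((n : ℂ) + (j:ℂ) - 1 + ((p - (k+j) : ℕ) : ℂ) + ((q - (k+j) : ℕ) : ℂ))
              * mon η (j-1) (p - (k+j)) (q - (k+j)) z)
          + Ccoef n p q k j *
          (((p - (k+j) : ℕ) : ℂ) * ((q - (k+j) : ℕ) : ℂ)
              * mon η j (p - (k+j) - 1) (q - (k+j) - 1) z) := fun j _ => mul_add _ _ _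
    rw [Finset.sum_congr rfl hsplit, Finset.sum_add_distrib,
      Finset.sum_range_succ' (fun j => Ccoef n p q k j *
          ((j : ℂ) * ((n : ℂ) + (j:ℂ) - 1 + ((p - (k+j) : ℕ) : ℂ) + ((q - (k+j) : ℕ) : ℂ))
              * mon η (j-1) (p - (k+j)) (q - (k+j)) z)) (min p q - k),
      Finset.sum_range_succ (fun j => Ccoef n p q k j *
          (((p - (k+j) : ℕ) : ℂ) * ((q - (k+j) : ℕ) : ℂ)
              * mon η j (p - (k+j) - 1) (q - (k+j) - 1) z)) (min p q - k)]
    have hT10 : Ccoef n p q k 0 *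
        (((0:ℕ) : ℂ) * ((n : ℂ) + ((0:ℕ):ℂ) - 1 + ((p - (k+0) : ℕ) : ℂ) + ((q - (k+0) : ℕ) : ℂ))
            * mon η (0-1) (p - (k+0)) (q - (k+0)) z) = 0 := by
      simp
    have hT2top : Ccoef n p q k (min p q - k) *
        (((p - (k+(min p q - k)) : ℕ) : ℂ) * ((q - (k+(min p q - k)) : ℕ) : ℂ)
            * mon η (min p q - k) (p - (k+(min p q - k)) - 1) (q - (k+(min p q - k)) - 1) z) = 0 := by
      rcases le_total p q with hpq | hpq
      · rw [show p - (k+(min p q - k)) = 0 from by omega]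
        simp
      · rw [show q - (k+(min p q - k)) = 0 from by omega]
        simp
    rw [hT10, hT2top, add_zero, add_zero, ← Finset.sum_add_distrib]
    refine Finset.sum_eq_zero fun j hj => ?_
    have hj' : j + 1 ≤ min p q - k := by
      simpa [Nat.lt_succ_iff] using Finset.mem_range.mp hj
    rw [show (j+1) - 1 = j from rfl,
      show p - (k+j) - 1 = p - (k+(j+1)) from by omega,
      show q - (k+j) - 1 = q - (k+(j+1)) from by omega]
    rw [show Ccoef n p q k (j+1) *
          (((j+1:ℕ) : ℂ) * ((n : ℂ) + ((j+1:ℕ):ℂ) - 1 + ((p - (k+(j+1)) : ℕ) : ℂ) + ((q - (k+(j+1)) : ℕ) : ℂ))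
              * mon η j (p - (k+(j+1))) (q - (k+(j+1))) z)
          + Ccoef n p q k j *
          (((p - (k+j) : ℕ) : ℂ) * ((q - (k+j) : ℕ) : ℂ)
              * mon η j (p - (k+(j+1))) (q - (k+(j+1))) z)
        = (Ccoef n p q k (j+1) * (((j+1:ℕ) : ℂ) * ((n : ℂ) + ((j+1:ℕ):ℂ) - 1
              + ((p - (k+(j+1)) : ℕ) : ℂ) + ((q - (k+(j+1)) : ℕ) : ℂ)))
            + Ccoef n p q k j * (((p - (k+j) : ℕ) : ℂ) * ((q - (k+j) : ℕ) : ℂ)))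
            * mon η j (p - (k+(j+1))) (q - (k+(j+1))) z from by ring,
      key_harm n p q k j hn hk hj', zero_mul]
  rw [hS, mul_zero]

end CD

namespace CD

lemma decomp (η : Fin n → ℂ) (hn : 2 ≤ n) (hη : ∑ i, η i * (starRingEnd ℂ) (η i) = 1)
    (p q : ℕ) (z : Fin n → ℂ) :
    Ppoly n p q η z = ∑ k ∈ Finset.range (min p q + 1), rP z ^ k * hComp n p q k η z := by
  have step1 : ∑ k ∈ Finset.range (min p q + 1), rP z ^ k * hComp n p q k η z
      = ∑ k ∈ Finset.range (min p q + 1), ∑ j ∈ Finset.range (min p q - k + 1),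
          Ccoef n p q k j * mon η (k+j) (p - (k+j)) (q - (k+j)) z := by
    refine Finset.sum_congr rfl fun k _ => ?_
    rw [hComp_eq η hη p q k]
    rw [Finset.mul_sum]
    refine Finset.sum_congr rfl fun j _ => ?_
    rw [← rPpow_mul_mon η k j (p - (k+j)) (q - (k+j)) z]
    ring
  rw [step1, triangle (min p q) (fun k j => Ccoef n p q k j * mon η (k+j) (p - (k+j)) (q - (k+j)) z)]
  have step2 : ∀ l ∈ Finset.range (min p q + 1),
      ∑ i ∈ Finset.range (l+1), Ccoef n p q i (l-i) * mon η (i+(l-i)) (p - (i+(l-i))) (q - (i+(l-i))) z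
        = (∑ i ∈ Finset.range (l+1), Ccoef n p q i (l-i)) * mon η l (p - l) (q - l) z := by
    intro l _
    rw [Finset.sum_mul]
    refine Finset.sum_congr rfl fun i hi => ?_
    have : i ≤ l := by simpa [Nat.lt_succ_iff] using Finset.mem_range.mp hi
    rw [show i + (l-i) = l from by omega]
  rw [Finset.sum_congr rfl step2]
  have W0 : (∑ i ∈ Finset.range (0+1), Ccoef n p q i (0-i)) = 1 := by
    rw [Finset.sum_range_one]
    show Ccoef n p q 0 0 = 1
    unfold Ccoef
    exact Ccoef_zero n p q hn
  have Wl : ∀ l ∈ Finset.range (min p q + 1), l ≠ 0 →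
      (∑ i ∈ Finset.range (l+1), Ccoef n p q i (l-i)) * mon η l (p - l) (q - l) z = 0 := by
    intro l hl hl0
    have hlm : l ≤ min p q := by simpa [Nat.lt_succ_iff] using Finset.mem_range.mp hl
    have hW : (∑ i ∈ Finset.range (l+1), Ccoef n p q i (l-i))
        = ((∑ i ∈ Finset.range (l+1), betaR n p q i (l-i) : ℝ) : ℂ)
          * (((4 ^ l * p.descFactorial l * q.descFactorial l : ℕ)) : ℂ) := by
      push_cast
      rw [Finset.sum_mul]
      refine Finset.sum_congr rfl fun i hi => ?_
      have hil : i ≤ l := by simpa [Nat.lt_succ_iff] using Finset.mem_range.mp hi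
      unfold Ccoef
      rw [show i + (l-i) = l from by omega]
      push_cast
      ring
    rw [hW, comb_id n p q l hn (by omega) hlm]
    simp
  rw [Finset.sum_eq_single_of_mem 0 (Finset.mem_range.mpr (by omega)) Wl, W0, one_mul,
    Nat.sub_zero, Nat.sub_zero, Ppoly_eq η p q]

end CD


/-- Canonical decomposition of the bihomogeneous polynomial (z|η)^p (z|η)̄^q into harmonic
components: each h_k(P) is harmonic and P = Σ_k |z|^{2k} h_k(P). -/
theorem canonical_decomposition (n : ℕ) (hn : 2 ≤ n) (η : Fin n → ℂ)
    (hη : ∑ j, η j * (starRingEnd ℂ) (η j) = 1) (p q : ℕ) :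
    (∀ k ≤ min p q, ∀ z, cLap (hComp n p q k η) z = 0) ∧
    (∀ z, Ppoly n p q η z =
      ∑ k ∈ Finset.range (min p q + 1),
        (∑ i, z i * (starRingEnd ℂ) (z i)) ^ k * hComp n p q k η z) := by
  constructor
  · intro k hk z
    exact CD.harm η hn hη p q k hk z
  · intro z
    exact CD.decomp η hn hη p q z
end

section
/- Let n ≥ 2, η a unit vector in ℂⁿ, and p, q nonnegative integers with m = min(p,q) and α = n-2. Then for all z ∈ ℂⁿ, (z|η)^p (z|η)̄^q = Σ_{k=0}^{m} |z|^{2k} · [p! q! (α+1+p+q-2k)!] / [k! (p-k)! (q-k)! (α+1+p+q-k)!] · (z|η)^{p-k} (z|η)̄^{q-k} · Σ_{i=0}^{min(p,q)-k} [(-p+k)_i (-q+k)_i] / [(-α-p-q+2k)_i i!] · (|z|²/|(z|η)|²)^i, where the inner sum combined with the preceding powers is understood as the harmonic polynomial Σ_i [⋯] |z|^{2i} (z|η)^{p-k-i} (z|η)̄^{q-k-i} (polynomial, no division). -/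
set_option maxHeartbeats 1000000

open Finset

lemma hz_asc_eval_neg (i P : ℕ) :
    (ascPochhammer ℝ i).eval (-(P:ℝ)) = (-1)^i * (P.descFactorial i : ℝ) := by
  rw [ascPochhammer_eval_neg_eq_descPochhammer, descPochhammer_eval_eq_descFactorial]

lemma hz_triangle {β : Type*} [AddCommMonoid β] (M : ℕ) (f : ℕ → ℕ → β) :
    ∑ k ∈ Finset.range (M+1), ∑ i ∈ Finset.range (M - k + 1), f k i
      = ∑ m ∈ Finset.range (M+1), ∑ k ∈ Finset.range (m+1), f k (m - k) := by
  rw [Finset.sum_sigma', Finset.sum_sigma']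
  apply Finset.sum_nbij' (fun x => ⟨x.1 + x.2, x.1⟩) (fun x => ⟨x.2, x.1 - x.2⟩) <;>
    simp only [Finset.mem_sigma, Finset.mem_range] <;> rintro ⟨a, b⟩ hab <;>
    simp_all <;> omega

lemma hz_tele (α p0 q0 m : ℕ) (hm : 0 < m)
    (F : ℕ → ℝ)
    (hF : F = fun t => if t = 0 ∨ m < t then 0 else
      (-1:ℝ)^(m+t) * (((m+p0).factorial * (m+q0).factorial : ℕ) : ℝ) * t *
        ((α + (m-t) + p0 + q0 + 1).factorial : ℝ) /
        (((p0.factorial * q0.factorial * m : ℕ) : ℝ) * (t.factorial : ℝ) *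
          ((m-t).factorial : ℝ) * ((α + m + (m-t) + p0 + q0 + 1).factorial : ℝ))) :
    ∀ k ∈ Finset.range (m+1),
        (((( (m+p0).factorial * (m+q0).factorial * (α + 1 + ((m+p0)-k) + ((m+q0)-k)).factorial : ℕ)):ℝ) /
          ((k.factorial * ((m+p0)-k).factorial * ((m+q0)-k).factorial * (α + 1 + ((m+p0)-k) + (m+q0)).factorial : ℕ):ℝ)) *
        (((ascPochhammer ℝ (m-k)).eval (-(((m+p0)-k : ℕ):ℝ)) * (ascPochhammer ℝ (m-k)).eval (-(((m+q0)-k : ℕ):ℝ))) /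
          ((ascPochhammer ℝ (m-k)).eval (-((α + ((m+p0)-k) + ((m+q0)-k) : ℕ):ℝ)) * ((m-k).factorial : ℝ)))
        = F k - F (k+1) := by
  intro k hk
  simp only [Finset.mem_range] at hk
  obtain ⟨j, rfl⟩ := Nat.exists_eq_add_of_le (show k ≤ m by omega)
  have e1 : (k+j+p0) - k = j + p0 := by omega
  have e2 : (k+j+q0) - k = j + q0 := by omega
  have e3 : (k+j) - k = j := by omega
  rw [e1, e2, e3, hz_asc_eval_neg, hz_asc_eval_neg, hz_asc_eval_neg]
  have hdP : ((j+p0).descFactorial j : ℝ) = ((j+p0).factorial : ℝ) / (p0.factorial : ℝ) := by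
    have h := Nat.factorial_mul_descFactorial (show j ≤ j + p0 by omega)
    rw [show j+p0-j = p0 by omega] at h
    rw [eq_div_iff (by positivity)]
    have := congrArg (Nat.cast : ℕ → ℝ) h
    push_cast at this
    linarith
  have hdQ : ((j+q0).descFactorial j : ℝ) = ((j+q0).factorial : ℝ) / (q0.factorial : ℝ) := by
    have h := Nat.factorial_mul_descFactorial (show j ≤ j + q0 by omega)
    rw [show j+q0-j = q0 by omega] at h
    rw [eq_div_iff (by positivity)]
    have := congrArg (Nat.cast : ℕ → ℝ) h
    push_cast at this
    linarith
  have hdA : ((α+(j+p0)+(j+q0)).descFactorial j : ℝ)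
      = ((α+(j+p0)+(j+q0)).factorial : ℝ) / ((α+j+p0+q0).factorial : ℝ) := by
    have h := Nat.factorial_mul_descFactorial (show j ≤ α+(j+p0)+(j+q0) by omega)
    rw [show α+(j+p0)+(j+q0)-j = α+j+p0+q0 by omega] at h
    rw [eq_div_iff (by positivity)]
    have := congrArg (Nat.cast : ℕ → ℝ) h
    push_cast at this
    linarith
  rw [hdP, hdQ, hdA]
  rcases Nat.eq_zero_or_pos j with rfl | hj
  · -- k = m case
    have hk0 : 0 < k := by omega
    rw [hF]
    simp only [show ¬(k = 0 ∨ k + 0 < k) from by omega, if_neg,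
      if_pos (by omega : k + 1 = 0 ∨ k + 0 < k + 1)]
    have hs : (-1:ℝ)^(k+0+k) = 1 := by
      rw [show k+0+k = 2*k by omega, pow_mul]; norm_num
    simp only [if_false, hs, e3, Nat.add_zero, Nat.zero_add,
      pow_zero, Nat.factorial_zero, Nat.cast_one, one_mul, mul_one]
    rw [show α+1+p0+q0 = α+p0+q0+1 by omega, show α+1+p0+(k+q0) = α+k+p0+q0+1 by omega]
    push_cast
    field_simp
    simp only [Nat.sub_self, Nat.factorial_zero, Nat.add_zero, Nat.cast_one, mul_one, pow_mul',
      neg_one_sq, one_pow]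
    have hs' : (-1:ℝ)^(k+k) = 1 := by rw [← two_mul, pow_mul]; norm_num
    rw [hs']
    ring
  · rcases Nat.eq_zero_or_pos k with rfl | hk0
    · obtain ⟨j', rfl⟩ : ∃ j', j = j' + 1 := ⟨j - 1, by omega⟩
      have hF0 : F 0 = 0 := by rw [hF]; simp
      rw [hF0, hF]
      simp only []
      rw [if_neg (show ¬(0+1 = 0 ∨ 0+(j'+1) < 0+1) from by omega)]
      rw [show (0 + (j'+1) - (0+1)) = j' from by omega]
      rw [show α + 1 + (j'+1+p0) + (j'+1+q0) = (α + (j'+1+p0) + (j'+1+q0)) + 1 from by omega,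
        Nat.factorial_succ (α + (j'+1+p0) + (j'+1+q0)),
        show α+1+(j'+1+p0)+(0+(j'+1)+q0) = (α + (0+(j'+1)) + j' + p0+q0+1)+1 from by omega,
        Nat.factorial_succ (α + (0+(j'+1)) + j' + p0+q0+1),
        show α+(j'+1)+p0+q0 = α + j' + p0 + q0 + 1 from by omega,
        Nat.factorial_succ j']
      push_cast
      field_simp
      ring
    · obtain ⟨j', rfl⟩ : ∃ j', j = j' + 1 := ⟨j - 1, by omega⟩
      rw [hF]
      beta_reduce
      rw [if_neg (show ¬(k = 0 ∨ k+(j'+1) < k) from by omega),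
        if_neg (show ¬(k+1 = 0 ∨ k+(j'+1) < k+1) from by omega), e3,
        show (k + (j'+1) - (k+1)) = j' from by omega]
      rw [show α+1+(j'+1+p0)+(j'+1+q0) = (α+(j'+1+p0)+(j'+1+q0)) + 1 from by omega,
        show α+1+(j'+1+p0)+(k+(j'+1)+q0) = (α+(k+(j'+1))+j'+p0+q0+1)+1 from by omega,
        show α+(k+(j'+1))+(j'+1)+p0+q0+1 = (α+(k+(j'+1))+j'+p0+q0+1)+1 from by omega,
        show α+(j'+1)+p0+q0 = α+j'+p0+q0+1 from by omega]
      have hs1 : ((-1:ℝ))^(k+(j'+1)+k) = (-1)^(j'+1) := by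
        rw [show k+(j'+1)+k = 2*k + (j'+1) from by omega, pow_add, pow_mul]; norm_num
      have hs2 : ((-1:ℝ))^(k+(j'+1)+(k+1)) = -(-1)^(j'+1) := by
        rw [show k+(j'+1)+(k+1) = 2*k+(j'+1)+1 from by omega, pow_succ, pow_add, pow_mul]; norm_num
      rw [hs1, hs2]
      simp only [Nat.factorial_succ]
      push_cast
      set X : ℝ := (α:ℝ) + ↑p0 + ↑q0 with hX
      rw [show ((α:ℝ) + (↑j' + 1 + ↑p0) + (↑j' + 1 + ↑q0) + 1) = X + 2*(j':ℝ) + 3 from by rw [hX]; ring,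
        show ((α:ℝ) + (↑k + (↑j' + 1)) + ↑j' + ↑p0 + ↑q0 + 1 + 1) = X + (k:ℝ) + 2*(j':ℝ) + 3 from by rw [hX]; ring,
        show ((α:ℝ) + (↑k + (↑j' + 1)) + ↑j' + ↑p0 + ↑q0 + 1) = X + (k:ℝ) + 2*(j':ℝ) + 2 from by rw [hX]; ring,
        show ((α:ℝ) + ↑j' + ↑p0 + ↑q0 + 1 + 1) = X + (j':ℝ) + 2 from by rw [hX]; ring,
        show ((α:ℝ) + ↑j' + ↑p0 + ↑q0 + 1) = X + (j':ℝ) + 1 from by rw [hX]; ring]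
      have hX0 : 0 ≤ X := by rw [hX]; positivity
      have hL1 : X + (k:ℝ) + 2*(j':ℝ) + 3 ≠ 0 := by positivity
      have hL2 : X + (k:ℝ) + 2*(j':ℝ) + 2 ≠ 0 := by positivity
      have hL3 : X + (j':ℝ) + 1 ≠ 0 := by positivity
      have hL4 : ((j':ℝ) + 1) ≠ 0 := by positivity
      have hL5 : ((k:ℝ) + (↑j' + 1)) ≠ 0 := by positivity
      have hL6 : ((k:ℝ) + 1) ≠ 0 := by positivity
      have hσ0 : ((-1:ℝ))^(j'+1) ≠ 0 := by
        apply pow_ne_zero; norm_num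
      generalize hσ : ((-1:ℝ))^(j'+1) = σ at hσ0 ⊢
      set f1 : ℝ := ((k + (j' + 1) + p0).factorial : ℝ) with hf1
      set f2 : ℝ := ((k + (j' + 1) + q0).factorial : ℝ) with hf2
      set f3 : ℝ := ((α + (j' + 1 + p0) + (j' + 1 + q0)).factorial : ℝ) with hf3
      set f4 : ℝ := (k.factorial : ℝ) with hf4
      set f5 : ℝ := ((j' + 1 + p0).factorial : ℝ) with hf5
      set f6 : ℝ := ((j' + 1 + q0).factorial : ℝ) with hf6
      set f7 : ℝ := ((α + (k + (j' + 1)) + j' + p0 + q0).factorial : ℝ) with hf7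
      set f8 : ℝ := (p0.factorial : ℝ) with hf8
      set f9 : ℝ := (q0.factorial : ℝ) with hf9
      set f10 : ℝ := ((α + j' + p0 + q0).factorial : ℝ) with hf10
      set f11 : ℝ := (j'.factorial : ℝ) with hf11
      have hg1 : f1 ≠ 0 := by rw [hf1]; positivity
      have hg2 : f2 ≠ 0 := by rw [hf2]; positivity
      have hg3 : f3 ≠ 0 := by rw [hf3]; positivity
      have hg4 : f4 ≠ 0 := by rw [hf4]; positivity
      have hg5 : f5 ≠ 0 := by rw [hf5]; positivity
      have hg6 : f6 ≠ 0 := by rw [hf6]; positivity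
      have hg7 : f7 ≠ 0 := by rw [hf7]; positivity
      have hg8 : f8 ≠ 0 := by rw [hf8]; positivity
      have hg9 : f9 ≠ 0 := by rw [hf9]; positivity
      have hg10 : f10 ≠ 0 := by rw [hf10]; positivity
      have hg11 : f11 ≠ 0 := by rw [hf11]; positivity
      clear hF hdP hdQ hdA e1 e2 e3 hm hk hj hk0 hs1 hs2 hX
      clear_value X f1 f2 f3 f4 f5 f6 f7 f8 f9 f10 f11
      clear hf1 hf2 hf3 hf4 hf5 hf6 hf7 hf8 hf9 hf10 hf11
      field_simp
      ring

lemma hz_key (α p q m : ℕ) (hp : m ≤ p) (hq : m ≤ q) :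
    ∑ k ∈ Finset.range (m+1),
      (((p.factorial * q.factorial * (α + 1 + (p-k) + (q-k)).factorial : ℕ):ℝ) /
        ((k.factorial * (p-k).factorial * (q-k).factorial * (α + 1 + (p-k) + q).factorial : ℕ):ℝ)) *
      (((ascPochhammer ℝ (m-k)).eval (-((p-k : ℕ):ℝ)) * (ascPochhammer ℝ (m-k)).eval (-((q-k : ℕ):ℝ))) /
        ((ascPochhammer ℝ (m-k)).eval (-((α + (p-k) + (q-k) : ℕ):ℝ)) * ((m-k).factorial : ℝ)))
    = if m = 0 then 1 else 0 := by
  obtain ⟨p0, rfl⟩ := Nat.exists_eq_add_of_le hp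
  obtain ⟨q0, rfl⟩ := Nat.exists_eq_add_of_le hq
  rcases Nat.eq_zero_or_pos m with rfl | hm
  · simp only [if_pos rfl, Finset.sum_range_one]
    norm_num [ascPochhammer_zero]
    exact ⟨⟨Nat.factorial_ne_zero _, Nat.factorial_ne_zero _⟩, Nat.factorial_ne_zero _⟩
  · rw [if_neg (by omega)]
    set F : ℕ → ℝ := fun t => if t = 0 ∨ m < t then 0 else
      (-1:ℝ)^(m+t) * (((m+p0).factorial * (m+q0).factorial : ℕ) : ℝ) * t *
        ((α + (m-t) + p0 + q0 + 1).factorial : ℝ) /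
        (((p0.factorial * q0.factorial * m : ℕ) : ℝ) * (t.factorial : ℝ) *
          ((m-t).factorial : ℝ) * ((α + m + (m-t) + p0 + q0 + 1).factorial : ℝ)) with hF
    rw [Finset.sum_congr rfl (hz_tele α p0 q0 m hm F hF), Finset.sum_range_sub']
    have h0 : F 0 = 0 := by rw [hF]; simp
    have h1 : F (m+1) = 0 := by rw [hF]; simp
    rw [h0, h1, sub_zero]

lemma hz_main (α p q : ℕ) (a w W : ℂ) (C : ℕ → ℝ) (D : ℕ → ℕ → ℝ)
    (hkey : ∀ m, m ≤ min p q →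
      (∑ k ∈ Finset.range (m+1), C k * D k (m-k)) = if m = 0 then 1 else 0) :
    (∑ k ∈ Finset.range (min p q + 1), a^k * ((C k : ℝ):ℂ) *
      ∑ i ∈ Finset.range (min p q - k + 1), ((D k i : ℝ):ℂ) * a^i * w^(p-k-i) * W^(q-k-i))
    = w^p * W^q := by
  have h1 : (∑ k ∈ Finset.range (min p q + 1), a^k * ((C k : ℝ):ℂ) *
      ∑ i ∈ Finset.range (min p q - k + 1), ((D k i : ℝ):ℂ) * a^i * w^(p-k-i) * W^(q-k-i))
      = ∑ k ∈ Finset.range (min p q + 1), ∑ i ∈ Finset.range (min p q - k + 1),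
          (fun k i => (((C k * D k i : ℝ)):ℂ) * (a^(k+i) * w^(p-k-i) * W^(q-k-i))) k i := by
    refine Finset.sum_congr rfl fun k hk => ?_
    rw [Finset.mul_sum]
    refine Finset.sum_congr rfl fun i hi => ?_
    push_cast
    ring
  rw [h1, hz_triangle (min p q)]
  have h2 : ∀ m ∈ Finset.range (min p q + 1),
      (∑ k ∈ Finset.range (m+1),
        (fun k i => (((C k * D k i : ℝ)):ℂ) * (a^(k+i) * w^(p-k-i) * W^(q-k-i))) k (m-k))
      = ((if m = 0 then (1:ℝ) else 0 : ℝ):ℂ) * (a^m * w^(p-m) * W^(q-m)) := by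
    intro m hm
    simp only [Finset.mem_range] at hm
    have hmin : min p q ≤ p ∧ min p q ≤ q := ⟨Nat.min_le_left p q, Nat.min_le_right p q⟩
    have h3 : ∀ k ∈ Finset.range (m+1),
        (fun k i => (((C k * D k i : ℝ)):ℂ) * (a^(k+i) * w^(p-k-i) * W^(q-k-i))) k (m-k)
        = ((C k * D k (m-k) : ℝ):ℂ) * (a^m * w^(p-m) * W^(q-m)) := by
      intro k hk
      simp only [Finset.mem_range] at hk
      beta_reduce
      rw [show k+(m-k) = m from by omega, show p-k-(m-k) = p-m from by omega,
        show q-k-(m-k) = q-m from by omega]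
    rw [Finset.sum_congr rfl h3, ← Finset.sum_mul, ← hkey m (by omega)]
    norm_cast
  rw [Finset.sum_congr rfl h2]
  rw [Finset.sum_eq_single 0]
  · norm_num
  · intro b hb hb0
    rw [if_neg hb0]
    norm_num
  · intro h
    exact absurd (Finset.mem_range.mpr (by omega)) h


/-- Explicit harmonic decomposition of (z|η)^p (z|η)̄^q, with the zonal harmonic components
written as terminating hypergeometric polynomials (denominators cleared). -/
theorem harmonic_decomposition_zonal (n : ℕ) (hn : 2 ≤ n) (η : Fin n → ℂ)
    (hη : ∑ j, η j * (starRingEnd ℂ) (η j) = 1) (p q : ℕ) (z : Fin n → ℂ) :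
    (∑ j, z j * (starRingEnd ℂ) (η j)) ^ p *
        ((starRingEnd ℂ) (∑ j, z j * (starRingEnd ℂ) (η j))) ^ q =
      ∑ k ∈ Finset.range (min p q + 1),
        (∑ i, z i * (starRingEnd ℂ) (z i)) ^ k *
        ((((p.factorial * q.factorial * ((n - 2) + 1 + (p - k) + (q - k)).factorial : ℕ) : ℝ) /
            ((k.factorial * (p - k).factorial * (q - k).factorial *
              ((n - 2) + 1 + (p - k) + q).factorial : ℕ) : ℝ) : ℝ) : ℂ) *
        ∑ i ∈ Finset.range (min p q - k + 1),
          ((((ascPochhammer ℝ i).eval (-((p - k : ℕ) : ℝ)) *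
                (ascPochhammer ℝ i).eval (-((q - k : ℕ) : ℝ))) /
              ((ascPochhammer ℝ i).eval (-(((n - 2) + (p - k) + (q - k) : ℕ) : ℝ)) *
                (i.factorial : ℝ)) : ℝ) : ℂ) *
            (∑ j, z j * (starRingEnd ℂ) (z j)) ^ i *
            (∑ j, z j * (starRingEnd ℂ) (η j)) ^ (p - k - i) *
            ((starRingEnd ℂ) (∑ j, z j * (starRingEnd ℂ) (η j))) ^ (q - k - i) := by
  refine Eq.symm ?_
  exact hz_main (n-2) p q (∑ j, z j * (starRingEnd ℂ) (z j)) (∑ j, z j * (starRingEnd ℂ) (η j))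
    ((starRingEnd ℂ) (∑ j, z j * (starRingEnd ℂ) (η j)))
    (fun k => ((p.factorial * q.factorial * ((n - 2) + 1 + (p - k) + (q - k)).factorial : ℕ) : ℝ) /
            ((k.factorial * (p - k).factorial * (q - k).factorial *
              ((n - 2) + 1 + (p - k) + q).factorial : ℕ) : ℝ))
    (fun k i => ((ascPochhammer ℝ i).eval (-((p - k : ℕ) : ℝ)) *
                (ascPochhammer ℝ i).eval (-((q - k : ℕ) : ℝ))) /
              ((ascPochhammer ℝ i).eval (-(((n - 2) + (p - k) + (q - k) : ℕ) : ℝ)) *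
                (i.factorial : ℝ)))
    (fun m hm => hz_key (n-2) p q m (le_trans hm (Nat.min_le_left p q))
      (le_trans hm (Nat.min_le_right p q)))
end
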